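/- arXiv:2504.04720 — 7 statements merged into one kernel-verified Lean document; each statement's English description precedes it below -/
import Mathlib

section
/- Let A be a bounded nonempty subset of an Ahlfors regular metric measure space (X, d, μ) of dimension Q, and let δ > 0. The distance zeta function ζ_A(s) = ∫_{A_δ} d(x,A)^{s−Q} dμ(x) is holomorphic (complex differentiable) on the open half-plane { s ∈ ℂ : Re s > dim̄_B A }, and for every s in this half-plane its complex derivative is ζ_A′(s) = ∫_{A_δ} d(x,A)^{s−Q} log d(x,A) dμ(x). -/
open MeasureTheory Metric Filter Set Topology ENNReal

noncomputable section

/-- `(X, d, μ)` is an Ahlfors regular metric measure space of dimension `Q`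
with regularity constant `K`:  `K⁻¹ r^Q ≤ μ(B̄(x,r)) ≤ K r^Q` for all `x` and
all `0 < r ≤ diam X`. -/
def IsAhlfors {X : Type*} [MetricSpace X] [MeasurableSpace X] (μ : Measure X)
    (Q K : ℝ) : Prop :=
  1 ≤ K ∧ ∀ (x : X) (r : ℝ), 0 < r → ENNReal.ofReal r ≤ EMetric.diam (univ : Set X) →
    ENNReal.ofReal (K⁻¹ * r ^ Q) ≤ μ (closedBall x r) ∧
      μ (closedBall x r) ≤ ENNReal.ofReal (K * r ^ Q)

/-- The upper `r`-dimensional Minkowski content of `A`, relative to the ambient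
dimension `Q`:  `M^{*r}(A) = limsup_{t→0⁺} μ(A_t) / t^(Q-r)`, where
`A_t = cthickening t A` is the closed `t`-neighborhood of `A`. -/
def uContent {X : Type*} [MetricSpace X] [MeasurableSpace X] (μ : Measure X)
    (Q r : ℝ) (A : Set X) : ℝ≥0∞ :=
  Filter.limsup (fun t : ℝ => μ (cthickening t A) / ENNReal.ofReal (t ^ (Q - r))) (𝓝[>] 0)

/-- The lower `r`-dimensional Minkowski content of `A`. -/
def lContent {X : Type*} [MetricSpace X] [MeasurableSpace X] (μ : Measure X)
    (Q r : ℝ) (A : Set X) : ℝ≥0∞ :=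
  Filter.liminf (fun t : ℝ => μ (cthickening t A) / ENNReal.ofReal (t ^ (Q - r))) (𝓝[>] 0)

/-- The upper Minkowski dimension `dim̄_B A = inf { r ≥ 0 : M^{*r}(A) = 0 }`. -/
def uDimB {X : Type*} [MetricSpace X] [MeasurableSpace X] (μ : Measure X)
    (Q : ℝ) (A : Set X) : ℝ :=
  sInf {r : ℝ | 0 ≤ r ∧ uContent μ Q r A = 0}

/-- The lower Minkowski dimension. -/
def lDimB {X : Type*} [MetricSpace X] [MeasurableSpace X] (μ : Measure X)
    (Q : ℝ) (A : Set X) : ℝ :=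
  sInf {r : ℝ | 0 ≤ r ∧ lContent μ Q r A = 0}

lemma rpow_le_endpoints {a b d p : ℝ} (ha : 0 < a) (had : a ≤ d) (hdb : d ≤ b) :
    d ^ p ≤ a ^ p + b ^ p := by
  rcases le_or_gt 0 p with hp | hp
  · have h1 : d ^ p ≤ b ^ p := Real.rpow_le_rpow (ha.le.trans had) hdb hp
    have h2 : (0:ℝ) ≤ a ^ p := Real.rpow_nonneg ha.le p
    linarith
  · have h1 : d ^ p ≤ a ^ p := Real.rpow_le_rpow_of_nonpos ha had hp.le
    have h2 : (0:ℝ) ≤ b ^ p := Real.rpow_nonneg (ha.le.trans (had.trans hdb)) p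
    linarith

lemma abs_log_le {d ε : ℝ} (hd0 : 0 < d) (hd1 : d ≤ 1) (hε : 0 < ε) :
    |Real.log d| ≤ d ^ (-ε) / ε := by
  have hlog : Real.log d ≤ 0 := Real.log_nonpos hd0.le hd1
  rw [abs_of_nonpos hlog]
  have h1 : Real.log (d ^ (-ε)) ≤ d ^ (-ε) :=
    Real.log_le_self (Real.rpow_nonneg hd0.le _)
  rw [Real.log_rpow hd0] at h1
  rw [div_eq_inv_mul]
  have hε' : (0:ℝ) < ε⁻¹ := by positivity
  have h2 := mul_le_mul_of_nonneg_left h1 hε'.le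
  calc -Real.log d = ε⁻¹ * (-ε * Real.log d) := by field_simp
    _ ≤ ε⁻¹ * d ^ (-ε) := h2

lemma bound_small {d σ ε Q w : ℝ} (hd0 : 0 < d) (hd1 : d ≤ 1) (hε : 0 < ε)
    (hw : σ + ε ≤ w) :
    d ^ (w - Q) * |Real.log d| ≤ ε⁻¹ * d ^ (σ - Q) := by
  have h1 : d ^ (w - Q) * |Real.log d| ≤ d ^ (w - Q) * (d ^ (-ε) / ε) :=
    mul_le_mul_of_nonneg_left (abs_log_le hd0 hd1 hε) (Real.rpow_nonneg hd0.le _)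
  have h2 : d ^ (w - Q) * (d ^ (-ε) / ε) = ε⁻¹ * d ^ (w - Q - ε) := by
    rw [show w - Q - ε = (w - Q) + (-ε) by ring, Real.rpow_add hd0]
    ring
  have h3 : d ^ (w - Q - ε) ≤ d ^ (σ - Q) :=
    Real.rpow_le_rpow_of_exponent_ge hd0 hd1 (by linarith)
  calc d ^ (w - Q) * |Real.log d| ≤ ε⁻¹ * d ^ (w - Q - ε) := by rw [← h2]; exact h1
    _ ≤ ε⁻¹ * d ^ (σ - Q) := mul_le_mul_of_nonneg_left h3 (by positivity)

lemma bound_big' {d w B δ' : ℝ} (hd1 : 1 ≤ d) (hdδ : d ≤ δ') (hwB : w ≤ B) (hB : 0 ≤ B) :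
    d ^ w ≤ δ' ^ B := by
  calc d ^ w ≤ d ^ B := Real.rpow_le_rpow_of_exponent_le hd1 hwB
    _ ≤ δ' ^ B := Real.rpow_le_rpow (by linarith) hdδ hB

lemma bound_big {d w B δ' : ℝ} (hd1 : 1 ≤ d) (hdδ : d ≤ δ') (hwB : w ≤ B) (hB : 0 ≤ B) :
    d ^ w * |Real.log d| ≤ δ' ^ B * δ' := by
  have hδ'1 : (1:ℝ) ≤ δ' := hd1.trans hdδ
  have h2 : |Real.log d| ≤ δ' := by
    rw [abs_of_nonneg (Real.log_nonneg hd1)]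
    exact (Real.log_le_log (by linarith) hdδ).trans (Real.log_le_self (by linarith))
  exact mul_le_mul (bound_big' hd1 hdδ hwB hB) h2 (abs_nonneg _) (Real.rpow_nonneg (by linarith) _)

lemma infDist_le_of_mem_cthickening {X : Type*} [MetricSpace X] {A : Set X} {δ : ℝ}
    (hδ : 0 ≤ δ) {x : X} (hx : x ∈ cthickening δ A) : infDist x A ≤ δ := by
  rw [mem_cthickening_iff] at hx
  exact ENNReal.toReal_le_of_le_ofReal hδ hx

lemma mem_cthickening_of_infDist_le' {X : Type*} [MetricSpace X] {A : Set X}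
    (hne : A.Nonempty) {t : ℝ} (ht : 0 ≤ t) {x : X} (h : infDist x A ≤ t) :
    x ∈ cthickening t A := by
  rw [mem_cthickening_iff]
  exact (ENNReal.le_ofReal_iff_toReal_le (infEdist_ne_top hne) ht).2 h

lemma core_finite {X : Type*} [MetricSpace X] [MeasurableSpace X] [BorelSpace X]
    (μ : Measure X) (A : Set X) (hne : A.Nonempty) {δ t0 σ Q r : ℝ}
    (hδ : 0 < δ) (ht0 : 0 < t0) (hσr : r < σ) (hσQ : σ ≠ Q)
    (hμδ : μ (cthickening δ A) < ⊤)
    (hbound : ∀ t : ℝ, 0 < t → t ≤ t0 → μ (cthickening t A) ≤ ENNReal.ofReal (t ^ (Q - r))) :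
    ∫⁻ x in cthickening δ A, ENNReal.ofReal ((infDist x A) ^ (σ - Q)) ∂μ < ⊤ := by
  have hd_meas : Measurable fun x : X => infDist x A := (continuous_infDist_pt A).measurable
  set d : X → ℝ := fun x => infDist x A with hd
  set u : ℕ → ℝ := fun k => t0 * (2⁻¹:ℝ) ^ k with hu
  have hupos : ∀ k, 0 < u k := fun k => by positivity
  have hule : ∀ k, u k ≤ t0 := fun k =>
    mul_le_of_le_one_right ht0.le (pow_le_one₀ (by norm_num) (by norm_num))
  set f : X → ℝ≥0∞ := fun x => ENNReal.ofReal (d x ^ (σ - Q)) with hf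
  set E0 : Set X := d ⁻¹' {0} with hE0
  set E1 : Set X := cthickening δ A ∩ {x | t0 ≤ d x} with hE1
  set S : ℕ → Set X := fun k => cthickening δ A ∩ {x | u (k+1) < d x ∧ d x ≤ u k} with hS
  have hcover : cthickening δ A ⊆ (E0 ∪ E1) ∪ ⋃ k, S k := by
    intro x hx
    rcases eq_or_lt_of_le (infDist_nonneg : 0 ≤ d x) with h0 | h0
    · exact Or.inl (Or.inl h0.symm)
    rcases le_or_gt t0 (d x) with h1 | h1
    · exact Or.inl (Or.inr ⟨hx, h1⟩)
    right
    have hex : ∃ n, t0 * (2⁻¹:ℝ) ^ n < d x := by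
      obtain ⟨n, hn⟩ := exists_pow_lt_of_lt_one (div_pos h0 ht0) (by norm_num : (2⁻¹:ℝ) < 1)
      exact ⟨n, by rw [lt_div_iff₀ ht0] at hn; linarith [hn]⟩
    have hm : t0 * (2⁻¹:ℝ) ^ (Nat.find hex) < d x := Nat.find_spec hex
    have hm0 : Nat.find hex ≠ 0 := by
      intro h
      rw [h] at hm; simp at hm; linarith
    obtain ⟨k, hk⟩ := Nat.exists_eq_succ_of_ne_zero hm0
    refine mem_iUnion.2 ⟨k, hx, ?_, ?_⟩
    · show u (k+1) < d x
      simp only [hu]; rw [show k + 1 = Nat.find hex from hk.symm]; exact hm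
    · have := Nat.find_min hex (show k < Nat.find hex by omega)
      exact not_lt.1 this
  have hAmeas : MeasurableSet (cthickening δ A) := isClosed_cthickening.measurableSet
  have hE0meas : MeasurableSet E0 := hd_meas (measurableSet_singleton 0)
  have h0 : ∫⁻ x in E0, f x ∂μ = 0 := by
    rw [setLIntegral_congr_fun hE0meas (fun x hx => ?_), lintegral_zero]
    have hx0 : d x = 0 := hx
    rw [hf]; simp only [hx0, Real.zero_rpow (sub_ne_zero.2 hσQ), ENNReal.ofReal_zero]
  have h1 : ∫⁻ x in E1, f x ∂μ < ⊤ := by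
    have hb : ∫⁻ x in E1, f x ∂μ ≤ ∫⁻ _x in E1, ENNReal.ofReal (t0 ^ (σ - Q) + δ ^ (σ - Q)) ∂μ := by
      refine setLIntegral_mono measurable_const (fun x hx => ?_)
      refine ENNReal.ofReal_le_ofReal (rpow_le_endpoints ht0 hx.2 ?_)
      exact infDist_le_of_mem_cthickening hδ.le hx.1
    rw [setLIntegral_const] at hb
    refine lt_of_le_of_lt hb (ENNReal.mul_lt_top ENNReal.ofReal_lt_top ?_)
    exact lt_of_le_of_lt (measure_mono inter_subset_left) hμδ
  set θ : ℝ := (2⁻¹:ℝ) ^ (σ - r) with hθ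
  have hθ0 : 0 ≤ θ := Real.rpow_nonneg (by norm_num) _
  have hθ1 : θ < 1 := Real.rpow_lt_one (by norm_num) (by norm_num) (by linarith)
  set c : ℝ := ((2⁻¹:ℝ) ^ (σ - Q) + 1) * t0 ^ (σ - r) with hc
  have hc0 : 0 ≤ c := by positivity
  have hSk : ∀ k, ∫⁻ x in S k, f x ∂μ ≤ ENNReal.ofReal c * (ENNReal.ofReal θ) ^ k := by
    intro k
    have hb1 : ∫⁻ x in S k, f x ∂μ ≤
        ENNReal.ofReal (u (k+1) ^ (σ - Q) + u k ^ (σ - Q)) * μ (S k) := by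
      have := setLIntegral_mono (μ := μ) (s := S k)
        (g := fun _ => ENNReal.ofReal (u (k+1) ^ (σ - Q) + u k ^ (σ - Q)))
        measurable_const
        (fun x hx => ENNReal.ofReal_le_ofReal
          (rpow_le_endpoints (hupos (k+1)) hx.2.1.le hx.2.2))
      rwa [setLIntegral_const] at this
    have hb2 : μ (S k) ≤ ENNReal.ofReal (u k ^ (Q - r)) := by
      refine le_trans (measure_mono (fun x hx => ?_)) (hbound (u k) (hupos k) (hule k))
      exact mem_cthickening_of_infDist_le' hne (hupos k).le hx.2.2
    have key : (u (k+1) ^ (σ - Q) + u k ^ (σ - Q)) * u k ^ (Q - r) = c * θ ^ k := by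
      have e1 : u (k+1) = u k * 2⁻¹ := by simp only [hu]; rw [pow_succ]; ring
      have e2 : u (k+1) ^ (σ - Q) = u k ^ (σ - Q) * (2⁻¹:ℝ) ^ (σ - Q) := by
        rw [e1, Real.mul_rpow (hupos k).le (by norm_num)]
      have e3 : u k ^ (σ - Q) * u k ^ (Q - r) = u k ^ (σ - r) := by
        rw [← Real.rpow_add (hupos k), show σ - Q + (Q - r) = σ - r by ring]
      have e4 : u k ^ (σ - r) = t0 ^ (σ - r) * θ ^ k := by
        rw [hu, Real.mul_rpow ht0.le (by positivity), hθ]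
        congr 1
        rw [← Real.rpow_natCast (2⁻¹:ℝ) k, ← Real.rpow_natCast ((2⁻¹:ℝ) ^ (σ - r)) k,
          ← Real.rpow_mul (by norm_num), ← Real.rpow_mul (by norm_num), mul_comm]
      calc (u (k+1) ^ (σ - Q) + u k ^ (σ - Q)) * u k ^ (Q - r)
          = ((2⁻¹:ℝ) ^ (σ - Q) + 1) * (u k ^ (σ - Q) * u k ^ (Q - r)) := by rw [e2]; ring
        _ = ((2⁻¹:ℝ) ^ (σ - Q) + 1) * (t0 ^ (σ - r) * θ ^ k) := by rw [← e4, ← e3]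
        _ = c * θ ^ k := by rw [hc]; ring
    calc ∫⁻ x in S k, f x ∂μ
        ≤ ENNReal.ofReal (u (k+1) ^ (σ - Q) + u k ^ (σ - Q)) * ENNReal.ofReal (u k ^ (Q - r)) :=
          le_trans hb1 (mul_le_mul_right hb2 _)
      _ = ENNReal.ofReal ((u (k+1) ^ (σ - Q) + u k ^ (σ - Q)) * u k ^ (Q - r)) :=
          (ENNReal.ofReal_mul (by positivity)).symm
      _ = ENNReal.ofReal (c * θ ^ k) := by rw [key]
      _ = ENNReal.ofReal c * (ENNReal.ofReal θ) ^ k := by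
          rw [ENNReal.ofReal_mul hc0, ENNReal.ofReal_pow hθ0]
  have hsum : ∑' k, ∫⁻ x in S k, f x ∂μ < ⊤ := by
    refine lt_of_le_of_lt (ENNReal.tsum_le_tsum hSk) ?_
    rw [ENNReal.tsum_mul_left, ENNReal.tsum_geometric]
    refine ENNReal.mul_lt_top ENNReal.ofReal_lt_top ?_
    rw [ENNReal.inv_lt_top]
    rw [tsub_pos_iff_lt]
    exact lt_of_lt_of_le (ENNReal.ofReal_lt_one.2 hθ1) le_rfl
  calc ∫⁻ x in cthickening δ A, f x ∂μ
      ≤ ∫⁻ x in (E0 ∪ E1) ∪ ⋃ k, S k, f x ∂μ := lintegral_mono_set hcover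
    _ ≤ (∫⁻ x in E0 ∪ E1, f x ∂μ) + ∫⁻ x in ⋃ k, S k, f x ∂μ := lintegral_union_le _ _ _
    _ ≤ ((∫⁻ x in E0, f x ∂μ) + ∫⁻ x in E1, f x ∂μ) + ∑' k, ∫⁻ x in S k, f x ∂μ :=
        add_le_add (lintegral_union_le _ _ _) (lintegral_iUnion_le _ _)
    _ < ⊤ := by
        rw [h0, zero_add]
        exact ENNReal.add_lt_top.2 ⟨h1, hsum⟩

lemma cthick_mono_le {X : Type*} [MetricSpace X] {A : Set X} {t δ : ℝ} (h : t ≤ δ) :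
    cthickening t A ⊆ cthickening δ A := cthickening_mono h A

/-- content at `Q+1` vanishes when the δ-neighborhood has finite measure. -/
lemma content_top_zero {X : Type*} [MetricSpace X] [MeasurableSpace X]
    (μ : Measure X) (Q : ℝ) (A : Set X) {δ : ℝ} (hδ : 0 < δ)
    (hfin : μ (cthickening δ A) ≠ ⊤) : uContent μ Q (Q+1) A = 0 := by
  rw [uContent]
  refine le_antisymm ?_ zero_le
  have hev : ∀ᶠ t in 𝓝[>] (0:ℝ),
      μ (cthickening t A) / ENNReal.ofReal (t ^ (Q - (Q+1)))
        ≤ μ (cthickening δ A) * ENNReal.ofReal t := by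
    filter_upwards [Ioc_mem_nhdsGT (lt_min hδ one_pos)] with t ht
    have ht0 : 0 < t := ht.1
    have htδ : t ≤ δ := ht.2.trans (min_le_left _ _)
    have he : (t:ℝ) ^ (Q - (Q+1)) = t⁻¹ := by
      rw [show Q - (Q+1) = -1 by ring, Real.rpow_neg_one]
    rw [he, ENNReal.ofReal_inv_of_pos ht0, div_eq_mul_inv, inv_inv]
    exact mul_le_mul' (measure_mono (cthick_mono_le htδ)) le_rfl
  have htend : Tendsto (fun t : ℝ => μ (cthickening δ A) * ENNReal.ofReal t)
      (𝓝[>] (0:ℝ)) (𝓝 0) := by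
    have h1 : Tendsto (fun t : ℝ => ENNReal.ofReal t) (𝓝[>] (0:ℝ)) (𝓝 0) := by
      have h0 : Tendsto (fun t : ℝ => ENNReal.ofReal t) (𝓝 (0:ℝ)) (𝓝 (ENNReal.ofReal 0)) :=
        ENNReal.continuous_ofReal.tendsto (0:ℝ)
      have h0' : Tendsto (fun t : ℝ => ENNReal.ofReal t) (𝓝[>] (0:ℝ)) (𝓝 (ENNReal.ofReal 0)) :=
        h0.mono_left nhdsWithin_le_nhds
      simpa using h0'
    have := ENNReal.Tendsto.const_mul (a := μ (cthickening δ A)) h1 (Or.inr hfin)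
    simpa using this
  calc Filter.limsup _ (𝓝[>] (0:ℝ))
      ≤ Filter.limsup (fun t : ℝ => μ (cthickening δ A) * ENNReal.ofReal t) (𝓝[>] (0:ℝ)) :=
        limsup_le_limsup hev
    _ = 0 := htend.limsup_eq

lemma exists_t0 {X : Type*} [MetricSpace X] [MeasurableSpace X]
    {μ : Measure X} {Q r : ℝ} {A : Set X} (h : uContent μ Q r A = 0) :
    ∃ t0 : ℝ, 0 < t0 ∧ ∀ t : ℝ, 0 < t → t ≤ t0 →
      μ (cthickening t A) ≤ ENNReal.ofReal (t ^ (Q - r)) := by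
  have hev : ∀ᶠ t in 𝓝[>] (0:ℝ),
      μ (cthickening t A) / ENNReal.ofReal (t ^ (Q - r)) < 1 := by
    refine eventually_lt_of_limsup_lt ?_
    rw [uContent] at h; rw [h]; exact zero_lt_one
  obtain ⟨t0, ht0, hsub⟩ := mem_nhdsGT_iff_exists_Ioc_subset.1 hev
  refine ⟨t0, ht0, fun t htpos htle => ?_⟩
  have h2 : μ (cthickening t A) / ENNReal.ofReal (t ^ (Q - r)) < 1 := hsub ⟨htpos, htle⟩
  have hpow : 0 < t ^ (Q - r) := Real.rpow_pos_of_pos htpos _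
  rw [ENNReal.div_lt_iff (Or.inl (by simp [hpow])) (Or.inl ENNReal.ofReal_ne_top)] at h2
  simpa using h2.le

lemma closure_null {X : Type*} [MetricSpace X] [MeasurableSpace X]
    {μ : Measure X} {Q r t0 : ℝ} {A : Set X} (ht0 : 0 < t0) (hrQ : r < Q)
    (hbound : ∀ t : ℝ, 0 < t → t ≤ t0 → μ (cthickening t A) ≤ ENNReal.ofReal (t ^ (Q - r))) :
    μ (closure A) = 0 := by
  have hle : ∀ t : ℝ, 0 < t → t ≤ t0 → μ (closure A) ≤ ENNReal.ofReal (t ^ (Q - r)) :=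
    fun t h1 h2 => le_trans (measure_mono (closure_subset_cthickening _ _)) (hbound t h1 h2)
  have htend : Tendsto (fun t : ℝ => ENNReal.ofReal (t ^ (Q - r))) (𝓝[>] (0:ℝ)) (𝓝 0) := by
    have h1 : Tendsto (fun t : ℝ => t ^ (Q - r)) (𝓝 (0:ℝ)) (𝓝 ((0:ℝ) ^ (Q - r))) :=
      (Real.continuousAt_rpow_const 0 (Q - r) (Or.inr (by linarith))).tendsto
    rw [Real.zero_rpow (by linarith : Q - r ≠ 0)] at h1
    have h2 : Tendsto (fun t : ℝ => t ^ (Q - r)) (𝓝[>] (0:ℝ)) (𝓝 0) :=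
      h1.mono_left nhdsWithin_le_nhds
    have := (ENNReal.continuous_ofReal.tendsto (0:ℝ)).comp h2
    simpa [Function.comp_def] using this
  have : μ (closure A) ≤ 0 := by
    refine ge_of_tendsto htend ?_
    filter_upwards [Ioc_mem_nhdsGT ht0] with t ht
    exact hle t ht.1 ht.2
  exact le_antisymm this zero_le

lemma thick_finite {X : Type*} [MetricSpace X] [MeasurableSpace X]
    {μ : Measure X} {Q K : ℝ} (hreg : IsAhlfors μ Q K)
    (hD : EMetric.diam (univ : Set X) ≠ 0)
    {A : Set X} (hne : A.Nonempty) (hbd : Bornology.IsBounded A) {δ : ℝ} (hδ : 0 < δ) :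
    μ (cthickening δ A) < ⊤ := by
  obtain ⟨a, ha⟩ := hne
  obtain ⟨R0, hR0⟩ := hbd.subset_closedBall a
  set R1 : ℝ := max R0 0 with hR1
  have hsub : cthickening δ A ⊆ closedBall a (δ + 1 + R1) := by
    intro x hx
    have h1 : infDist x A ≤ δ := infDist_le_of_mem_cthickening hδ.le hx
    have h2 : infDist x A < δ + 1 := by linarith
    obtain ⟨y, hy, hxy⟩ := (infDist_lt_iff ⟨a, ha⟩).1 h2
    have h3 : dist y a ≤ R1 := by
      have := hR0 hy
      rw [mem_closedBall] at this
      exact this.trans (le_max_left _ _)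
    rw [mem_closedBall]
    calc dist x a ≤ dist x y + dist y a := dist_triangle _ _ _
      _ ≤ (δ + 1) + R1 := add_le_add hxy.le h3
  set R : ℝ := δ + 1 + R1 with hR
  have hRpos : 0 < R := by have : (0:ℝ) ≤ R1 := le_max_right _ _; simp only [hR]; linarith
  rcases le_or_gt (ENNReal.ofReal R) (EMetric.diam (univ : Set X)) with hle | hlt
  · exact lt_of_le_of_lt (le_trans (measure_mono hsub) (hreg.2 a R hRpos hle).2)
      ENNReal.ofReal_lt_top
  · have hne_top : EMetric.diam (univ : Set X) ≠ ⊤ :=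
      (hlt.trans ENNReal.ofReal_lt_top).ne
    set D : ℝ := (EMetric.diam (univ : Set X)).toReal with hDdef
    have hDpos : 0 < D := ENNReal.toReal_pos hD hne_top
    have huniv : (univ : Set X) ⊆ closedBall a D := by
      intro x _
      rw [mem_closedBall]
      exact Metric.dist_le_diam_of_mem (Metric.isBounded_iff_ediam_ne_top.2 hne_top)
        trivial trivial
    have hDle : ENNReal.ofReal D ≤ EMetric.diam (univ : Set X) := by
      rw [hDdef, ENNReal.ofReal_toReal hne_top]
    refine lt_of_le_of_lt (le_trans (measure_mono (subset_univ _))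
      (le_trans (measure_mono huniv) (hreg.2 a D hDpos hDle).2)) ENNReal.ofReal_lt_top

/-- The distance zeta function `ζ_A(s) = ∫_{A_δ} d(x,A)^(s-Q) dμ(x)` is holomorphic
on `{ Re s > dim̄_B A }` with derivative `ζ_A'(s) = ∫_{A_δ} d(x,A)^(s-Q) log d(x,A) dμ(x)`. -/
theorem stmt3 {X : Type*} [MetricSpace X] [MeasurableSpace X] [BorelSpace X]
    (μ : Measure X) (Q K : ℝ) (hQ : 0 < Q) (hreg : IsAhlfors μ Q K)
    (A : Set X) (hne : A.Nonempty) (hbd : Bornology.IsBounded A)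
    (δ : ℝ) (hδ : 0 < δ) (s : ℂ) (hs : uDimB μ Q A < s.re) :
    HasDerivAt
      (fun z : ℂ => ∫ x in cthickening δ A, (infDist x A : ℂ) ^ (z - (Q : ℂ)) ∂μ)
      (∫ x in cthickening δ A,
        (infDist x A : ℂ) ^ (s - (Q : ℂ)) * (Real.log (infDist x A) : ℂ) ∂μ) s := by
  classical
  by_cases hdeg : EMetric.diam (univ : Set X) = 0
  · -- degenerate case: `X` is a subsingleton
    obtain ⟨a, ha⟩ := hne
    have hss : (univ : Set X).Subsingleton := EMetric.diam_eq_zero_iff.1 hdeg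
    have hxa : ∀ x : X, x = a := fun x => hss (mem_univ x) (mem_univ a)
    have hdist : ∀ x : X, infDist x A = 0 := fun x => by
      rw [hxa x]; exact infDist_zero_of_mem ha
    have hthick : ∀ t : ℝ, 0 ≤ t → cthickening t A = univ := fun t ht =>
      eq_univ_of_forall fun x => by rw [hxa x]; exact self_subset_cthickening _ ha
    have hDzero : (∫ x in cthickening δ A,
        (infDist x A : ℂ) ^ (s - (Q : ℂ)) * (Real.log (infDist x A) : ℂ) ∂μ) = 0 := by
      simp [hdist, Real.log_zero]
    rw [hDzero]
    have hFz : ∀ z : ℂ, (∫ x in cthickening δ A, (infDist x A : ℂ) ^ (z - (Q : ℂ)) ∂μ)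
        = (μ univ).toReal • ((0:ℂ) ^ (z - (Q:ℂ))) := by
      intro z
      rw [hthick δ hδ.le, Measure.restrict_univ]
      simp only [hdist, Complex.ofReal_zero]
      exact integral_const _
    by_cases hsQ : s = (Q:ℂ)
    · have hm : (μ univ).toReal = 0 := by
        by_contra hm
        have hμ0 : μ univ ≠ 0 := fun h => hm (by simp [h])
        have hμt : μ univ ≠ ⊤ := fun h => hm (by simp [h])
        have hQ1 : uContent μ Q (Q+1) A = 0 :=
          content_top_zero μ Q A hδ (by rw [hthick δ hδ.le]; exact hμt)
        have hmem : ∀ b ∈ {r : ℝ | 0 ≤ r ∧ uContent μ Q r A = 0}, Q ≤ b := by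
          intro b hb
          by_contra hbQ
          push_neg at hbQ
          have hev : ∀ᶠ t in 𝓝[>] (0:ℝ),
              μ univ ≤ μ (cthickening t A) / ENNReal.ofReal (t ^ (Q - b)) := by
            filter_upwards [Ioc_mem_nhdsGT (zero_lt_one)] with t ht
            rw [hthick t ht.1.le]
            have h1 : ENNReal.ofReal (t ^ (Q - b)) ≤ 1 := by
              rw [show (1:ℝ≥0∞) = ENNReal.ofReal 1 by simp]
              exact ENNReal.ofReal_le_ofReal (Real.rpow_le_one ht.1.le ht.2 (by linarith))
            calc μ univ = μ univ / 1 := by simp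
              _ ≤ μ univ / ENNReal.ofReal (t ^ (Q - b)) := ENNReal.div_le_div_left h1 _
          have hlim : μ univ ≤ uContent μ Q b A := by
            rw [uContent]
            exact le_limsup_of_frequently_le' hev.frequently
          rw [hb.2] at hlim
          exact hμ0 (le_zero_iff.1 hlim)
        have hQle : Q ≤ uDimB μ Q A :=
          le_csInf ⟨Q+1, ⟨by linarith, hQ1⟩⟩ hmem
        have hsre : s.re = Q := by rw [hsQ, Complex.ofReal_re]
        rw [uDimB] at *
        rw [hsre] at hs; linarith
      have hconst : (fun z : ℂ =>
          ∫ x in cthickening δ A, (infDist x A : ℂ) ^ (z - (Q:ℂ)) ∂μ) = fun _ => (0:ℂ) := by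
        funext z; rw [hFz z, hm, zero_smul]
      rw [hconst]
      exact hasDerivAt_const _ _
    · have hev : (fun z : ℂ => ∫ x in cthickening δ A, (infDist x A : ℂ) ^ (z - (Q:ℂ)) ∂μ)
          =ᶠ[𝓝 s] fun _ => (0:ℂ) := by
        filter_upwards [isOpen_compl_singleton.mem_nhds
          (by simpa using hsQ : s ∈ ({(Q:ℂ)}ᶜ : Set ℂ))] with z hz
        rw [hFz z, Complex.zero_cpow (sub_ne_zero.2 hz), smul_zero]
      exact (hasDerivAt_const s (0:ℂ)).congr_of_eventuallyEq hev
  · -- main case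
    have hμδ : μ (cthickening δ A) < ⊤ := thick_finite hreg hdeg hne hbd hδ
    have hQ1 : uContent μ Q (Q+1) A = 0 := content_top_zero μ Q A hδ hμδ.ne
    rw [uDimB] at hs
    obtain ⟨r, hr, hrs⟩ :
        ∃ r ∈ {r : ℝ | 0 ≤ r ∧ uContent μ Q r A = 0}, r < s.re :=
      (csInf_lt_iff (s := {r : ℝ | 0 ≤ r ∧ uContent μ Q r A = 0})
        ⟨0, fun x hx => hx.1⟩ ⟨Q+1, ⟨by linarith, hQ1⟩⟩).1 hs
    obtain ⟨hr0, hrz⟩ := hr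
    obtain ⟨σ, hσr, hσs, hσQ⟩ : ∃ σ, r < σ ∧ σ < s.re ∧ σ ≠ Q := by
      rcases eq_or_ne ((r + s.re)/2) Q with h | h
      · exact ⟨(r + (r + s.re)/2)/2, by linarith, by linarith,
          by rw [← h]; intro hc; linarith⟩
      · exact ⟨(r + s.re)/2, by linarith, by linarith, h⟩
    set ε : ℝ := (s.re - σ)/2 with hεdef
    have hεpos : 0 < ε := by rw [hεdef]; linarith
    obtain ⟨t0, ht0pos, hbnd⟩ := exists_t0 hrz
    set δ' : ℝ := max δ 1 with hδ'def
    have hδ'1 : (1:ℝ) ≤ δ' := le_max_right _ _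
    have hδ'0 : (0:ℝ) ≤ δ' := zero_le_one.trans hδ'1
    set B : ℝ := |s.re| + |Q| + ε with hBdef
    have hB0 : 0 ≤ B := by rw [hBdef]; positivity
    set C : ℝ := max ε⁻¹ (δ' ^ B * δ' + 1) with hCdef
    have hpowB : (0:ℝ) ≤ δ' ^ B := Real.rpow_nonneg hδ'0 _
    have hC1 : 1 ≤ C :=
      le_trans (by nlinarith : (1:ℝ) ≤ δ' ^ B * δ' + 1) (le_max_right _ _)
    have hC0 : (0:ℝ) ≤ C := zero_le_one.trans hC1
    have hCε : ε⁻¹ ≤ C := le_max_left _ _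
    have hCδ : δ' ^ B * δ' + 1 ≤ C := le_max_right _ _
    set bound : X → ℝ := fun x => C * (infDist x A) ^ (σ - Q) + C with hbndf
    have hd_meas : Measurable fun x : X => infDist x A := (continuous_infDist_pt A).measurable
    have hAmeas : MeasurableSet (cthickening δ A) := isClosed_cthickening.measurableSet
    have hεσ : s.re - ε = σ + ε := by rw [hεdef]; ring
    have hball : ∀ z ∈ Metric.ball s ε, σ + ε ≤ z.re ∧ z.re - Q ≤ B := by
      intro z hz
      rw [Metric.mem_ball] at hz
      have h1 : |z.re - s.re| ≤ dist z s := by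
        rw [Complex.dist_eq]
        have h := Complex.abs_re_le_norm (z - s)
        rwa [Complex.sub_re] at h
      have h3 := abs_lt.1 (lt_of_le_of_lt h1 hz)
      constructor
      · linarith [h3.1, hεσ]
      · rw [hBdef]
        have := le_abs_self s.re
        have := neg_abs_le Q
        linarith [h3.2]
    have hnorm : ∀ (x : X) (w : ℂ), 0 < infDist x A →
        ‖(infDist x A : ℂ) ^ w‖ = (infDist x A) ^ w.re := fun x w h => by
      rw [Complex.norm_cpow_eq_rpow_re_of_pos h]
    have hd_le : ∀ x ∈ cthickening δ A, infDist x A ≤ δ' := fun x hx =>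
      le_trans (infDist_le_of_mem_cthickening hδ.le hx) (le_max_left _ _)
    have hbound_nonneg : ∀ x, 0 ≤ bound x := fun x =>
      add_nonneg (mul_nonneg hC0 (Real.rpow_nonneg infDist_nonneg _)) hC0
    have h_bound : ∀ᵐ x ∂(μ.restrict (cthickening δ A)), ∀ z ∈ Metric.ball s ε,
        ‖(infDist x A : ℂ) ^ (z - (Q:ℂ)) * (Real.log (infDist x A) : ℂ)‖ ≤ bound x := by
      filter_upwards [ae_restrict_mem hAmeas] with x hx z hz
      obtain ⟨hz1, hz2⟩ := hball z hz
      have hd0 : (0:ℝ) ≤ infDist x A := infDist_nonneg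
      rcases eq_or_lt_of_le hd0 with h0 | h0
      · rw [← h0]
        simp only [Real.log_zero, Complex.ofReal_zero, mul_zero, norm_zero]
        exact hbound_nonneg x
      · have hnorm' : ‖(infDist x A : ℂ) ^ (z - (Q:ℂ)) * (Real.log (infDist x A) : ℂ)‖
            = (infDist x A) ^ (z.re - Q) * |Real.log (infDist x A)| := by
          rw [norm_mul, hnorm x _ h0, Complex.sub_re, Complex.ofReal_re,
            Complex.norm_real, Real.norm_eq_abs]
        rw [hnorm']
        rcases le_or_gt (infDist x A) 1 with hle1 | hgt1
        · refine le_trans (bound_small h0 hle1 hεpos hz1) ?_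
          have h4 : 0 ≤ (infDist x A) ^ (σ - Q) := Real.rpow_nonneg hd0 _
          have h5 := mul_le_mul_of_nonneg_right hCε h4
          simp only [hbndf]
          linarith
        · refine le_trans (bound_big hgt1.le (hd_le x hx) hz2 hB0) ?_
          have h4 : 0 ≤ C * (infDist x A) ^ (σ - Q) :=
            mul_nonneg hC0 (Real.rpow_nonneg hd0 _)
          simp only [hbndf]
          linarith
    have hb_int : Integrable bound (μ.restrict (cthickening δ A)) := by
      have hfin := core_finite μ A hne hδ ht0pos hσr hσQ hμδ hbnd
      have h1 : Integrable (fun x => (infDist x A) ^ (σ - Q))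
          (μ.restrict (cthickening δ A)) := by
        refine ⟨(hd_meas.pow measurable_const).aestronglyMeasurable, ?_⟩
        rw [hasFiniteIntegral_iff_ofReal
          (Filter.Eventually.of_forall fun x => Real.rpow_nonneg infDist_nonneg _)]
        exact hfin
      have h2 : Integrable (fun _ : X => C) (μ.restrict (cthickening δ A)) := by
        refine integrable_const_iff.2 (Or.inr ?_)
        exact ⟨by rwa [Measure.restrict_apply_univ]⟩
      exact (h1.const_mul C).add h2
    have hFmeas : ∀ z : ℂ, AEStronglyMeasurable
        (fun x => (infDist x A : ℂ) ^ (z - (Q:ℂ))) (μ.restrict (cthickening δ A)) := fun z =>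
      ((Complex.measurable_ofReal.comp hd_meas).pow measurable_const).aestronglyMeasurable
    have hF'meas : AEStronglyMeasurable
        (fun x => (infDist x A : ℂ) ^ (s - (Q:ℂ)) * (Real.log (infDist x A) : ℂ))
        (μ.restrict (cthickening δ A)) :=
      (((Complex.measurable_ofReal.comp hd_meas).pow measurable_const).mul
        (Complex.measurable_ofReal.comp (Real.measurable_log.comp hd_meas))).aestronglyMeasurable
    have hFint : Integrable (fun x => (infDist x A : ℂ) ^ (s - (Q:ℂ)))
        (μ.restrict (cthickening δ A)) := by
      refine hb_int.mono' (hFmeas s) ?_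
      filter_upwards [ae_restrict_mem hAmeas] with x hx
      have hd0 : (0:ℝ) ≤ infDist x A := infDist_nonneg
      have h4 : 0 ≤ C * (infDist x A) ^ (σ - Q) :=
        mul_nonneg hC0 (Real.rpow_nonneg hd0 _)
      rcases eq_or_lt_of_le hd0 with h0 | h0
      · have hle1 : ‖(infDist x A : ℂ) ^ (s - (Q:ℂ))‖ ≤ 1 := by
          rw [← h0]
          rcases eq_or_ne (s - (Q:ℂ)) 0 with h | h
          · rw [h]; simp
          · rw [Complex.ofReal_zero, Complex.zero_cpow h]; simp
        refine hle1.trans ?_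
        simp only [hbndf]
        linarith
      · rw [hnorm x _ h0, Complex.sub_re, Complex.ofReal_re]
        simp only [hbndf]
        rcases le_or_gt (infDist x A) 1 with hle1 | hgt1
        · have h5 : (infDist x A) ^ (s.re - Q) ≤ (infDist x A) ^ (σ - Q) :=
            Real.rpow_le_rpow_of_exponent_ge h0 hle1 (by linarith)
          nlinarith [Real.rpow_nonneg hd0 (σ - Q)]
        · have hsB : s.re - Q ≤ B := by
            rw [hBdef]
            have := le_abs_self s.re
            have := neg_abs_le Q
            linarith
          have h5 : (infDist x A) ^ (s.re - Q) ≤ δ' ^ B :=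
            bound_big' hgt1.le (hd_le x hx) hsB hB0
          have h6 : δ' ^ B ≤ δ' ^ B * δ' := le_mul_of_one_le_right hpowB hδ'1
          linarith
    have hderiv_pos : ∀ (x : X), 0 < infDist x A → ∀ z : ℂ,
        HasDerivAt (fun w : ℂ => (infDist x A : ℂ) ^ (w - (Q:ℂ)))
          ((infDist x A : ℂ) ^ (z - (Q:ℂ)) * (Real.log (infDist x A) : ℂ)) z := by
      intro x h0 z
      have h1 : HasDerivAt (fun w : ℂ => w - (Q:ℂ)) 1 z := (hasDerivAt_id z).sub_const _
      have h2 := h1.const_cpow (c := (infDist x A : ℂ))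
        (Or.inl (Complex.ofReal_ne_zero.2 h0.ne'))
      convert h2 using 1
      rw [mul_one, Complex.ofReal_log h0.le]
    have h_diff : ∀ᵐ x ∂(μ.restrict (cthickening δ A)), ∀ z ∈ Metric.ball s ε,
        HasDerivAt (fun w : ℂ => (infDist x A : ℂ) ^ (w - (Q:ℂ)))
          ((infDist x A : ℂ) ^ (z - (Q:ℂ)) * (Real.log (infDist x A) : ℂ)) z := by
      by_cases hQb : (Q:ℂ) ∈ Metric.ball s ε
      · have hrQ : r < Q := by
          rw [Metric.mem_ball] at hQb
          have h1 : |(Q:ℂ).re - s.re| ≤ dist (Q:ℂ) s := by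
            rw [Complex.dist_eq]
            have h := Complex.abs_re_le_norm ((Q:ℂ) - s)
            rwa [Complex.sub_re] at h
          rw [Complex.ofReal_re] at h1
          have h3 := (abs_lt.1 (lt_of_le_of_lt h1 hQb)).1
          linarith [hεσ]
        have hclos : μ (closure A) = 0 := closure_null ht0pos hrQ hbnd
        have hnull : (μ.restrict (cthickening δ A)) {x | infDist x A = 0} = 0 := by
          have hsub2 : {x : X | infDist x A = 0} ⊆ closure A := fun x hx =>
            (mem_closure_iff_infDist_zero hne).2 hx
          have hres : (μ.restrict (cthickening δ A)) (closure A) = 0 :=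
            le_antisymm (le_trans (Measure.restrict_apply_le _ _) hclos.le) zero_le
          exact measure_mono_null hsub2 hres
        have hae : ∀ᵐ x ∂(μ.restrict (cthickening δ A)), infDist x A ≠ 0 := by
          rw [ae_iff]
          simpa using hnull
        filter_upwards [hae] with x hx0 z _
        exact hderiv_pos x (lt_of_le_of_ne infDist_nonneg (Ne.symm hx0)) z
      · refine Filter.Eventually.of_forall (fun x z hz => ?_)
        rcases eq_or_lt_of_le (infDist_nonneg : (0:ℝ) ≤ infDist x A) with h0 | h0
        · have hzQ : z ≠ (Q:ℂ) := fun h => hQb (h ▸ hz)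
          have hevz : (fun w : ℂ => (infDist x A : ℂ) ^ (w - (Q:ℂ)))
              =ᶠ[𝓝 z] fun _ => (0:ℂ) := by
            filter_upwards [isOpen_compl_singleton.mem_nhds
              (by simpa using hzQ : z ∈ ({(Q:ℂ)}ᶜ : Set ℂ))] with w hw
            rw [← h0, Complex.ofReal_zero, Complex.zero_cpow (sub_ne_zero.2 hw)]
          have hF'0 : (infDist x A : ℂ) ^ (z - (Q:ℂ)) * (Real.log (infDist x A) : ℂ) = 0 := by
            rw [← h0]
            simp [Real.log_zero]
          rw [hF'0]
          exact (hasDerivAt_const z (0:ℂ)).congr_of_eventuallyEq hevz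
        · exact hderiv_pos x h0 z
    exact (hasDerivAt_integral_of_dominated_loc_of_deriv_le
      (F := fun (z : ℂ) (x : X) => (infDist x A : ℂ) ^ (z - (Q:ℂ)))
      (F' := fun (z : ℂ) (x : X) =>
        (infDist x A : ℂ) ^ (z - (Q:ℂ)) * (Real.log (infDist x A) : ℂ))
      (bound := bound)
      (Metric.ball_mem_nhds s hεpos) (Filter.Eventually.of_forall hFmeas) hFint hF'meas h_bound hb_int h_diff).2

end
end

section
/- Let A be a bounded nonempty subset of an Ahlfors regular metric measure space (X, d, μ) of dimension Q, and let δ > 0. Assume the Minkowski dimension D := dim_B A exists (i.e., the upper and lower Minkowski dimensions of A coincide), that D < Q, and that the lower D-dimensional Minkowski content satisfies M_*^D(A) > 0. Then the distance zeta function ζ_A(s) = ∫_{A_δ} d(x,A)^{s−Q} dμ(x) tends to +∞ as the real variable s converges to D from the right. -/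
open MeasureTheory Metric Filter Set Topology ENNReal

noncomputable section

/-- If the Minkowski dimension `D := dim_B A` exists, `D < Q`, and `M_*^D(A) > 0`,
then `ζ_A(s) → +∞` as the real variable `s → D⁺`. -/
theorem stmt5 {X : Type*} [MetricSpace X] [MeasurableSpace X] [BorelSpace X]
    (μ : Measure X) (Q K : ℝ) (hQ : 0 < Q) (hreg : IsAhlfors μ Q K)
    (A : Set X) (hne : A.Nonempty) (hbd : Bornology.IsBounded A)
    (δ : ℝ) (hδ : 0 < δ)
    (hdim : uDimB μ Q A = lDimB μ Q A) (hDQ : uDimB μ Q A < Q)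
    (hpos : 0 < lContent μ Q (uDimB μ Q A) A) :
    Tendsto (fun σ : ℝ =>
        ∫⁻ x in cthickening δ A, ENNReal.ofReal (infDist x A) ^ (σ - Q) ∂μ)
      (𝓝[>] (uDimB μ Q A)) (𝓝 ⊤) := by
  set D := uDimB μ Q A with hDdef
  -- extract a positive constant below the liminf
  obtain ⟨c', hc'0, hc'L⟩ := exists_between hpos
  have hc'top : c' ≠ ⊤ := (hc'L.trans_le le_top).ne
  set c : ℝ := c'.toReal with hcdef
  have hc : ENNReal.ofReal c = c' := ENNReal.ofReal_toReal hc'top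
  have hc0 : 0 < c := ENNReal.toReal_pos hc'0.ne' hc'top
  have hev : ∀ᶠ t in 𝓝[>] (0:ℝ),
      c' < μ (cthickening t A) / ENNReal.ofReal (t ^ (Q - D)) :=
    eventually_lt_of_lt_liminf hc'L
  obtain ⟨ε, hε, hIoo⟩ := mem_nhdsGT_iff_exists_Ioo_subset.1 hev
  set t₀ : ℝ := min (ε/2) δ with ht₀def
  have ht₀pos : 0 < t₀ := lt_min (by simpa using half_pos (mem_Ioi.1 hε)) hδ
  -- the dyadic scales
  set u : ℕ → ℝ := fun k => t₀ * (2⁻¹ : ℝ)^k with hudef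
  have hu_pos : ∀ k, 0 < u k := fun k => mul_pos ht₀pos (pow_pos (by norm_num) k)
  have hu_le_t₀ : ∀ k, u k ≤ t₀ := by
    intro k
    have : (2⁻¹ : ℝ)^k ≤ 1 := pow_le_one₀ (by norm_num) (by norm_num)
    calc u k = t₀ * (2⁻¹:ℝ)^k := rfl
      _ ≤ t₀ * 1 := by nlinarith
      _ = t₀ := mul_one _
  have hu_two : ∀ k, u k = 2 * u (k+1) := by
    intro k
    simp only [hudef, pow_succ]
    ring
  have hu_anti : ∀ {j k : ℕ}, j ≤ k → u k ≤ u j := by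
    intro j k hjk
    have : (2⁻¹ : ℝ)^k ≤ (2⁻¹:ℝ)^j :=
      pow_le_pow_of_le_one (by norm_num) (by norm_num) hjk
    have := mul_le_mul_of_nonneg_left this ht₀pos.le
    simpa [hudef] using this
  -- lower bound on measures of small thickenings
  have hμlow : ∀ t : ℝ, 0 < t → t ≤ t₀ →
      ENNReal.ofReal (c * t ^ (Q - D)) ≤ μ (cthickening t A) := by
    intro t ht htt₀
    have htε : t ∈ Ioo (0:ℝ) ε := ⟨ht, by
      have : t₀ ≤ ε/2 := min_le_left _ _
      linarith [half_lt_self (mem_Ioi.1 hε)]⟩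
    have hlt := hIoo htε
    have hb0 : ENNReal.ofReal (t ^ (Q - D)) ≠ 0 := by
      simp [ENNReal.ofReal_eq_zero, not_le, Real.rpow_pos_of_pos ht]
    have hbtop : ENNReal.ofReal (t ^ (Q - D)) ≠ ⊤ := ENNReal.ofReal_ne_top
    have := (ENNReal.le_div_iff_mul_le (Or.inl hb0) (Or.inl hbtop)).1 hlt.le
    calc ENNReal.ofReal (c * t ^ (Q - D))
        = ENNReal.ofReal c * ENNReal.ofReal (t ^ (Q - D)) :=
          ENNReal.ofReal_mul hc0.le
      _ = c' * ENNReal.ofReal (t ^ (Q - D)) := by rw [hc]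
      _ ≤ μ (cthickening t A) := this
  -- the key lower bound for the zeta integral
  have key : ∀ σ : ℝ, D < σ → σ < Q → ∀ N : ℕ,
      ENNReal.ofReal ((N:ℝ) * (c * ((1 - (2:ℝ) ^ (σ - Q)) * u N ^ (σ - D)))) ≤
        ∫⁻ x in cthickening δ A, ENNReal.ofReal (infDist x A) ^ (σ - Q) ∂μ := by
    intro σ hDσ hσQ N
    set f : X → ℝ≥0∞ := fun x => ENNReal.ofReal (infDist x A) ^ (σ - Q) with hfdef
    set b : ℕ → ℝ≥0∞ := fun k => ENNReal.ofReal (u k ^ (σ - Q)) with hbdef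
    have hbmono : Monotone b := by
      apply monotone_nat_of_le_succ
      intro k
      exact ENNReal.ofReal_le_ofReal
        (Real.rpow_le_rpow_of_nonpos (hu_pos (k+1)) (hu_anti (Nat.le_succ k))
          (by linarith))
    have hflow : ∀ (x : X) (t : ℝ), 0 < t → infDist x A ≤ t →
        ENNReal.ofReal (t ^ (σ - Q)) ≤ f x := by
      intro x t ht hdt
      rcases eq_or_lt_of_le (infDist_nonneg (x := x) (s := A)) with h0 | h0
      · have : f x = ⊤ := by
          simp only [hfdef, ← h0, ENNReal.ofReal_zero]
          exact ENNReal.zero_rpow_of_neg (by linarith)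
        simp [this]
      · have : f x = ENNReal.ofReal ((infDist x A) ^ (σ - Q)) :=
          ENNReal.ofReal_rpow_of_pos h0
        rw [this]
        exact ENNReal.ofReal_le_ofReal
          (Real.rpow_le_rpow_of_nonpos h0 hdt (by linarith))
    -- pointwise bound
    have hpt : ∀ x : X,
        ∑ k ∈ Finset.range N, (b (k+1) - b k) *
          (cthickening (u (k+1)) A).indicator (fun _ => (1:ℝ≥0∞)) x ≤ f x := by
      intro x
      set g : ℕ → ℝ≥0∞ := fun k => min (b k) (f x) with hgdef
      have hgmono : Monotone g := hbmono.min monotone_const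
      calc ∑ k ∈ Finset.range N, (b (k+1) - b k) *
            (cthickening (u (k+1)) A).indicator (fun _ => (1:ℝ≥0∞)) x
          ≤ ∑ k ∈ Finset.range N, (g (k+1) - g k) := by
            apply Finset.sum_le_sum
            intro k _
            by_cases hx : x ∈ cthickening (u (k+1)) A
            · rw [indicator_of_mem hx, mul_one]
              have hd : infDist x A ≤ u (k+1) := by
                have := mem_cthickening_iff.1 hx
                exact ENNReal.toReal_le_of_le_ofReal (hu_pos (k+1)).le this
              have h1 : b (k+1) ≤ f x := hflow x _ (hu_pos _) hd
              have e1 : g (k+1) = b (k+1) := min_eq_left h1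
              have e2 : g k = b k := min_eq_left ((hbmono (Nat.le_succ k)).trans h1)
              rw [e1, e2]
            · rw [indicator_of_notMem hx, mul_zero]
              exact zero_le
        _ ≤ g N := by
            induction N with
            | zero => simp
            | succ m ih =>
              rw [Finset.sum_range_succ]
              calc ∑ k ∈ Finset.range m, (g (k+1) - g k) + (g (m+1) - g m)
                  ≤ g m + (g (m+1) - g m) := add_le_add_left ih _
                _ = g (m+1) := add_tsub_cancel_of_le (hgmono (Nat.le_succ m))
        _ ≤ f x := min_le_right _ _
    -- integrate the pointwise bound
    have hmeas_ind : ∀ k : ℕ,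
        Measurable ((cthickening (u (k+1)) A).indicator (fun _ => (1:ℝ≥0∞))) :=
      fun k => measurable_const.indicator (isClosed_cthickening).measurableSet
    have hsub : ∀ k : ℕ, cthickening (u (k+1)) A ⊆ cthickening δ A :=
      fun k => cthickening_mono ((hu_le_t₀ (k+1)).trans (min_le_right _ _)) A
    have hstep : ∑ k ∈ Finset.range N, (b (k+1) - b k) * μ (cthickening (u (k+1)) A) ≤
        ∫⁻ x in cthickening δ A, f x ∂μ := by
      have heq : ∀ k ∈ Finset.range N,
          (b (k+1) - b k) * μ (cthickening (u (k+1)) A) =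
          ∫⁻ x in cthickening δ A, (b (k+1) - b k) *
            (cthickening (u (k+1)) A).indicator (fun _ => (1:ℝ≥0∞)) x ∂μ := by
        intro k _
        rw [lintegral_const_mul _ (hmeas_ind k)]
        congr 1
        have h1 : (fun _ : X => (1:ℝ≥0∞)) = (1 : X → ℝ≥0∞) := rfl
        rw [h1, lintegral_indicator_one (isClosed_cthickening).measurableSet,
          Measure.restrict_apply (isClosed_cthickening).measurableSet,
          inter_eq_self_of_subset_left (hsub k)]
      calc ∑ k ∈ Finset.range N, (b (k+1) - b k) * μ (cthickening (u (k+1)) A)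
          = ∫⁻ x in cthickening δ A, ∑ k ∈ Finset.range N, (b (k+1) - b k) *
              (cthickening (u (k+1)) A).indicator (fun _ => (1:ℝ≥0∞)) x ∂μ := by
            rw [Finset.sum_congr rfl heq]
            exact (lintegral_finset_sum _ (fun k _ => (hmeas_ind k).const_mul _)).symm
        _ ≤ ∫⁻ x in cthickening δ A, f x ∂μ := lintegral_mono hpt
    -- per-term lower bound
    have hterm : ∀ k ∈ Finset.range N,
        ENNReal.ofReal (c * ((1 - (2:ℝ) ^ (σ - Q)) * u N ^ (σ - D))) ≤
          (b (k+1) - b k) * μ (cthickening (u (k+1)) A) := by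
      intro k hk
      have hk1N : k + 1 ≤ N := Finset.mem_range.1 hk
      have hbsub : b (k+1) - b k =
          ENNReal.ofReal (u (k+1) ^ (σ - Q) - u k ^ (σ - Q)) :=
        (ENNReal.ofReal_sub _ (Real.rpow_nonneg (hu_pos k).le _)).symm
      have h2 : u k ^ (σ - Q) = (2:ℝ) ^ (σ - Q) * u (k+1) ^ (σ - Q) := by
        rw [hu_two k, Real.mul_rpow (by norm_num) (hu_pos (k+1)).le]
      have h2le1 : (2:ℝ) ^ (σ - Q) ≤ 1 :=
        Real.rpow_le_one_of_one_le_of_nonpos (by norm_num) (by linarith)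
      have hreal : c * ((1 - (2:ℝ) ^ (σ - Q)) * u N ^ (σ - D)) ≤
          (u (k+1) ^ (σ - Q) - u k ^ (σ - Q)) * (c * u (k+1) ^ (Q - D)) := by
        have e1 : u (k+1) ^ (σ - Q) - u k ^ (σ - Q) =
            (1 - (2:ℝ) ^ (σ - Q)) * u (k+1) ^ (σ - Q) := by rw [h2]; ring
        have e2 : u (k+1) ^ (σ - Q) * u (k+1) ^ (Q - D) = u (k+1) ^ (σ - D) := by
          rw [← Real.rpow_add (hu_pos (k+1))]
          ring_nf
        have e3 : u N ^ (σ - D) ≤ u (k+1) ^ (σ - D) :=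
          Real.rpow_le_rpow (hu_pos N).le (hu_anti hk1N) (by linarith)
        calc c * ((1 - (2:ℝ) ^ (σ - Q)) * u N ^ (σ - D))
            ≤ c * ((1 - (2:ℝ) ^ (σ - Q)) * u (k+1) ^ (σ - D)) := by
              apply mul_le_mul_of_nonneg_left _ hc0.le
              exact mul_le_mul_of_nonneg_left e3 (by linarith)
          _ = (u (k+1) ^ (σ - Q) - u k ^ (σ - Q)) * (c * u (k+1) ^ (Q - D)) := by
              rw [e1, ← e2]; ring
      calc ENNReal.ofReal (c * ((1 - (2:ℝ) ^ (σ - Q)) * u N ^ (σ - D)))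
          ≤ ENNReal.ofReal ((u (k+1) ^ (σ - Q) - u k ^ (σ - Q)) *
              (c * u (k+1) ^ (Q - D))) := ENNReal.ofReal_le_ofReal hreal
        _ = ENNReal.ofReal (u (k+1) ^ (σ - Q) - u k ^ (σ - Q)) *
              ENNReal.ofReal (c * u (k+1) ^ (Q - D)) := by
            rcases le_or_gt (u (k+1) ^ (σ - Q) - u k ^ (σ - Q)) 0 with h | h
            · rw [ENNReal.ofReal_eq_zero.2 (mul_nonpos_of_nonpos_of_nonneg h
                (by positivity)), ENNReal.ofReal_eq_zero.2 h, zero_mul]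
            · exact ENNReal.ofReal_mul h.le
        _ ≤ (b (k+1) - b k) * μ (cthickening (u (k+1)) A) := by
            rw [hbsub]
            exact mul_le_mul_right (hμlow _ (hu_pos (k+1)) (hu_le_t₀ (k+1))) _
    -- combine
    calc ENNReal.ofReal ((N:ℝ) * (c * ((1 - (2:ℝ) ^ (σ - Q)) * u N ^ (σ - D))))
        = (N : ℝ≥0∞) * ENNReal.ofReal (c * ((1 - (2:ℝ) ^ (σ - Q)) * u N ^ (σ - D))) := by
          rw [ENNReal.ofReal_mul (Nat.cast_nonneg N), ENNReal.ofReal_natCast]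
      _ = (Finset.range N).card •
            ENNReal.ofReal (c * ((1 - (2:ℝ) ^ (σ - Q)) * u N ^ (σ - D))) := by
          rw [Finset.card_range, nsmul_eq_mul]
      _ ≤ ∑ k ∈ Finset.range N, (b (k+1) - b k) * μ (cthickening (u (k+1)) A) :=
          Finset.card_nsmul_le_sum _ _ _ hterm
      _ ≤ ∫⁻ x in cthickening δ A, f x ∂μ := hstep
  -- conclude via continuity of the lower bound in σ
  rw [ENNReal.tendsto_nhds_top_iff_nat]
  intro n
  have h2lt : (2:ℝ) ^ (D - Q) < 1 :=
    Real.rpow_lt_one_of_one_lt_of_neg one_lt_two (by linarith)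
  have hcs : 0 < c * (1 - (2:ℝ) ^ (D - Q)) := mul_pos hc0 (by linarith)
  obtain ⟨N, hN⟩ := exists_nat_gt (((n:ℝ) + 1) / (c * (1 - (2:ℝ) ^ (D - Q))))
  set φ : ℝ → ℝ := fun σ => (N:ℝ) * (c * ((1 - (2:ℝ) ^ (σ - Q)) * u N ^ (σ - D)))
    with hφdef
  have hφD : (n:ℝ) < φ D := by
    have h1 : (n:ℝ) + 1 < (N:ℝ) * (c * (1 - (2:ℝ) ^ (D - Q))) := by
      have := (div_lt_iff₀ hcs).1 hN
      linarith
    simp only [hφdef, sub_self, Real.rpow_zero, mul_one]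
    linarith
  have hbase : ∀ a : ℝ, 0 < a → Continuous fun y : ℝ => a ^ y := by
    intro a ha
    have : (fun y : ℝ => a ^ y) = fun y => Real.exp (Real.log a * y) := by
      funext y; rw [Real.rpow_def_of_pos ha]
    rw [this]
    exact Real.continuous_exp.comp (continuous_const.mul continuous_id)
  have hφcont : Continuous φ := by
    apply continuous_const.mul
    apply continuous_const.mul
    exact (continuous_const.sub
        ((hbase 2 two_pos).comp (continuous_id.sub continuous_const))).mul
      ((hbase (u N) (hu_pos N)).comp (continuous_id.sub continuous_const))
  have hev2 : ∀ᶠ σ in 𝓝[>] D, (n:ℝ) < φ σ :=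
    ((hφcont.tendsto D).mono_left nhdsWithin_le_nhds).eventually
      (eventually_gt_nhds hφD)
  have hevQ : ∀ᶠ σ in 𝓝[>] D, σ < Q :=
    mem_nhdsWithin_of_mem_nhds (Iio_mem_nhds hDQ)
  filter_upwards [hev2, hevQ, self_mem_nhdsWithin] with σ hφσ hσQ hσD
  have hφpos : 0 < φ σ := lt_of_le_of_lt (Nat.cast_nonneg n) hφσ
  calc (n : ℝ≥0∞) = ENNReal.ofReal (n:ℝ) := (ENNReal.ofReal_natCast n).symm
    _ < ENNReal.ofReal (φ σ) := (ENNReal.ofReal_lt_ofReal_iff hφpos).2 hφσ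
    _ ≤ _ := key σ hσD hσQ N

end
end

section
/- Let A be a bounded nonempty subset of an Ahlfors regular metric measure space (X, d, μ) of dimension Q. For ε ∈ (0,1), define ζ_A(s, A_ε) := ∫_{A_ε} d(x,A)^{s−Q} dμ(x). Then for every real ξ > dim̄_B A and every d ∈ (dim̄_B A, ξ), there exists a positive constant C₁ = C₁(ξ, d, Q, A) such that sup_{Re s ≥ ξ} |ζ_A(s, A_ε)| ≤ C₁ ε^{ξ−d} for all ε ∈ (0,1); in particular, sup_{Re s ≥ ξ} |ζ_A(s, A_ε)| = O(ε^{ξ−d}) as ε → 0⁺. -/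
open MeasureTheory Metric Filter Set Topology ENNReal

noncomputable section

section Aux

variable {X : Type*} [MetricSpace X] [MeasurableSpace X]

lemma mem_cthickening_iff_infDist_le' {A : Set X} (hA : A.Nonempty) {t : ℝ} (ht : 0 ≤ t) {x : X} :
    x ∈ cthickening t A ↔ infDist x A ≤ t := by
  rw [mem_cthickening_iff]
  constructor
  · intro h
    have := ENNReal.toReal_mono ENNReal.ofReal_ne_top h
    rwa [ENNReal.toReal_ofReal ht] at this
  · intro h
    calc EMetric.infEdist x A = ENNReal.ofReal (infDist x A) :=
          (ENNReal.ofReal_toReal (Metric.infEdist_ne_top hA)).symm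
      _ ≤ ENNReal.ofReal t := ENNReal.ofReal_le_ofReal h

lemma measure_lt_top_of_isBounded {μ : Measure X} {Q K : ℝ}
    (hreg : IsAhlfors μ Q K) (hnt : ∃ x y : X, x ≠ y)
    {B : Set X} (hB : Bornology.IsBounded B) (x : X) : μ B < ⊤ := by
  obtain ⟨x₀, y₀, hxy⟩ := hnt
  have hdiam : 0 < EMetric.diam (univ : Set X) :=
    lt_of_lt_of_le (edist_pos.mpr hxy) (EMetric.edist_le_diam_of_mem (mem_univ _) (mem_univ _))
  obtain ⟨R, hR0, hRsub⟩ := hB.subset_closedBall_lt 0 x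
  by_cases hc : ENNReal.ofReal R ≤ EMetric.diam (univ : Set X)
  · exact (measure_mono hRsub).trans_lt
      (lt_of_le_of_lt (hreg.2 x R hR0 hc).2 ENNReal.ofReal_lt_top)
  · push_neg at hc
    have hfin : EMetric.diam (univ : Set X) ≠ ⊤ := (hc.trans_le le_top).ne
    set D := (EMetric.diam (univ : Set X)).toReal with hD
    have hDpos : 0 < D := ENNReal.toReal_pos hdiam.ne' hfin
    have hsub : B ⊆ closedBall x D := by
      intro z _
      rw [mem_closedBall, dist_edist]
      exact ENNReal.toReal_mono hfin (EMetric.edist_le_diam_of_mem (mem_univ _) (mem_univ _))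
    have h2 := (hreg.2 x D hDpos (le_of_eq (ENNReal.ofReal_toReal hfin))).2
    exact (measure_mono hsub).trans_lt (h2.trans_lt ENNReal.ofReal_lt_top)

lemma content_zero_of_lt {μ : Measure X} {Q r : ℝ} {A : Set X} (hQr : Q < r)
    (hfin : μ (cthickening 1 A) ≠ ⊤) : uContent μ Q r A = 0 := by
  have htends : Tendsto (fun t : ℝ =>
      ENNReal.ofReal ((μ (cthickening 1 A)).toReal * t ^ (r - Q))) (𝓝[>] (0:ℝ)) (𝓝 0) := by
    have h1 : Tendsto (fun t : ℝ => t ^ (r - Q)) (𝓝[>] (0:ℝ)) (𝓝 ((0:ℝ) ^ (r - Q))) :=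
      (tendsto_id.mono_left nhdsWithin_le_nhds).rpow_const (Or.inr (by linarith))
    rw [Real.zero_rpow (by linarith : (0:ℝ) < r - Q).ne'] at h1
    have h2 := (h1.const_mul ((μ (cthickening 1 A)).toReal))
    rw [mul_zero] at h2
    simpa using ENNReal.tendsto_ofReal h2
  have hmain : Tendsto (fun t : ℝ => μ (cthickening t A) / ENNReal.ofReal (t ^ (Q - r)))
      (𝓝[>] (0:ℝ)) (𝓝 0) := by
    apply tendsto_of_tendsto_of_tendsto_of_le_of_le' tendsto_const_nhds htends
    · exact Eventually.of_forall (fun t => zero_le)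
    · filter_upwards [Ioo_mem_nhdsGT_of_mem (Set.left_mem_Ico.mpr one_pos)] with t ht
      obtain ⟨ht0, ht1⟩ := ht
      have hμ : μ (cthickening t A) ≤ ENNReal.ofReal ((μ (cthickening 1 A)).toReal) := by
        rw [ENNReal.ofReal_toReal hfin]
        exact measure_mono (cthickening_mono ht1.le A)
      calc μ (cthickening t A) / ENNReal.ofReal (t ^ (Q - r))
          ≤ ENNReal.ofReal ((μ (cthickening 1 A)).toReal) / ENNReal.ofReal (t ^ (Q - r)) :=
            ENNReal.div_le_div_right hμ _
        _ = ENNReal.ofReal ((μ (cthickening 1 A)).toReal / t ^ (Q - r)) :=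
            (ENNReal.ofReal_div_of_pos (Real.rpow_pos_of_pos ht0 _)).symm
        _ = ENNReal.ofReal ((μ (cthickening 1 A)).toReal * t ^ (r - Q)) := by
            rw [div_eq_mul_inv, ← Real.rpow_neg ht0.le, neg_sub]
  exact hmain.limsup_eq

lemma key_bound {μ : Measure X} {Q r p : ℝ} {A : Set X}
    (h0 : uContent μ Q r A = 0) (hrp : r ≤ p) (hfin : μ (cthickening 1 A) ≠ ⊤) :
    ∃ c : ℝ, 1 ≤ c ∧ ∀ t : ℝ, 0 < t → t ≤ 1 →
      μ (cthickening t A) ≤ ENNReal.ofReal (c * t ^ (Q - p)) := by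
  have h0' : Filter.limsup (fun t : ℝ =>
      μ (cthickening t A) / ENNReal.ofReal (t ^ (Q - r))) (𝓝[>] 0) = 0 := h0
  have hev : ∀ᶠ t in 𝓝[>] (0:ℝ),
      μ (cthickening t A) / ENNReal.ofReal (t ^ (Q - r)) < 1 :=
    eventually_lt_of_limsup_lt (by rw [h0']; exact zero_lt_one)
  obtain ⟨δ, hδ0, hδ⟩ : ∃ δ > 0, ∀ t : ℝ, 0 < t → t < δ →
      μ (cthickening t A) / ENNReal.ofReal (t ^ (Q - r)) < 1 := by
    rw [eventually_nhdsWithin_iff, Metric.eventually_nhds_iff] at hev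
    obtain ⟨δ, hδ0, h⟩ := hev
    exact ⟨δ, hδ0, fun t ht0 htδ =>
      h (by rwa [Real.dist_eq, sub_zero, abs_of_pos ht0]) ht0⟩
  set δ₀ : ℝ := min (δ / 2) 1 with hδ₀
  have hδ₀pos : 0 < δ₀ := lt_min (by linarith) one_pos
  have hsmall : ∀ t : ℝ, 0 < t → t ≤ δ₀ →
      μ (cthickening t A) ≤ ENNReal.ofReal (t ^ (Q - r)) := by
    intro t ht0 ht
    have hlt := hδ t ht0 (lt_of_le_of_lt (ht.trans (min_le_left _ _)) (by linarith))
    by_contra hcon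
    push_neg at hcon
    have hb0 : ENNReal.ofReal (t ^ (Q - r)) ≠ 0 :=
      (ENNReal.ofReal_pos.mpr (Real.rpow_pos_of_pos ht0 _)).ne'
    have h1 : (1:ℝ≥0∞) ≤ μ (cthickening t A) / ENNReal.ofReal (t ^ (Q - r)) :=
      (ENNReal.le_div_iff_mul_le (Or.inl hb0) (Or.inl ENNReal.ofReal_ne_top)).mpr
        (by rw [one_mul]; exact hcon.le)
    exact absurd h1 (not_le.mpr hlt)
  set m : ℝ := (μ (cthickening 1 A)).toReal with hm
  have hm0 : 0 ≤ m := ENNReal.toReal_nonneg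
  set β : ℝ := min (δ₀ ^ (Q - p)) 1 with hβ
  have hβ0 : 0 < β := lt_min (Real.rpow_pos_of_pos hδ₀pos _) one_pos
  refine ⟨1 + m / β, le_add_of_nonneg_right (by positivity), fun t ht0 ht1 => ?_⟩
  rcases le_or_gt t δ₀ with h | h
  · refine (hsmall t ht0 h).trans (ENNReal.ofReal_le_ofReal ?_)
    have h1 : t ^ (Q - r) ≤ t ^ (Q - p) :=
      Real.rpow_le_rpow_of_exponent_ge ht0 ht1 (by linarith)
    nlinarith [Real.rpow_pos_of_pos ht0 (Q - p), div_nonneg hm0 hβ0.le]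
  · have hμ : μ (cthickening t A) ≤ ENNReal.ofReal m := by
      rw [hm, ENNReal.ofReal_toReal hfin]
      exact measure_mono (cthickening_mono ht1 A)
    refine hμ.trans (ENNReal.ofReal_le_ofReal ?_)
    have htp : β ≤ t ^ (Q - p) := by
      rcases le_or_gt 0 (Q - p) with hqp | hqp
      · exact (min_le_left _ _).trans (Real.rpow_le_rpow hδ₀pos.le h.le hqp)
      · exact (min_le_right _ _).trans
          (Real.one_le_rpow_of_pos_of_le_one_of_nonpos ht0 ht1 hqp.le)
    calc m = m / β * β := (div_mul_cancel₀ m hβ0.ne').symm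
      _ ≤ m / β * t ^ (Q - p) := by
          exact mul_le_mul_of_nonneg_left htp (by positivity)
      _ ≤ (1 + m / β) * t ^ (Q - p) := by
          have := Real.rpow_nonneg ht0.le (Q - p)
          nlinarith [div_nonneg hm0 hβ0.le]

lemma closure_null_s7 {μ : Measure X} {Q p c : ℝ} {A : Set X} (hQp : 0 < Q - p)
    (hkey : ∀ t : ℝ, 0 < t → t ≤ 1 →
      μ (cthickening t A) ≤ ENNReal.ofReal (c * t ^ (Q - p))) :
    μ (closure A) = 0 := by
  have h1 : ∀ n : ℕ, μ (closure A) ≤ ENNReal.ofReal (c * ((1:ℝ) / (n + 1)) ^ (Q - p)) := by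
    intro n
    refine (measure_mono (closure_subset_cthickening _ A)).trans
      (hkey _ (by positivity) ?_)
    rw [div_le_one (by positivity)]
    linarith [Nat.cast_nonneg (α := ℝ) n]
  have h2 : Tendsto (fun n : ℕ => ENNReal.ofReal (c * ((1:ℝ) / (n + 1)) ^ (Q - p)))
      atTop (𝓝 0) := by
    have h3 : Tendsto (fun n : ℕ => (1:ℝ) / (n + 1)) atTop (𝓝 0) :=
      tendsto_one_div_add_atTop_nhds_zero_nat
    have h4 := (h3.rpow_const (Or.inr hQp.le)).const_mul c
    rw [Real.zero_rpow hQp.ne', mul_zero] at h4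
    simpa using ENNReal.tendsto_ofReal h4
  have := ge_of_tendsto' h2 h1
  exact le_antisymm this zero_le

lemma pow_arith {ε ξ Q p : ℝ} (hε : 0 < ε) (k : ℕ) :
    (ε / 2 ^ (k + 1)) ^ (ξ - Q) * (ε / 2 ^ k) ^ (Q - p)
      = (2:ℝ) ^ (Q - ξ) * ε ^ (ξ - p) * ((2:ℝ) ^ (p - ξ)) ^ k := by
  have h2 : (0:ℝ) < 2 := two_pos
  rw [Real.div_rpow hε.le (by positivity), Real.div_rpow hε.le (by positivity),
    div_mul_div_comm, ← Real.rpow_add hε,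
    ← Real.rpow_natCast (2:ℝ) (k + 1), ← Real.rpow_natCast (2:ℝ) k,
    ← Real.rpow_mul h2.le, ← Real.rpow_mul h2.le, ← Real.rpow_add h2,
    ← Real.rpow_natCast ((2:ℝ) ^ (p - ξ)) k, ← Real.rpow_mul h2.le,
    div_eq_mul_inv, ← Real.rpow_neg h2.le, mul_comm ((2:ℝ) ^ (Q - ξ)) _,
    mul_assoc, ← Real.rpow_add h2]
  congr 1
  · congr 1; ring
  · congr 1; push_cast; ring

end Aux

lemma main_est {X : Type*} [MetricSpace X] [MeasurableSpace X] [BorelSpace X] (μ : Measure X)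
    (Q : ℝ) (A : Set X) (hne : A.Nonempty) {ξ p c : ℝ} (hpξ : p < ξ) (hc : 1 ≤ c)
    (hkey : ∀ t : ℝ, 0 < t → t ≤ 1 →
      μ (cthickening t A) ≤ ENNReal.ofReal (c * t ^ (Q - p))) :
    ∃ C₁ : ℝ, 0 < C₁ ∧ ∀ ε : ℝ, ε ∈ Ioo (0:ℝ) 1 → ∀ s : ℂ, ξ ≤ s.re →
      ‖∫ x in cthickening ε A, (infDist x A : ℂ) ^ (s - (Q : ℂ)) ∂μ‖ ≤ C₁ * ε ^ (ξ - p) := by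
  have habs : (0:ℝ) < 2 ^ |ξ - Q| := Real.rpow_pos_of_pos two_pos _
  set ρ : ℝ := (2:ℝ) ^ (p - ξ) with hρdef
  have hρ0 : 0 < ρ := Real.rpow_pos_of_pos two_pos _
  have hρ1 : ρ < 1 := Real.rpow_lt_one_of_one_lt_of_neg one_lt_two (by linarith)
  have hc0 : 0 < c := lt_of_lt_of_le one_pos hc
  set C₁ : ℝ := 2 ^ |ξ - Q| * c * (2:ℝ) ^ (Q - ξ) * (1 - ρ)⁻¹ with hC₁def
  have hC₁pos : 0 < C₁ := by
    apply mul_pos (mul_pos (mul_pos habs hc0) (Real.rpow_pos_of_pos two_pos _))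
    exact inv_pos.mpr (by linarith)
  refine ⟨C₁, hC₁pos, ?_⟩
  rintro ε ⟨hε0, hε1⟩ s hsre
  have hεk : ∀ k : ℕ, 0 < ε / 2 ^ k := fun k => div_pos hε0 (by positivity)
  have hεk1 : ∀ k : ℕ, ε / 2 ^ k ≤ 1 := fun k =>
    le_trans (div_le_self hε0.le (one_le_pow₀ one_le_two)) hε1.le
  set T : ℕ → Set X := fun k => cthickening (ε / 2 ^ k) A with hT
  set g : X → ℝ≥0∞ := fun x => ENNReal.ofReal ‖((infDist x A : ℝ) : ℂ) ^ (s - (Q:ℂ))‖ with hg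
  -- covering of the thickening by the closure and dyadic shells
  have hcover : cthickening ε A ⊆ closure A ∪ ⋃ k, (T k \ T (k + 1)) := by
    intro x hx
    by_cases hxA : x ∈ closure A
    · exact Or.inl hxA
    right
    have hd0 : 0 < infDist x A := by
      have := (isClosed_closure.notMem_iff_infDist_pos
        (closure_nonempty_iff.mpr hne)).1 hxA
      rwa [infDist_closure] at this
    have hdε : infDist x A ≤ ε := (mem_cthickening_iff_infDist_le' hne hε0.le).1 hx
    have hPex : ∃ k : ℕ, ε / 2 ^ (k + 1) < infDist x A := by
      obtain ⟨n, hn⟩ := exists_pow_lt_of_lt_one (div_pos hd0 hε0)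
        (by norm_num : (1:ℝ) / 2 < 1)
      refine ⟨n, ?_⟩
      have e1 : ε / 2 ^ (n + 1) = ε * ((1:ℝ) / 2) ^ (n + 1) := by
        rw [one_div, inv_pow, div_eq_mul_inv]
      have e2 : ε * ((1:ℝ) / 2) ^ (n + 1) ≤ ε * ((1:ℝ) / 2) ^ n :=
        mul_le_mul_of_nonneg_left
          (pow_le_pow_of_le_one (by norm_num) (by norm_num) (Nat.le_succ n)) hε0.le
      have e3 : ε * ((1:ℝ) / 2) ^ n < ε * (infDist x A / ε) :=
        mul_lt_mul_of_pos_left hn hε0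
      have e4 : ε * (infDist x A / ε) = infDist x A := by field_simp
      linarith
    have hk1 : ε / 2 ^ (Nat.find hPex + 1) < infDist x A := Nat.find_spec hPex
    have hk2 : infDist x A ≤ ε / 2 ^ (Nat.find hPex) := by
      rcases Nat.eq_zero_or_pos (Nat.find hPex) with h0 | h0
      · rw [h0, pow_zero, div_one]; exact hdε
      · have hmin := Nat.find_min hPex (Nat.sub_lt h0 one_pos)
        have heq : Nat.find hPex - 1 + 1 = Nat.find hPex := by omega
        rw [heq] at hmin
        exact not_lt.mp hmin
    exact mem_iUnion.mpr ⟨Nat.find hPex,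
      (mem_cthickening_iff_infDist_le' hne (hεk _).le).2 hk2,
      fun hmem => absurd ((mem_cthickening_iff_infDist_le' hne (hεk _).le).1 hmem)
        (not_le.mpr hk1)⟩
  -- the closure contributes nothing
  have hclosz : ∫⁻ x in closure A, g x ∂μ = 0 := by
    by_cases hsQ : s = (Q : ℂ)
    · have hQre : s.re = Q := by rw [hsQ, Complex.ofReal_re]
      have hpQ : 0 < Q - p := by linarith
      exact setLIntegral_measure_zero _ _ (closure_null_s7 hpQ hkey)
    · have hz : ∀ x ∈ closure A, g x ≤ (fun _ : X => (0:ℝ≥0∞)) x := by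
        intro x hx
        rw [hg]
        simp only
        rw [infDist_zero_of_mem_closure hx, Complex.ofReal_zero,
          Complex.zero_cpow (sub_ne_zero.mpr hsQ)]
        simp
      refine le_antisymm ?_ zero_le
      calc ∫⁻ x in closure A, g x ∂μ ≤ ∫⁻ _ in closure A, (0:ℝ≥0∞) ∂μ :=
            setLIntegral_mono' measurableSet_closure hz
        _ = 0 := by simp
  -- bound on each shell
  have hshell : ∀ k : ℕ, ∫⁻ x in T k \ T (k + 1), g x ∂μ
      ≤ ENNReal.ofReal ((ε / 2 ^ (k + 1)) ^ (ξ - Q) * 2 ^ |ξ - Q|)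
        * ENNReal.ofReal (c * (ε / 2 ^ k) ^ (Q - p)) := by
    intro k
    have hmeas : MeasurableSet (T k \ T (k + 1)) :=
      (isClosed_cthickening.measurableSet).diff (isClosed_cthickening.measurableSet)
    have hb : ∀ x ∈ T k \ T (k + 1),
        g x ≤ (fun _ : X => ENNReal.ofReal ((ε / 2 ^ (k + 1)) ^ (ξ - Q) * 2 ^ |ξ - Q|)) x := by
      rintro x ⟨hx1, hx2⟩
      have hd2 : infDist x A ≤ ε / 2 ^ k :=
        (mem_cthickening_iff_infDist_le' hne (hεk k).le).1 hx1
      have hd1 : ε / 2 ^ (k + 1) < infDist x A := by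
        by_contra hcon
        exact hx2 ((mem_cthickening_iff_infDist_le' hne (hεk (k + 1)).le).2 (not_lt.mp hcon))
      have hd0 : 0 < infDist x A := (hεk (k + 1)).trans hd1
      have hnorm : g x = ENNReal.ofReal ((infDist x A) ^ (s.re - Q)) := by
        rw [hg]
        simp only
        rw [Complex.norm_cpow_eq_rpow_re_of_pos hd0]
        all_goals congr 2
        all_goals simp [Complex.sub_re, Complex.ofReal_re]
      rw [hnorm]
      simp only
      apply ENNReal.ofReal_le_ofReal
      have hdle1 : infDist x A ≤ 1 := hd2.trans (hεk1 k)
      have hstep1 : (infDist x A) ^ (s.re - Q) ≤ (infDist x A) ^ (ξ - Q) :=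
        Real.rpow_le_rpow_of_exponent_ge hd0 hdle1 (by linarith)
      refine hstep1.trans ?_
      have h2pow : (1:ℝ) ≤ 2 ^ |ξ - Q| := by
        calc (1:ℝ) = (2:ℝ) ^ (0:ℝ) := (Real.rpow_zero 2).symm
          _ ≤ 2 ^ |ξ - Q| := Real.rpow_le_rpow_of_exponent_le one_le_two (abs_nonneg _)
      rcases le_or_gt 0 (ξ - Q) with he | he
      · calc (infDist x A) ^ (ξ - Q) ≤ (ε / 2 ^ k) ^ (ξ - Q) :=
            Real.rpow_le_rpow hd0.le hd2 he
          _ = (ε / 2 ^ (k + 1) * 2) ^ (ξ - Q) := by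
              congr 1
              rw [pow_succ]
              field_simp
          _ = (ε / 2 ^ (k + 1)) ^ (ξ - Q) * (2:ℝ) ^ (ξ - Q) :=
              Real.mul_rpow (hεk (k + 1)).le (by norm_num)
          _ ≤ (ε / 2 ^ (k + 1)) ^ (ξ - Q) * 2 ^ |ξ - Q| :=
              mul_le_mul_of_nonneg_left
                (Real.rpow_le_rpow_of_exponent_le one_le_two (le_abs_self _))
                (Real.rpow_nonneg (hεk (k + 1)).le _)
      · calc (infDist x A) ^ (ξ - Q) ≤ (ε / 2 ^ (k + 1)) ^ (ξ - Q) :=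
            Real.rpow_le_rpow_of_nonpos (hεk (k + 1)) hd1.le he.le
          _ ≤ (ε / 2 ^ (k + 1)) ^ (ξ - Q) * 2 ^ |ξ - Q| :=
            le_mul_of_one_le_right (Real.rpow_nonneg (hεk (k + 1)).le _) h2pow
    calc ∫⁻ x in T k \ T (k + 1), g x ∂μ
        ≤ ∫⁻ _ in T k \ T (k + 1),
            ENNReal.ofReal ((ε / 2 ^ (k + 1)) ^ (ξ - Q) * 2 ^ |ξ - Q|) ∂μ :=
          setLIntegral_mono' hmeas hb
      _ = ENNReal.ofReal ((ε / 2 ^ (k + 1)) ^ (ξ - Q) * 2 ^ |ξ - Q|) * μ (T k \ T (k + 1)) :=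
          setLIntegral_const _ _
      _ ≤ ENNReal.ofReal ((ε / 2 ^ (k + 1)) ^ (ξ - Q) * 2 ^ |ξ - Q|) * μ (T k) :=
          mul_le_mul_right (measure_mono diff_subset) _
      _ ≤ ENNReal.ofReal ((ε / 2 ^ (k + 1)) ^ (ξ - Q) * 2 ^ |ξ - Q|)
            * ENNReal.ofReal (c * (ε / 2 ^ k) ^ (Q - p)) :=
          mul_le_mul_right (hkey _ (hεk k) (hεk1 k)) _
  -- summing the geometric series
  have hterm : ∀ k : ℕ,
      ENNReal.ofReal ((ε / 2 ^ (k + 1)) ^ (ξ - Q) * 2 ^ |ξ - Q|)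
        * ENNReal.ofReal (c * (ε / 2 ^ k) ^ (Q - p))
      = ENNReal.ofReal (2 ^ |ξ - Q| * c * (2:ℝ) ^ (Q - ξ) * ε ^ (ξ - p))
          * (ENNReal.ofReal ρ) ^ k := by
    intro k
    rw [← ENNReal.ofReal_pow hρ0.le,
      ← ENNReal.ofReal_mul (mul_nonneg (Real.rpow_nonneg (hεk (k + 1)).le _) habs.le),
      ← ENNReal.ofReal_mul (by
        refine mul_nonneg (mul_nonneg (mul_nonneg habs.le hc0.le) ?_) ?_ <;>
          exact Real.rpow_nonneg (by norm_num <;> positivity) _)]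
    congr 1
    have harith := pow_arith (ξ := ξ) (Q := Q) (p := p) hε0 k
    linear_combination (2 ^ |ξ - Q| * c) * harith
  have hB : (0:ℝ) ≤ 2 ^ |ξ - Q| * c * (2:ℝ) ^ (Q - ξ) * ε ^ (ξ - p) :=
    mul_nonneg (mul_nonneg (mul_nonneg habs.le hc0.le)
      (Real.rpow_nonneg (by norm_num) _)) (Real.rpow_nonneg hε0.le _)
  have hsum : (∑' k : ℕ, (ENNReal.ofReal ((ε / 2 ^ (k + 1)) ^ (ξ - Q) * 2 ^ |ξ - Q|)
        * ENNReal.ofReal (c * (ε / 2 ^ k) ^ (Q - p))))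
      ≤ ENNReal.ofReal (C₁ * ε ^ (ξ - p)) := by
    simp_rw [hterm]
    rw [ENNReal.tsum_mul_left, ENNReal.tsum_geometric]
    have h1 : (1:ℝ≥0∞) - ENNReal.ofReal ρ = ENNReal.ofReal (1 - ρ) := by
      rw [ENNReal.ofReal_sub _ hρ0.le, ENNReal.ofReal_one]
    rw [h1, ← ENNReal.ofReal_inv_of_pos (by linarith), ← ENNReal.ofReal_mul hB]
    exact ENNReal.ofReal_le_ofReal (le_of_eq (by rw [hC₁def]; ring))
  have hlint : ∫⁻ x in cthickening ε A, g x ∂μ ≤ ENNReal.ofReal (C₁ * ε ^ (ξ - p)) := by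
    calc ∫⁻ x in cthickening ε A, g x ∂μ
        ≤ ∫⁻ x in closure A ∪ ⋃ k, (T k \ T (k + 1)), g x ∂μ := lintegral_mono_set hcover
      _ ≤ (∫⁻ x in closure A, g x ∂μ) + ∫⁻ x in ⋃ k, (T k \ T (k + 1)), g x ∂μ :=
          lintegral_union_le _ _ _
      _ ≤ 0 + ∑' k : ℕ, ∫⁻ x in T k \ T (k + 1), g x ∂μ :=
          add_le_add hclosz.le (lintegral_iUnion_le _ _)
      _ ≤ ∑' k : ℕ, (ENNReal.ofReal ((ε / 2 ^ (k + 1)) ^ (ξ - Q) * 2 ^ |ξ - Q|)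
            * ENNReal.ofReal (c * (ε / 2 ^ k) ^ (Q - p))) := by
          rw [zero_add]; exact ENNReal.tsum_le_tsum hshell
      _ ≤ ENNReal.ofReal (C₁ * ε ^ (ξ - p)) := hsum
  have hnorm := norm_integral_le_lintegral_norm (μ := μ.restrict (cthickening ε A))
    (fun x => ((infDist x A : ℝ) : ℂ) ^ (s - (Q:ℂ)))
  exact hnorm.trans (ENNReal.toReal_le_of_le_ofReal
    (mul_nonneg hC₁pos.le (Real.rpow_nonneg hε0.le _)) hlint)

/-- For `ξ > dim̄_B A` and `p ∈ (dim̄_B A, ξ)` there is `C₁ > 0` such that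
`sup_{Re s ≥ ξ} |ζ_A(s, A_ε)| ≤ C₁ ε^(ξ-p)` for all `ε ∈ (0,1)`, where
`ζ_A(s, A_ε) = ∫_{A_ε} d(x,A)^(s-Q) dμ(x)`. -/
theorem stmt7 {X : Type*} [MetricSpace X] [MeasurableSpace X] [BorelSpace X]
    (μ : Measure X) (Q K : ℝ) (hQ : 0 < Q) (hreg : IsAhlfors μ Q K)
    (A : Set X) (hne : A.Nonempty) (hbd : Bornology.IsBounded A)
    (ξ p : ℝ) (hξ : uDimB μ Q A < ξ) (hp₁ : uDimB μ Q A < p) (hp₂ : p < ξ) :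
    ∃ C₁ : ℝ, 0 < C₁ ∧ ∀ ε : ℝ, ε ∈ Ioo (0:ℝ) 1 → ∀ s : ℂ, ξ ≤ s.re →
      ‖∫ x in cthickening ε A, (infDist x A : ℂ) ^ (s - (Q : ℂ)) ∂μ‖ ≤ C₁ * ε ^ (ξ - p) := by
  obtain ⟨a, ha⟩ := hne
  by_cases hfin : μ (cthickening 1 A) = ⊤
  · -- degenerate case: `X` is a subsingleton with infinite measure
    have hsub : ∀ x y : X, x = y := by
      by_contra h
      push_neg at h
      obtain ⟨x, y, hxy⟩ := h
      exact (measure_lt_top_of_isBounded hreg ⟨x, y, hxy⟩ (hbd.cthickening) x).ne hfin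
    refine ⟨1, one_pos, fun ε hε s hs => ?_⟩
    have hAε : cthickening ε A = univ :=
      eq_univ_of_forall fun x => (hsub x a) ▸ self_subset_cthickening A ha
    have hμtop : μ (cthickening ε A) = ⊤ := by
      rw [hAε, eq_top_iff, ← hfin]
      exact measure_mono (subset_univ _)
    have hconst : ∀ x ∈ cthickening ε A,
        ((infDist x A : ℝ) : ℂ) ^ (s - (Q:ℂ)) = ((0:ℝ) : ℂ) ^ (s - (Q:ℂ)) := by
      intro x _
      rw [hsub x a, infDist_zero_of_mem ha]
    rw [setIntegral_congr_fun (by rw [hAε]; exact MeasurableSet.univ) hconst,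
      setIntegral_const, measureReal_def, hμtop]
    simp only [ENNReal.toReal_top, zero_smul, norm_zero]
    rw [one_mul]
    exact Real.rpow_nonneg hε.1.le _
  · -- main case
    have hZne : ∃ r : ℝ, (0 ≤ r ∧ uContent μ Q r A = 0) ∧ r < p := by
      apply exists_lt_of_csInf_lt
      · exact ⟨max Q p + 1, ⟨by linarith [le_max_left Q p], content_zero_of_lt (by
          have := le_max_left Q p; linarith) hfin⟩⟩
      · exact hp₁
    obtain ⟨r, ⟨hr0, hrz⟩, hrp⟩ := hZne
    obtain ⟨c, hc1, hkey⟩ := key_bound hrz hrp.le hfin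
    exact main_est μ Q A ⟨a, ha⟩ hp₂ hc1 hkey

end
end

section
/- Let A be a bounded nonempty subset of an Ahlfors regular metric measure space (X, d, μ) of dimension Q, and let δ > 0. Then for every complex s with Re s > dim̄_B A, the following identity holds: ∫_{A_δ} d(x,A)^{s−Q} dμ(x) = δ^{s−Q} |A_δ| + (Q − s) ∫_0^δ t^{s−Q−1} |A_t| dt. -/
open MeasureTheory Metric Filter Set Topology ENNReal

noncomputable section

/-! ### Auxiliary lemmas -/

private lemma measurable_ofReal_cpow (w : ℂ) : Measurable fun t : ℝ => (t : ℂ) ^ w := by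
  have : (fun t : ℝ => (t : ℂ) ^ w)
      = Set.piecewise {(0:ℝ)} (fun _ => if w = 0 then 1 else 0)
        (fun t => Complex.exp (Complex.log t * w)) := by
    funext t
    by_cases ht : (t : ℂ) = 0
    · have ht' : t = 0 := by exact_mod_cast ht
      simp [ht', Complex.cpow_def, Set.piecewise]
    · have ht' : t ≠ 0 := fun h => ht (by exact_mod_cast h)
      simp [Set.piecewise, ht', Complex.cpow_def, ht]
  rw [this]
  exact Measurable.piecewise (measurableSet_singleton 0) measurable_const
    ((Complex.measurable_ofReal.clog.mul measurable_const).cexp)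

private lemma mem_cthick_iff {X : Type*} [MetricSpace X] {A : Set X} (hne : A.Nonempty)
    {t : ℝ} (ht : 0 ≤ t) (x : X) : x ∈ cthickening t A ↔ infDist x A ≤ t := by
  rw [mem_cthickening_iff, infDist,
    ← ENNReal.le_ofReal_iff_toReal_le (Metric.infEdist_ne_top hne) ht]

private lemma ftc_cpow {w : ℂ} {d δ : ℝ} (hd : 0 ≤ d) (hdδ : d ≤ δ)
    (h : 0 < d ∨ 0 < w.re) :
    w * ∫ t in Ioc (0:ℝ) δ, (Icc d δ).indicator (fun t => (t:ℂ) ^ (w - 1)) t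
      = (δ:ℂ) ^ w - (d:ℂ) ^ w := by
  by_cases hw : w = 0
  · simp [hw]
  have hI : ∫ t in Ioc (0:ℝ) δ, (Icc d δ).indicator (fun t => (t:ℂ) ^ (w - 1)) t
      = ∫ t in Ioc d δ, (t:ℂ) ^ (w - 1) := by
    rw [MeasureTheory.setIntegral_indicator measurableSet_Icc]
    rcases eq_or_lt_of_le hd with hd0 | hd0
    · rw [← hd0, Set.inter_eq_self_of_subset_left Set.Ioc_subset_Icc_self]
    · have : Ioc (0:ℝ) δ ∩ Icc d δ = Icc d δ := by
        apply Set.inter_eq_self_of_subset_right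
        exact fun x hx => ⟨lt_of_lt_of_le hd0 hx.1, hx.2⟩
      rw [this]
      exact MeasureTheory.setIntegral_congr_set (MeasureTheory.Ioc_ae_eq_Icc).symm
  have h2 : ∫ t in Ioc d δ, (t:ℂ) ^ (w - 1) = ∫ t in d..δ, (t:ℂ) ^ (w - 1) :=
    (intervalIntegral.integral_of_le hdδ).symm
  have hside : -1 < (w - 1).re ∨ (w - 1) ≠ -1 ∧ (0:ℝ) ∉ Set.uIcc d δ := by
    rcases h with hd0 | hwre
    · refine Or.inr ⟨fun hc => hw (by linear_combination hc), ?_⟩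
      rw [Set.uIcc_of_le hdδ]
      exact fun hc => absurd hc.1 (not_le.2 hd0)
    · left; simp [Complex.sub_re]; linarith
  rw [hI, h2, integral_cpow hside]
  have hww : w - 1 + 1 = w := by ring
  rw [hww]
  field_simp

private lemma meas_bounded_ne_top {X : Type*} [MetricSpace X] [MeasurableSpace X]
    (μ : Measure X) (Q K : ℝ) (hreg : IsAhlfors μ Q K)
    (hnt : ∃ a b : X, a ≠ b)
    {B : Set X} (hbd : Bornology.IsBounded B) : μ B ≠ ∞ := by
  obtain ⟨a, b, hab⟩ := hnt
  obtain ⟨R, hR⟩ := (Metric.isBounded_iff_subset_closedBall a).1 hbd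
  set R' : ℝ := max R 1 with hR'
  have hR'pos : (0:ℝ) < R' := lt_of_lt_of_le zero_lt_one (le_max_right _ _)
  have hsub : B ⊆ closedBall a R' := hR.trans (closedBall_subset_closedBall (le_max_left _ _))
  by_cases hdiam : ENNReal.ofReal R' ≤ EMetric.diam (univ : Set X)
  · have := (hreg.2 a R' hR'pos hdiam).2
    exact fun hc => by
      have : (⊤ : ℝ≥0∞) ≤ ENNReal.ofReal (K * R' ^ Q) := by
        calc (⊤ : ℝ≥0∞) = μ B := hc.symm
        _ ≤ μ (closedBall a R') := measure_mono hsub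
        _ ≤ _ := this
      exact ENNReal.ofReal_ne_top (top_le_iff.1 this)
  · push_neg at hdiam
    have hetop : EMetric.diam (univ : Set X) ≠ ⊤ := (hdiam.trans_le le_top).ne
    set D : ℝ := Metric.diam (univ : Set X) with hD
    have hD0 : 0 < D := by
      have h1 : (0:ℝ≥0∞) < EMetric.diam (univ : Set X) :=
        EMetric.diam_pos_iff'.2 ⟨a, mem_univ a, b, mem_univ b, hab⟩
      exact ENNReal.toReal_pos h1.ne' hetop
    have hball : (univ : Set X) ⊆ closedBall a D := fun y _ =>
      mem_closedBall.2 (Metric.dist_le_diam_of_mem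
        (Metric.isBounded_iff_ediam_ne_top.2 hetop) (mem_univ y) (mem_univ a))
    have hDle : ENNReal.ofReal D ≤ EMetric.diam (univ : Set X) :=
      (ENNReal.ofReal_toReal hetop).le
    have := (hreg.2 a D hD0 hDle).2
    intro hc
    have hineq : (⊤ : ℝ≥0∞) ≤ ENNReal.ofReal (K * D ^ Q) := by
      calc (⊤ : ℝ≥0∞) = μ B := hc.symm
      _ ≤ μ (closedBall a D) := measure_mono ((subset_univ B).trans hball)
      _ ≤ _ := this
    exact ENNReal.ofReal_ne_top (top_le_iff.1 hineq)

private lemma tendsto_div_rpow (M : ℝ≥0∞) (hM : M ≠ ⊤) {e : ℝ} (he : e < 0) :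
    Tendsto (fun t : ℝ => M / ENNReal.ofReal (t ^ e)) (𝓝[>] (0:ℝ)) (𝓝 0) := by
  have hkey : Tendsto (fun t : ℝ => M * ENNReal.ofReal (t ^ (-e))) (𝓝[>] (0:ℝ)) (𝓝 0) := by
    have h1 : Tendsto (fun t : ℝ => t ^ (-e)) (𝓝[>] (0:ℝ)) (𝓝 0) := by
      have := (Real.continuousAt_rpow_const 0 (-e) (Or.inr (le_of_lt (neg_pos.2 he)))).tendsto
      rw [Real.zero_rpow (ne_of_gt (neg_pos.2 he))] at this
      exact this.mono_left nhdsWithin_le_nhds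
    have h2 : Tendsto (fun t : ℝ => ENNReal.ofReal (t ^ (-e))) (𝓝[>] (0:ℝ)) (𝓝 0) := by
      have := (ENNReal.continuous_ofReal.tendsto 0).comp h1
      simpa [Function.comp_def] using this
    have := ENNReal.Tendsto.const_mul h2 (Or.inr hM)
    simpa using this
  apply hkey.congr'
  filter_upwards [self_mem_nhdsWithin] with t ht
  have ht' : (0:ℝ) < t := ht
  rw [div_eq_mul_inv]
  congr 1
  rw [Real.rpow_neg ht'.le, ENNReal.ofReal_inv_of_pos (Real.rpow_pos_of_pos ht' e)]

private lemma uContent_zero_of_gt {X : Type*} [MetricSpace X] [MeasurableSpace X]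
    (μ : Measure X) (Q r : ℝ) (A : Set X) {M : ℝ≥0∞} (hM : M ≠ ⊤)
    (hev : ∀ᶠ t in 𝓝[>] (0:ℝ), μ (cthickening t A) ≤ M) (hr : Q < r) :
    uContent μ Q r A = 0 := by
  have hbound : (fun t : ℝ => μ (cthickening t A) / ENNReal.ofReal (t ^ (Q - r)))
      ≤ᶠ[𝓝[>] (0:ℝ)] fun t => M / ENNReal.ofReal (t ^ (Q - r)) := by
    filter_upwards [hev] with t ht
    exact ENNReal.div_le_div_right ht _
  have h0 : Filter.limsup (fun t : ℝ => M / ENNReal.ofReal (t ^ (Q - r))) (𝓝[>] (0:ℝ)) = 0 :=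
    (tendsto_div_rpow M hM (by linarith)).limsup_eq
  have := Filter.limsup_le_limsup hbound
  rw [h0] at this
  exact le_antisymm this zero_le

private lemma uContent_pos_of_le {X : Type*} [MetricSpace X] [MeasurableSpace X]
    (μ : Measure X) (Q r : ℝ) (A : Set X) {c : ℝ≥0∞}
    (hev : ∀ᶠ t in 𝓝[>] (0:ℝ), c ≤ μ (cthickening t A)) (hr : r ≤ Q) :
    c ≤ uContent μ Q r A := by
  apply Filter.le_limsup_of_frequently_le'
  apply Filter.Eventually.frequently
  filter_upwards [hev, Ioo_mem_nhdsGT_of_mem (Set.mem_Ico.2 ⟨le_refl (0:ℝ), zero_lt_one⟩)]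
    with t htc ht1
  calc c = c / 1 := (div_one c).symm
  _ ≤ c / ENNReal.ofReal (t ^ (Q - r)) := by
      apply ENNReal.div_le_div_left
      exact ENNReal.ofReal_le_one.2 (Real.rpow_le_one ht1.1.le ht1.2.le (by linarith))
  _ ≤ _ := ENNReal.div_le_div_right htc _

/-- For every complex `s` with `Re s > dim̄_B A`,
`∫_{A_δ} d(x,A)^(s-Q) dμ = δ^(s-Q) |A_δ| + (Q-s) ∫_0^δ t^(s-Q-1) |A_t| dt`. -/
theorem stmt9 {X : Type*} [MetricSpace X] [MeasurableSpace X] [BorelSpace X]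
    (μ : Measure X) (Q K : ℝ) (hQ : 0 < Q) (hreg : IsAhlfors μ Q K)
    (A : Set X) (hne : A.Nonempty) (hbd : Bornology.IsBounded A)
    (δ : ℝ) (hδ : 0 < δ) (s : ℂ) (hs : uDimB μ Q A < s.re) :
    ∫ x in cthickening δ A, (infDist x A : ℂ) ^ (s - (Q : ℂ)) ∂μ
      = (δ : ℂ) ^ (s - (Q : ℂ)) * ((μ (cthickening δ A)).toReal : ℂ)
        + ((Q : ℂ) - s) * ∫ t in Ioc (0:ℝ) δ,
            (t : ℂ) ^ (s - (Q : ℂ) - 1) * ((μ (cthickening t A)).toReal : ℂ) := by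
  set w : ℂ := s - (Q : ℂ) with hw
  rcases subsingleton_or_nontrivial X with hss | hnt
  · -- degenerate case: `X` is a single point
    obtain ⟨a, ha⟩ := hne
    have hct : ∀ t : ℝ, cthickening t A = univ := fun t =>
      eq_univ_of_forall fun x => by
        rw [mem_cthickening_iff]
        have hx : x ∈ A := by rwa [Subsingleton.elim x a]
        rw [EMetric.infEdist_zero_of_mem hx]
        exact zero_le
    have hd0 : ∀ x : X, infDist x A = 0 := fun x =>
      Metric.infDist_zero_of_mem (by rwa [Subsingleton.elim x a])
    have hLHS : ∫ x in cthickening δ A, ((infDist x A : ℝ) : ℂ) ^ w ∂μ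
        = (μ (univ : Set X)).toReal • (((0:ℝ) : ℂ)) ^ w := by
      rw [hct δ, Measure.restrict_univ]
      rw [show (fun x : X => ((infDist x A : ℝ) : ℂ) ^ w) = fun _ : X => (((0:ℝ):ℂ)) ^ w from
        funext fun x => by rw [hd0 x]]
      exact integral_const _
    rw [hLHS]
    simp only [hct]
    by_cases hμ : (μ (univ : Set X)).toReal = 0
    · rw [hμ]
      simp [hμ]
    · -- `μ univ` is finite and nonzero; then `uDimB = Q < s.re`
      have hfin : μ (univ : Set X) ≠ ⊤ := fun hc => hμ (by simp [hc])
      have hzero : μ (univ : Set X) ≠ 0 := fun hc => hμ (by simp [hc])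
      have hQle : Q ≤ uDimB μ Q A := by
        apply le_csInf
        · refine ⟨max Q 0 + 1, le_of_lt (by positivity), ?_⟩
          apply uContent_zero_of_gt μ _ _ _ hfin
          · exact Eventually.of_forall fun t => measure_mono (subset_univ _)
          · have := le_max_left Q 0; linarith
        · rintro b ⟨hb0, hbc⟩
          by_contra hbQ
          push_neg at hbQ
          have := uContent_pos_of_le μ Q b A
            (c := μ (univ : Set X))
            (Eventually.of_forall fun t => by rw [hct t]) hbQ.le
          rw [hbc] at this
          exact hzero (le_antisymm this zero_le)
      have hQs : Q < s.re := lt_of_le_of_lt hQle hs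
      have hw0 : w ≠ 0 := fun hc => by
        have : s = (Q : ℂ) := by rw [hw] at hc; linear_combination hc
        rw [this] at hQs
        simp at hQs
      have hwre : 0 < w.re := by
        rw [hw]; simp [Complex.sub_re]; linarith
      rw [show (((0:ℝ):ℂ)) ^ w = 0 by
        rw [Complex.ofReal_zero]; exact Complex.zero_cpow hw0]
      rw [smul_zero]
      have hint : ∫ t in Ioc (0:ℝ) δ, ((t:ℂ) ^ (w - 1) * ((μ (univ : Set X)).toReal : ℂ))
          = ((δ:ℂ) ^ w / w) * ((μ (univ : Set X)).toReal : ℂ) := by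
        rw [MeasureTheory.integral_mul_const]
        congr 1
        rw [← intervalIntegral.integral_of_le hδ.le,
          integral_cpow (Or.inl (by simp [Complex.sub_re]; linarith))]
        rw [show w - 1 + 1 = w from by ring]
        rw [Complex.ofReal_zero, Complex.zero_cpow hw0, sub_zero]
      rw [hint]
      have hQsw : (Q : ℂ) - s = -w := by rw [hw]; ring
      rw [hQsw]
      field_simp
      ring
  · -- main case: `X` has at least two points
    have hnt' : ∃ a b : X, a ≠ b := exists_pair_ne X
    have h1 : μ (cthickening δ A) ≠ ⊤ :=
      meas_bounded_ne_top μ Q K hreg hnt' hbd.cthickening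
    -- choose an exponent `r` with `uDimB < r < s.re` and vanishing content
    have hSne : {r : ℝ | 0 ≤ r ∧ uContent μ Q r A = 0}.Nonempty := by
      refine ⟨max Q 0 + 1, le_of_lt (by positivity), ?_⟩
      apply uContent_zero_of_gt μ _ _ _ h1
      · filter_upwards [Ioo_mem_nhdsGT_of_mem (Set.mem_Ico.2 ⟨le_refl (0:ℝ), hδ⟩)] with t ht
        exact measure_mono (cthickening_mono ht.2.le A)
      · have := le_max_left Q 0; linarith
    have hSbdd : BddBelow {r : ℝ | 0 ≤ r ∧ uContent μ Q r A = 0} := ⟨0, fun x hx => hx.1⟩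
    obtain ⟨r, ⟨hr0, hrc⟩, hrs⟩ := (csInf_lt_iff hSbdd hSne).1 hs
    -- the decay estimate near `0`
    have hev : ∀ᶠ t in 𝓝[>] (0:ℝ), μ (cthickening t A) ≤ ENNReal.ofReal (t ^ (Q - r)) := by
      have hlim : Filter.limsup
          (fun t : ℝ => μ (cthickening t A) / ENNReal.ofReal (t ^ (Q - r))) (𝓝[>] 0) < 1 := by
        rw [show Filter.limsup
            (fun t : ℝ => μ (cthickening t A) / ENNReal.ofReal (t ^ (Q - r))) (𝓝[>] 0)
          = uContent μ Q r A from rfl, hrc]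
        exact zero_lt_one
      filter_upwards [Filter.eventually_lt_of_limsup_lt hlim, self_mem_nhdsWithin] with t ht ht0
      have ht0' : (0:ℝ) < t := ht0
      have hb0 : ENNReal.ofReal (t ^ (Q - r)) ≠ 0 := by
        simp only [ne_eq, ENNReal.ofReal_eq_zero, not_le]
        exact Real.rpow_pos_of_pos ht0' _
      have := (ENNReal.div_lt_iff (Or.inl hb0) (Or.inl ENNReal.ofReal_ne_top)).1 ht
      rw [one_mul] at this
      exact this.le
    obtain ⟨t₁, ht₁pos, ht₁⟩ :=
      (nhdsGT_basis_of_exists_gt (⟨1, zero_lt_one⟩ : ∃ b : ℝ, (0:ℝ) < b)).eventually_iff.1 hev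
    set t₀ : ℝ := min (t₁ / 2) δ with ht₀def
    have ht₀pos : 0 < t₀ := lt_min (by linarith) hδ
    have ht₀δ : t₀ ≤ δ := min_le_right _ _
    have h3 : ∀ t : ℝ, 0 < t → t ≤ t₀ → μ (cthickening t A) ≤ ENNReal.ofReal (t ^ (Q - r)) :=
      fun t ht htt => ht₁ ⟨ht, lt_of_le_of_lt (htt.trans (min_le_left _ _)) (by linarith)⟩
    -- a.e. positivity of the distance (when `Re w ≤ 0`)
    have h4 : ∀ᵐ x ∂μ, (0 < infDist x A ∨ 0 < w.re) := by
      by_cases hwre : 0 < w.re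
      · exact Eventually.of_forall fun x => Or.inr hwre
      · have hsQ : s.re ≤ Q := by
          rw [hw] at hwre
          simp only [Complex.sub_re, Complex.ofReal_re, not_lt] at hwre
          linarith
        have hrQ : r < Q := lt_of_lt_of_le hrs hsQ
        have hclos : μ (closure A) = 0 := by
          have hle : ∀ᶠ t in 𝓝[>] (0:ℝ), μ (closure A) ≤ ENNReal.ofReal (t ^ (Q - r)) := by
            filter_upwards [hev] with t ht
            exact le_trans (measure_mono (closure_subset_cthickening t A)) ht
          have htend : Tendsto (fun t : ℝ => ENNReal.ofReal (t ^ (Q - r))) (𝓝[>] (0:ℝ)) (𝓝 0) := by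
            have h1' : Tendsto (fun t : ℝ => t ^ (Q - r)) (𝓝[>] (0:ℝ)) (𝓝 0) := by
              have := (Real.continuousAt_rpow_const 0 (Q - r)
                (Or.inr (by linarith))).tendsto
              rw [Real.zero_rpow (ne_of_gt (by linarith : (0:ℝ) < Q - r))] at this
              exact this.mono_left nhdsWithin_le_nhds
            have := (ENNReal.continuous_ofReal.tendsto 0).comp h1'
            simpa [Function.comp_def] using this
          exact le_antisymm (ge_of_tendsto htend hle) zero_le
        rw [ae_iff]
        apply measure_mono_null _ hclos
        intro x hx
        simp only [Set.mem_setOf_eq, not_or, not_lt] at hx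
        exact (mem_closure_iff_infDist_zero hne).2 (le_antisymm hx.1 infDist_nonneg)
    set Aδ : Set X := cthickening δ A with hAδ
    have hAm : ∀ t : ℝ, MeasurableSet (cthickening t A) := fun t =>
      (isClosed_cthickening).measurableSet
    haveI hfinμδ : IsFiniteMeasure (μ.restrict Aδ) :=
      ⟨by rw [Measure.restrict_apply_univ]; exact h1.lt_top⟩
    set Hf : X → ℝ → ℂ :=
      fun x t => (Icc (infDist x A) δ).indicator (fun u : ℝ => (u:ℂ) ^ (w - 1)) t with hHf
    have hHmeas : Measurable (Function.uncurry Hf) := by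
      have heq : Function.uncurry Hf
          = Set.indicator {p : X × ℝ | infDist p.1 A ≤ p.2 ∧ p.2 ≤ δ}
            (fun p : X × ℝ => ((p.2 : ℝ) : ℂ) ^ (w - 1)) := by
        funext p
        rcases p with ⟨x, t⟩
        simp only [Function.uncurry, hHf, Set.indicator, Set.mem_Icc, Set.mem_setOf_eq]
      rw [heq]
      have hcl : IsClosed {p : X × ℝ | infDist p.1 A ≤ p.2 ∧ p.2 ≤ δ} := by
        rw [show {p : X × ℝ | infDist p.1 A ≤ p.2 ∧ p.2 ≤ δ}
            = {p : X × ℝ | infDist p.1 A ≤ p.2} ∩ {p : X × ℝ | p.2 ≤ δ} from rfl]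
        exact (isClosed_le ((continuous_infDist_pt A).comp continuous_fst) continuous_snd).inter
          (isClosed_le continuous_snd continuous_const)
      exact ((measurable_ofReal_cpow (w - 1)).comp measurable_snd).indicator hcl.measurableSet
    -- the key finiteness estimate
    have h6 : ∫⁻ t in Ioc (0:ℝ) δ,
        ENNReal.ofReal (t ^ (s.re - Q - 1)) * μ (cthickening t A) < ⊤ := by
      rw [← Set.Ioc_union_Ioc_eq_Ioc ht₀pos.le ht₀δ,
        lintegral_union measurableSet_Ioc (Set.Ioc_disjoint_Ioc_of_le le_rfl)]
      refine ENNReal.add_lt_top.2 ⟨?_, ?_⟩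
      · have hle : ∫⁻ t in Ioc (0:ℝ) t₀,
            ENNReal.ofReal (t ^ (s.re - Q - 1)) * μ (cthickening t A)
            ≤ ∫⁻ t in Ioc (0:ℝ) t₀, ENNReal.ofReal (t ^ (s.re - r - 1)) := by
          apply setLIntegral_mono' measurableSet_Ioc
          intro t ht
          calc ENNReal.ofReal (t ^ (s.re - Q - 1)) * μ (cthickening t A)
              ≤ ENNReal.ofReal (t ^ (s.re - Q - 1)) * ENNReal.ofReal (t ^ (Q - r)) :=
                mul_le_mul_right (h3 t ht.1 ht.2) _
          _ = ENNReal.ofReal (t ^ (s.re - r - 1)) := by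
                rw [← ENNReal.ofReal_mul (Real.rpow_nonneg ht.1.le _), ← Real.rpow_add ht.1,
                  show s.re - Q - 1 + (Q - r) = s.re - r - 1 from by ring]
        apply lt_of_le_of_lt hle
        rw [show volume.restrict (Ioc (0:ℝ) t₀) = volume.restrict (Ioo (0:ℝ) t₀) from
          (Measure.restrict_congr_set MeasureTheory.Ioo_ae_eq_Ioc).symm]
        have hint : IntegrableOn (fun t : ℝ => t ^ (s.re - r - 1)) (Ioo (0:ℝ) t₀) :=
          (intervalIntegral.integrableOn_Ioo_rpow_iff ht₀pos).2 (by linarith)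
        have heq2 : ∫⁻ t in Ioo (0:ℝ) t₀, ENNReal.ofReal (t ^ (s.re - r - 1))
            = ∫⁻ t in Ioo (0:ℝ) t₀, ‖t ^ (s.re - r - 1)‖ₑ :=
          setLIntegral_congr_fun_ae measurableSet_Ioo (ae_of_all _ fun t ht =>
            (Real.enorm_eq_ofReal (Real.rpow_nonneg ht.1.le _)).symm)
        rw [heq2]
        exact hint.2
      · set C : ℝ := max (t₀ ^ (s.re - Q - 1)) (δ ^ (s.re - Q - 1)) with hC
        have hle2 : ∫⁻ t in Ioc t₀ δ,
            ENNReal.ofReal (t ^ (s.re - Q - 1)) * μ (cthickening t A)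
            ≤ ∫⁻ _ in Ioc t₀ δ, ENNReal.ofReal C * μ (cthickening δ A) := by
          apply setLIntegral_mono' measurableSet_Ioc
          intro t ht
          apply mul_le_mul'
          · apply ENNReal.ofReal_le_ofReal
            rcases le_or_gt 0 (s.re - Q - 1) with he | he
            · exact le_trans
                (Real.rpow_le_rpow (le_of_lt (lt_of_lt_of_le ht₀pos ht.1.le)) ht.2 he)
                (le_max_right _ _)
            · exact le_trans (Real.rpow_le_rpow_of_nonpos ht₀pos ht.1.le he.le)
                (le_max_left _ _)
          · exact measure_mono (cthickening_mono ht.2 A)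
        apply lt_of_le_of_lt hle2
        rw [setLIntegral_const]
        exact ENNReal.mul_lt_top
          (ENNReal.mul_lt_top ENNReal.ofReal_lt_top h1.lt_top)
          (by rw [Real.volume_Ioc]; exact ENNReal.ofReal_lt_top)
    -- integrability on the product space
    have h5 : Integrable (Function.uncurry Hf)
        ((μ.restrict Aδ).prod (volume.restrict (Ioc (0:ℝ) δ))) := by
      refine ⟨hHmeas.aestronglyMeasurable, ?_⟩
      rw [hasFiniteIntegral_def]
      rw [lintegral_prod_symm _ hHmeas.enorm.aemeasurable]
      have hinner : ∀ t ∈ Ioc (0:ℝ) δ,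
          (∫⁻ x, ‖Hf x t‖ₑ ∂(μ.restrict Aδ))
          = ENNReal.ofReal (t ^ (s.re - Q - 1)) * μ (cthickening t A) := by
        intro t ht
        have hfun : (fun x => ‖Hf x t‖ₑ)
            = (cthickening t A).indicator
              (fun _ => ENNReal.ofReal (t ^ (s.re - Q - 1))) := by
          funext x
          by_cases hx : infDist x A ≤ t
          · rw [Set.indicator_of_mem ((mem_cthick_iff hne ht.1.le x).2 hx)]
            rw [show Hf x t = (t:ℂ) ^ (w - 1) from
              Set.indicator_of_mem (Set.mem_Icc.2 ⟨hx, ht.2⟩) _]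
            have hre : (w - 1).re = s.re - Q - 1 := by
              rw [hw]; simp [Complex.sub_re]
            rw [← ofReal_norm,
              Complex.norm_cpow_eq_rpow_re_of_pos ht.1, hre]
          · rw [Set.indicator_of_notMem (fun hc => hx ((mem_cthick_iff hne ht.1.le x).1 hc))]
            rw [show Hf x t = 0 from
              Set.indicator_of_notMem (fun hc => hx (Set.mem_Icc.1 hc).1) _]
            simp
        rw [hfun, lintegral_indicator (hAm t), setLIntegral_const,
          Measure.restrict_apply (hAm t),
          Set.inter_eq_self_of_subset_left (cthickening_mono ht.2 A)]
      calc ∫⁻ t in Ioc (0:ℝ) δ, ∫⁻ x, ‖Hf x t‖ₑ ∂(μ.restrict Aδ)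
          = ∫⁻ t in Ioc (0:ℝ) δ,
              ENNReal.ofReal (t ^ (s.re - Q - 1)) * μ (cthickening t A) :=
            setLIntegral_congr_fun_ae measurableSet_Ioc (ae_of_all _ hinner)
      _ < ⊤ := h6
    -- pointwise FTC identity, a.e. on `Aδ`
    have h7 : ∫ x in Aδ, ((infDist x A : ℝ) : ℂ) ^ w ∂μ
        = ∫ x in Aδ, ((δ:ℂ) ^ w - w • ∫ t in Ioc (0:ℝ) δ, Hf x t) ∂μ := by
      apply setIntegral_congr_ae (hAm δ)
      filter_upwards [h4] with x hx hxA
      have hdle : infDist x A ≤ δ := (mem_cthick_iff hne hδ.le x).1 hxA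
      have hftc : w * (∫ t in Ioc (0:ℝ) δ, Hf x t)
          = (δ:ℂ) ^ w - ((infDist x A : ℝ) : ℂ) ^ w :=
        ftc_cpow infDist_nonneg hdle hx
      rw [smul_eq_mul, hftc]
      ring
    -- integrability of the inner integral, and Fubini
    have hconst : IntegrableOn (fun _ : X => (δ:ℂ) ^ w) Aδ μ :=
      integrableOn_const h1
    have hGint : Integrable (fun x => ∫ t, Hf x t ∂(volume.restrict (Ioc (0:ℝ) δ)))
        (μ.restrict Aδ) := h5.integral_prod_left
    have hfix : ∀ t ∈ Ioc (0:ℝ) δ, (∫ x, Hf x t ∂(μ.restrict Aδ))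
        = (t:ℂ) ^ (w - 1) * ((μ (cthickening t A)).toReal : ℂ) := by
      intro t ht
      have hfun : (fun x => Hf x t)
          = (cthickening t A).indicator (fun _ => (t:ℂ) ^ (w - 1)) := by
        funext x
        by_cases hx : infDist x A ≤ t
        · rw [show Hf x t = (t:ℂ) ^ (w - 1) from
            Set.indicator_of_mem (Set.mem_Icc.2 ⟨hx, ht.2⟩) _,
            Set.indicator_of_mem ((mem_cthick_iff hne ht.1.le x).2 hx)]
        · rw [show Hf x t = 0 from
            Set.indicator_of_notMem (fun hc => hx (Set.mem_Icc.1 hc).1) _,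
            Set.indicator_of_notMem (fun hc => hx ((mem_cthick_iff hne ht.1.le x).1 hc))]
      rw [hfun, integral_indicator (hAm t), Measure.restrict_restrict (hAm t),
        Set.inter_eq_self_of_subset_left (cthickening_mono ht.2 A),
        setIntegral_const, Complex.real_smul, mul_comm, measureReal_def]
    have h9 : ∫ x in Aδ, ((δ:ℂ) ^ w - w • ∫ t in Ioc (0:ℝ) δ, Hf x t) ∂μ
        = ((μ Aδ).toReal : ℂ) * (δ:ℂ) ^ w
          - w • ∫ t in Ioc (0:ℝ) δ,
              ((t:ℂ) ^ (w - 1) * ((μ (cthickening t A)).toReal : ℂ)) := by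
      have hsm : Integrable (fun x => w • ∫ t in Ioc (0:ℝ) δ, Hf x t) (μ.restrict Aδ) :=
        hGint.smul w
      rw [integral_sub hconst hsm, integral_smul, setIntegral_const, Complex.real_smul]
      congr 2
      rw [integral_integral_swap h5]
      exact setIntegral_congr_ae measurableSet_Ioc (ae_of_all _ hfix)
    rw [h7, h9]
    have hQsw : (Q : ℂ) - s = -w := by rw [hw]; ring
    rw [hQsw, smul_eq_mul]
    ring

end
end

section
/- Let A be a bounded nonempty subset of an Ahlfors regular metric measure space (X, d, μ) of dimension Q, and let δ > 0. Then the tube zeta function ζ̃_A(s) = ∫_0^δ t^{s−Q−1} |A_t| dt is well defined (the integral converges absolutely) and is holomorphic on the open half-plane { s ∈ ℂ : Re s > dim̄_B A }. -/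
open MeasureTheory Metric Filter Set Topology ENNReal

noncomputable section

/-- The tube zeta function `ζ̃_A(s) = ∫_0^δ t^(s-Q-1) |A_t| dt` converges absolutely
and is holomorphic on the open half-plane `{ Re s > dim̄_B A }`. -/
theorem stmt10 {X : Type*} [MetricSpace X] [MeasurableSpace X] [BorelSpace X]
    (μ : Measure X) (Q K : ℝ) (hQ : 0 < Q) (hreg : IsAhlfors μ Q K)
    (A : Set X) (hne : A.Nonempty) (hbd : Bornology.IsBounded A)
    (δ : ℝ) (hδ : 0 < δ) :
    ∀ s : ℂ, uDimB μ Q A < s.re →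
      IntegrableOn
        (fun t : ℝ => (t : ℂ) ^ (s - (Q : ℂ) - 1) * ((μ (cthickening t A)).toReal : ℂ))
        (Ioc (0:ℝ) δ) volume ∧
      DifferentiableAt ℂ
        (fun z : ℂ => ∫ t in Ioc (0:ℝ) δ,
          (t : ℂ) ^ (z - (Q : ℂ) - 1) * ((μ (cthickening t A)).toReal : ℂ)) s := by
  intro s hs
  have hmono : Monotone fun t : ℝ => μ (cthickening t A) :=
    fun a b h => measure_mono (cthickening_mono h A)
  by_cases htop : ∀ t ∈ Ioc (0:ℝ) δ, μ (cthickening t A) = ⊤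
  · -- degenerate case: the integrand vanishes identically on `(0, δ]`
    have hzero : ∀ z : ℂ, ∀ t ∈ Ioc (0:ℝ) δ,
        (t : ℂ) ^ (z - (Q : ℂ) - 1) * ((μ (cthickening t A)).toReal : ℂ) = 0 := by
      intro z t ht
      rw [htop t ht]
      simp
    constructor
    · exact (integrableOn_zero (μ := volume)).congr_fun
        (fun t ht => (hzero s t ht).symm) measurableSet_Ioc
    · have hfun : (fun z : ℂ => ∫ t in Ioc (0:ℝ) δ,
          (t : ℂ) ^ (z - (Q : ℂ) - 1) * ((μ (cthickening t A)).toReal : ℂ))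
          = fun _ : ℂ => (0 : ℂ) := by
        funext z
        rw [setIntegral_congr_fun measurableSet_Ioc (fun t ht => hzero z t ht)]
        simp
      rw [hfun]
      exact differentiableAt_const 0
  · push_neg at htop
    obtain ⟨t₀, ht₀, ht₀fin⟩ := htop
    -- the measure of the δ-neighborhood is finite
    have hm : μ (cthickening δ A) ≠ ⊤ := by
      rcases eq_or_ne (EMetric.diam (univ : Set X)) 0 with hD | hD
      · -- the space is a subsingleton, so all cthickenings are equal
        have hsub : (univ : Set X).Subsingleton := EMetric.diam_eq_zero_iff.mp hD
        have key : ∀ u : ℝ, cthickening u A = univ := by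
          intro u
          apply eq_univ_of_forall
          intro x
          obtain ⟨a, ha⟩ := hne
          have hxa : x = a := hsub (mem_univ x) (mem_univ a)
          exact hxa ▸ self_subset_cthickening A ha
        rw [key δ, ← key t₀]
        exact ht₀fin
      · obtain ⟨a, ha⟩ := hne
        obtain ⟨R, hR0, hR⟩ := (hbd.cthickening (δ := δ)).subset_closedBall_lt 0 a
        by_cases hRD : ENNReal.ofReal R ≤ EMetric.diam (univ : Set X)
        · exact ((measure_mono hR).trans (hreg.2 a R hR0 hRD).2).trans_lt
            ENNReal.ofReal_lt_top |>.ne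
        · push_neg at hRD
          have hDfin : EMetric.diam (univ : Set X) ≠ ⊤ := hRD.ne_top
          set Dr := (EMetric.diam (univ : Set X)).toReal with hDr
          have hDr0 : 0 < Dr := ENNReal.toReal_pos hD hDfin
          have huniv : (univ : Set X) ⊆ closedBall a Dr := by
            intro x _
            rw [mem_closedBall, dist_edist]
            exact ENNReal.toReal_le_of_le_ofReal hDr0.le
              (by rw [ENNReal.ofReal_toReal hDfin]
                  exact EMetric.edist_le_diam_of_mem (mem_univ x) (mem_univ a))
          have := (hreg.2 a Dr hDr0 (by rw [ENNReal.ofReal_toReal hDfin])).2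
          exact ((measure_mono (subset_univ _)).trans ((measure_mono huniv).trans this)).trans_lt
            ENNReal.ofReal_lt_top |>.ne
    -- the set defining uDimB is nonempty
    have hSne : (Q + 1) ∈ {r : ℝ | 0 ≤ r ∧ uContent μ Q r A = 0} := by
      refine ⟨by linarith, ?_⟩
      have htend : Tendsto (fun t : ℝ => μ (cthickening t A) / ENNReal.ofReal (t ^ (Q - (Q+1))))
          (𝓝[>] 0) (𝓝 0) := by
        have hup : Tendsto (fun t : ℝ => μ (cthickening δ A) * ENNReal.ofReal t)
            (𝓝[>] 0) (𝓝 0) := by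
          have h1 : Tendsto (fun t : ℝ => ENNReal.ofReal t) (𝓝[>] (0:ℝ)) (𝓝 0) := by
            have h0 : Tendsto (fun t : ℝ => ENNReal.ofReal t) (𝓝 (0:ℝ)) (𝓝 (ENNReal.ofReal 0)) :=
              ENNReal.continuous_ofReal.tendsto (0:ℝ)
            have := h0.mono_left (nhdsWithin_le_nhds (s := Ioi (0:ℝ)))
            simpa using this
          have := ENNReal.Tendsto.const_mul h1 (Or.inr hm)
          simpa using this
        apply tendsto_of_tendsto_of_tendsto_of_le_of_le' tendsto_const_nhds hup
        · exact Eventually.of_forall fun t => zero_le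
        · filter_upwards [Ioc_mem_nhdsGT hδ] with t ht
          have hQQ : Q - (Q + 1) = -1 := by ring
          rw [hQQ, Real.rpow_neg_one, ENNReal.ofReal_inv_of_pos ht.1, div_eq_mul_inv, inv_inv]
          exact mul_le_mul_left (hmono ht.2) _
      exact htend.limsup_eq
    -- pick r with content zero and r < re s
    obtain ⟨r, ⟨hr0, hrcont⟩, hrs⟩ :=
      exists_lt_of_csInf_lt ⟨Q + 1, hSne⟩ hs
    -- eventual bound near 0
    have hev : ∀ᶠ t in 𝓝[>] (0:ℝ),
        μ (cthickening t A) / ENNReal.ofReal (t ^ (Q - r)) < 1 := by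
      apply eventually_lt_of_limsup_lt (hu := isBoundedUnder_of ⟨⊤, fun _ => le_top⟩)
      have : Filter.limsup (fun t : ℝ =>
          μ (cthickening t A) / ENNReal.ofReal (t ^ (Q - r))) (𝓝[>] 0) = 0 := hrcont
      rw [this]
      exact zero_lt_one
    obtain ⟨ε, hε0, hεsub⟩ := mem_nhdsGT_iff_exists_Ioc_subset.mp hev
    have hε0' : (0:ℝ) < ε := hε0
    -- basic data
    set f₀ : ℝ → ℝ := fun t => (μ (cthickening t A)).toReal with hf₀def
    have hf₀nonneg : ∀ t, 0 ≤ f₀ t := fun t => ENNReal.toReal_nonneg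
    have hC : ∀ t, t ≤ δ → f₀ t ≤ f₀ δ := fun t ht => ENNReal.toReal_mono hm (hmono ht)
    have hbound0 : ∀ t ∈ Ioc (0:ℝ) ε, f₀ t ≤ t ^ (Q - r) := by
      intro t ht
      have h1 := hεsub ht
      have hb0 : ENNReal.ofReal (t ^ (Q - r)) ≠ 0 := by
        simp [ENNReal.ofReal_eq_zero, not_le, Real.rpow_pos_of_pos ht.1]
      have hbT : ENNReal.ofReal (t ^ (Q - r)) ≠ ⊤ := ENNReal.ofReal_ne_top
      have h2 : μ (cthickening t A) < 1 * ENNReal.ofReal (t ^ (Q - r)) :=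
        (ENNReal.div_lt_iff (Or.inl hb0) (Or.inl hbT)).mp h1
      rw [one_mul] at h2
      exact ENNReal.toReal_le_of_le_ofReal (Real.rpow_nonneg ht.1.le _) h2.le
    -- auxiliary function for the Mellin transform
    set F : ℝ → ℂ :=
      (Ioc (0:ℝ) δ).indicator (fun t => ((t ^ (-Q) * f₀ t : ℝ) : ℂ)) with hFdef
    have hf₀meas : Measurable f₀ :=
      ENNReal.measurable_toReal.comp hmono.measurable
    have hFmeas : Measurable F := by
      apply Measurable.indicator _ measurableSet_Ioc
      exact Complex.measurable_ofReal.comp ((by fun_prop : Measurable fun t : ℝ => t ^ (-Q)).mul hf₀meas)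
    -- norm of F
    have hFval : ∀ t ∈ Ioc (0:ℝ) δ, F t = ((t ^ (-Q) * f₀ t : ℝ) : ℂ) :=
      fun t ht => indicator_of_mem ht _
    have hFnorm : ∀ t ∈ Ioc (0:ℝ) δ, ‖F t‖ = t ^ (-Q) * f₀ t := by
      intro t ht
      rw [hFval t ht, Complex.norm_real, Real.norm_eq_abs, abs_of_nonneg
        (mul_nonneg (Real.rpow_nonneg ht.1.le _) (hf₀nonneg t))]
    -- local integrability
    have hFloc : LocallyIntegrableOn F (Ioi (0:ℝ)) volume := by
      intro x hx
      have hx0 : (0:ℝ) < x := hx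
      refine ⟨Icc (x/2) (x+1), mem_nhdsWithin_of_mem_nhds
        (Icc_mem_nhds (by linarith) (by linarith)), ?_⟩
      apply Measure.integrableOn_of_bounded (M := (x/2) ^ (-Q) * f₀ δ)
        (by simp) hFmeas.aestronglyMeasurable
      filter_upwards [ae_restrict_mem measurableSet_Icc] with t ht
      by_cases hmem : t ∈ Ioc (0:ℝ) δ
      · rw [hFnorm t hmem]
        have h1 : t ^ (-Q) ≤ (x/2) ^ (-Q) :=
          Real.rpow_le_rpow_of_nonpos (by linarith) ht.1 (by linarith)
        exact mul_le_mul h1 (hC t hmem.2) (hf₀nonneg t) (Real.rpow_nonneg (by linarith) _)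
      · have hFt : F t = 0 := by rw [hFdef]; exact indicator_of_notMem hmem _
        rw [hFt]
        simp only [norm_zero]
        have : (0:ℝ) ≤ f₀ δ := hf₀nonneg δ
        positivity
    -- big-O at infinity
    have hFtop : F =O[atTop] (fun t : ℝ => t ^ (-(s.re + 1))) := by
      rw [Asymptotics.isBigO_iff]
      refine ⟨1, ?_⟩
      filter_upwards [eventually_gt_atTop δ] with t ht
      have hFt : F t = 0 := by
        rw [hFdef]
        exact indicator_of_notMem (fun hmem : t ∈ Ioc (0:ℝ) δ => absurd hmem.2 (not_le.2 ht)) _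
      rw [hFt]
      simp only [norm_zero]
      positivity
    -- big-O at zero
    have hFbot : F =O[𝓝[>] (0:ℝ)] (fun t : ℝ => t ^ (-r)) := by
      rw [Asymptotics.isBigO_iff]
      refine ⟨1, ?_⟩
      filter_upwards [Ioc_mem_nhdsGT (lt_min hε0' hδ)] with t ht
      have htδ : t ∈ Ioc (0:ℝ) δ := ⟨ht.1, ht.2.trans (min_le_right _ _)⟩
      have htε : t ∈ Ioc (0:ℝ) ε := ⟨ht.1, ht.2.trans (min_le_left _ _)⟩
      rw [hFnorm t htδ]
      have h1 : t ^ (-Q) * f₀ t ≤ t ^ (-Q) * t ^ (Q - r) :=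
        mul_le_mul_of_nonneg_left (hbound0 t htε) (Real.rpow_nonneg ht.1.le _)
      have h2 : t ^ (-Q) * t ^ (Q - r) = t ^ (-r) := by
        rw [← Real.rpow_add ht.1]
        congr 1
        ring
      rw [h2] at h1
      calc t ^ (-Q) * f₀ t ≤ t ^ (-r) := h1
        _ ≤ 1 * ‖t ^ (-r)‖ := by
            rw [one_mul, Real.norm_eq_abs, abs_of_nonneg (Real.rpow_nonneg ht.1.le _)]
    -- mellin results
    have hsa : s.re < s.re + 1 := lt_add_one _
    have hmc : MellinConvergent F s :=
      mellinConvergent_of_isBigO_rpow hFloc hFtop hsa hFbot hrs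
    have hdiff : DifferentiableAt ℂ (mellin F) s :=
      mellin_differentiableAt_of_isBigO_rpow hFloc hFtop hsa hFbot hrs
    -- pointwise identification on (0, δ]
    have hptwise : ∀ z : ℂ, ∀ t ∈ Ioc (0:ℝ) δ,
        (t : ℂ) ^ (z - 1) • F t = (t : ℂ) ^ (z - (Q : ℂ) - 1) * ((f₀ t : ℝ) : ℂ) := by
      intro z t ht
      rw [hFval t ht, smul_eq_mul]
      have ht0 : (t : ℂ) ≠ 0 := by exact_mod_cast ht.1.ne'
      rw [Complex.ofReal_mul, Complex.ofReal_cpow ht.1.le]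
      push_cast
      rw [← mul_assoc, ← Complex.cpow_add _ _ ht0]
      ring_nf
    -- integrability
    have hIoc : IntegrableOn (fun t : ℝ => (t : ℂ) ^ (s - 1) • F t) (Ioc (0:ℝ) δ) volume :=
      hmc.mono_set Ioc_subset_Ioi_self
    constructor
    · exact hIoc.congr_fun (fun t ht => hptwise s t ht) measurableSet_Ioc
    · have heq : (fun z : ℂ => ∫ t in Ioc (0:ℝ) δ,
          (t : ℂ) ^ (z - (Q : ℂ) - 1) * ((μ (cthickening t A)).toReal : ℂ)) = mellin F := by
        funext z
        rw [mellin]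
        have hind : ∀ t : ℝ, (t : ℂ) ^ (z - 1) • F t
            = (Ioc (0:ℝ) δ).indicator
              (fun t => (t : ℂ) ^ (z - 1) • ((t ^ (-Q) * f₀ t : ℝ) : ℂ)) t := by
          intro t
          by_cases h : t ∈ Ioc (0:ℝ) δ
          · rw [hFval t h, indicator_of_mem h]
          · rw [hFdef, indicator_of_notMem h, indicator_of_notMem h, smul_zero]
        simp_rw [hind]
        rw [setIntegral_indicator measurableSet_Ioc,
          inter_eq_right.mpr Ioc_subset_Ioi_self]
        refine (setIntegral_congr_fun measurableSet_Ioc fun t ht => ?_).symm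
        have := hptwise z t ht
        rw [hFval t ht] at this
        exact this
      rw [heq]
      exact hdiff

end
end

section
/- Let (X, d, μ) be an Ahlfors regular metric measure space of dimension Q, let Ω be an open subset of X with μ(Ω) < ∞, and let A ⊆ X be nonempty with Ω ⊆ A_δ for some δ > 0. Then the relative distance zeta function ζ_A(s, Ω) = ∫_Ω d(x,A)^{s−Q} dμ(x) is holomorphic on the open half-plane { s ∈ ℂ : Re s > dim̄_B(A, Ω) }, and for every s in this half-plane its complex derivative is ζ_A′(s, Ω) = ∫_Ω d(x,A)^{s−Q} log d(x,A) dμ(x). -/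
open MeasureTheory Metric Filter Set Topology ENNReal

noncomputable section

/-- The upper `r`-dimensional Minkowski content of `A` relative to `Ω`:
`M^{*r}(A, Ω) = limsup_{t→0⁺} μ(A_t ∩ Ω) / t^(Q-r)`. -/
def uContentRel {X : Type*} [MetricSpace X] [MeasurableSpace X] (μ : Measure X)
    (Q r : ℝ) (A Ω : Set X) : ℝ≥0∞ :=
  Filter.limsup (fun t : ℝ => μ (cthickening t A ∩ Ω) / ENNReal.ofReal (t ^ (Q - r)))
    (𝓝[>] 0)

/-- The lower `r`-dimensional Minkowski content of `A` relative to `Ω`. -/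
def lContentRel {X : Type*} [MetricSpace X] [MeasurableSpace X] (μ : Measure X)
    (Q r : ℝ) (A Ω : Set X) : ℝ≥0∞ :=
  Filter.liminf (fun t : ℝ => μ (cthickening t A ∩ Ω) / ENNReal.ofReal (t ^ (Q - r)))
    (𝓝[>] 0)

/-- The relative upper Minkowski dimension `dim̄_B(A, Ω) = inf { r : M^{*r}(A, Ω) = 0 }`. -/
def uDimRel {X : Type*} [MetricSpace X] [MeasurableSpace X] (μ : Measure X)
    (Q : ℝ) (A Ω : Set X) : ℝ :=
  sInf {r : ℝ | uContentRel μ Q r A Ω = 0}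

/-- The relative lower Minkowski dimension. -/
def lDimRel {X : Type*} [MetricSpace X] [MeasurableSpace X] (μ : Measure X)
    (Q : ℝ) (A Ω : Set X) : ℝ :=
  sInf {r : ℝ | lContentRel μ Q r A Ω = 0}

private lemma aux_cthick_mem {X : Type*} [MetricSpace X] {A : Set X} (hne : A.Nonempty)
    {x : X} {t : ℝ} (ht : 0 ≤ t) : x ∈ cthickening t A ↔ infDist x A ≤ t := by
  rw [Metric.mem_cthickening_iff]
  exact ENNReal.le_ofReal_iff_toReal_le (Metric.infEdist_ne_top hne) ht

private lemma rpow_sandwich {d a a₁ a₂ : ℝ} (hd : 0 < d) (h1 : a₁ ≤ a) (h2 : a ≤ a₂) :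
    d ^ a ≤ d ^ a₁ + d ^ a₂ := by
  rcases le_or_gt d 1 with h | h
  · exact le_add_of_le_of_nonneg (Real.rpow_le_rpow_of_exponent_ge hd h h1)
      (Real.rpow_nonneg hd.le _)
  · exact le_add_of_nonneg_of_le (Real.rpow_nonneg hd.le _)
      (Real.rpow_le_rpow_of_exponent_le h.le h2)

private lemma abs_log_le_aux {y : ℝ} (hy : 0 < y) : |Real.log y| ≤ y + y⁻¹ := by
  rcases le_or_gt 1 y with h | h
  · rw [abs_of_nonneg (Real.log_nonneg h)]
    have h1 := Real.log_le_sub_one_of_pos hy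
    have h2 : (0:ℝ) ≤ y⁻¹ := inv_nonneg.mpr hy.le
    linarith
  · rw [abs_of_nonpos (Real.log_nonpos hy.le h.le)]
    have h1 := Real.log_le_sub_one_of_pos (inv_pos.mpr hy)
    rw [Real.log_inv] at h1
    linarith

private lemma abs_log_le_s16 {d ε : ℝ} (hd : 0 < d) (hε : 0 < ε) :
    |Real.log d| ≤ ε⁻¹ * (d ^ ε + d ^ (-ε)) := by
  have hde : 0 < d ^ ε := Real.rpow_pos_of_pos hd ε
  have e1 : |Real.log d| = ε⁻¹ * |Real.log (d ^ ε)| := by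
    rw [Real.log_rpow hd, abs_mul, abs_of_pos hε]
    field_simp
  rw [e1, Real.rpow_neg hd.le]
  exact mul_le_mul_of_nonneg_left (abs_log_le_aux hde) (inv_nonneg.mpr hε.le)

/-- Key integrability lemma: if `μ (A_t ∩ Ω) ≤ t^(Q-r)` for small `t > 0`, and the distance
to `A` is bounded by `δ` on `Ω`, then `x ↦ d(x,A)^e` is integrable on `Ω` for `e > r - Q`. -/
private lemma key_int {X : Type*} [MetricSpace X] [MeasurableSpace X] [BorelSpace X]
    (μ : Measure X) {Q : ℝ} (A Ω : Set X) (hΩmeas : MeasurableSet Ω) (hΩfin : μ Ω < ⊤)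
    (hne : A.Nonempty) {δ : ℝ} (hδ : 0 < δ) (hΩA : ∀ x ∈ Ω, infDist x A ≤ δ)
    {r t₀ : ℝ} (ht₀ : 0 < t₀)
    (hbd : ∀ t : ℝ, 0 < t → t ≤ t₀ → μ (cthickening t A ∩ Ω) ≤ ENNReal.ofReal (t ^ (Q - r)))
    {e : ℝ} (hre : r - Q < e) :
    IntegrableOn (fun x => infDist x A ^ e) Ω μ := by
  classical
  have hd_meas : Measurable (fun x : X => infDist x A) := (continuous_infDist_pt A).measurable
  have hf_meas : Measurable (fun x : X => infDist x A ^ e) := hd_meas.pow measurable_const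
  have hdnn : ∀ x : X, (0:ℝ) ≤ infDist x A := fun x => infDist_nonneg
  refine ⟨hf_meas.aestronglyMeasurable, ?_⟩
  rw [hasFiniteIntegral_iff_ofReal (ae_of_all _ fun x => Real.rpow_nonneg (hdnn x) _)]
  rcases le_or_gt 0 e with he | he
  · -- bounded case
    calc ∫⁻ x in Ω, ENNReal.ofReal (infDist x A ^ e) ∂μ
        ≤ ∫⁻ _ in Ω, ENNReal.ofReal (δ ^ e) ∂μ := by
          refine setLIntegral_mono' hΩmeas fun x hx => ENNReal.ofReal_le_ofReal ?_
          exact Real.rpow_le_rpow (hdnn x) (hΩA x hx) he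
      _ = ENNReal.ofReal (δ ^ e) * μ Ω := setLIntegral_const _ _
      _ < ⊤ := ENNReal.mul_lt_top ENNReal.ofReal_lt_top hΩfin
  · -- dyadic decomposition
    set b : ℝ := 1/2 with hbdef
    have hb0 : (0:ℝ) < b := by norm_num
    have hb1 : b < 1 := by norm_num
    set t : ℕ → ℝ := fun n => t₀ * b ^ n with htdef
    have htpos : ∀ n, 0 < t n := fun n => mul_pos ht₀ (pow_pos hb0 n)
    have htle : ∀ n, t n ≤ t₀ := by
      intro n
      have : b ^ n ≤ 1 := pow_le_one₀ hb0.le hb1.le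
      calc t n = t₀ * b ^ n := rfl
        _ ≤ t₀ * 1 := mul_le_mul_of_nonneg_left this ht₀.le
        _ = t₀ := mul_one _
    set E : ℕ → Set X := fun n =>
      Ω ∩ {x : X | t (n+1) < infDist x A ∧ infDist x A ≤ t n} with hEdef
    set E0 : Set X := Ω ∩ {x : X | t₀ < infDist x A ∨ infDist x A = 0} with hE0def
    have hEmeas : ∀ n, MeasurableSet (E n) := fun n =>
      hΩmeas.inter ((measurableSet_lt measurable_const hd_meas).inter
        (measurableSet_le hd_meas measurable_const))
    have hcover : Ω ⊆ E0 ∪ ⋃ n, E n := by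
      intro x hx
      rcases eq_or_lt_of_le (hdnn x) with h0 | hpos
      · exact Or.inl ⟨hx, Or.inr h0.symm⟩
      rcases lt_or_ge t₀ (infDist x A) with hbig | hle
      · exact Or.inl ⟨hx, Or.inl hbig⟩
      have hex : ∃ n : ℕ, t n < infDist x A := by
        obtain ⟨n, hn⟩ := exists_pow_lt_of_lt_one (div_pos hpos ht₀) hb1
        refine ⟨n, ?_⟩
        have := (lt_div_iff₀ ht₀).mp hn
        calc t n = b ^ n * t₀ := mul_comm _ _
          _ < infDist x A := this
      have hm := Nat.find_spec hex
      have hm0 : Nat.find hex ≠ 0 := by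
        intro h
        rw [h] at hm
        simp only [htdef, pow_zero, mul_one] at hm
        exact absurd hm (not_lt.mpr hle)
      obtain ⟨k, hk⟩ := Nat.exists_eq_succ_of_ne_zero hm0
      have hnotlt : ¬ t k < infDist x A := Nat.find_min hex (by omega)
      refine Or.inr (Set.mem_iUnion.mpr ⟨k, hx, ?_, not_lt.mp hnotlt⟩)
      rw [hk] at hm
      exact hm
    have hle_e : e ≤ 0 := he.le
    have heQ : 0 < Q - r + e := by linarith
    -- bound the integral over E0
    have hE0bound : ∫⁻ x in E0, ENNReal.ofReal (infDist x A ^ e) ∂μ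
        ≤ ENNReal.ofReal (t₀ ^ e) * μ Ω := by
      have h1 : ∫⁻ x in E0, ENNReal.ofReal (infDist x A ^ e) ∂μ
          ≤ ∫⁻ _ in E0, ENNReal.ofReal (t₀ ^ e) ∂μ := by
        refine setLIntegral_mono' (hΩmeas.inter
          ((measurableSet_lt measurable_const hd_meas).union
            (hd_meas (measurableSet_singleton 0)))) fun x hx => ENNReal.ofReal_le_ofReal ?_
        rcases hx.2 with hbig | hzero
        · exact Real.rpow_le_rpow_of_nonpos ht₀ hbig.le hle_e
        · rw [hzero, Real.zero_rpow (by linarith : e ≠ 0)]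
          exact Real.rpow_nonneg ht₀.le _
      refine h1.trans ?_
      rw [setLIntegral_const]
      exact mul_le_mul_right (measure_mono Set.inter_subset_left) _
    -- bound on each annulus
    set g : ℕ → ℝ := fun n => t (n+1) ^ e * t n ^ (Q - r) with hgdef
    have hgnn : ∀ n, 0 ≤ g n := fun n =>
      mul_nonneg (Real.rpow_nonneg (htpos _).le _) (Real.rpow_nonneg (htpos _).le _)
    have hEn : ∀ n, ∫⁻ x in E n, ENNReal.ofReal (infDist x A ^ e) ∂μ
        ≤ ENNReal.ofReal (g n) := by
      intro n
      have h1 : ∫⁻ x in E n, ENNReal.ofReal (infDist x A ^ e) ∂μ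
          ≤ ∫⁻ _ in E n, ENNReal.ofReal (t (n+1) ^ e) ∂μ := by
        refine setLIntegral_mono' (hEmeas n) fun x hx => ENNReal.ofReal_le_ofReal ?_
        exact Real.rpow_le_rpow_of_nonpos (htpos (n+1)) hx.2.1.le hle_e
      have h2 : μ (E n) ≤ ENNReal.ofReal (t n ^ (Q - r)) := by
        refine le_trans (measure_mono ?_) (hbd (t n) (htpos n) (htle n))
        intro x hx
        exact ⟨(aux_cthick_mem hne (htpos n).le).mpr hx.2.2, hx.1⟩
      calc ∫⁻ x in E n, ENNReal.ofReal (infDist x A ^ e) ∂μ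
          ≤ ∫⁻ _ in E n, ENNReal.ofReal (t (n+1) ^ e) ∂μ := h1
        _ = ENNReal.ofReal (t (n+1) ^ e) * μ (E n) := setLIntegral_const _ _
        _ ≤ ENNReal.ofReal (t (n+1) ^ e) * ENNReal.ofReal (t n ^ (Q - r)) :=
            mul_le_mul_right h2 _
        _ = ENNReal.ofReal (g n) :=
            (ENNReal.ofReal_mul (Real.rpow_nonneg (htpos _).le _)).symm
    -- geometric series
    have hgeq : ∀ n, g n = (t₀ ^ (e + (Q - r)) * b ^ e) * (b ^ (e + (Q - r))) ^ n := by
      intro n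
      have hrw : ∀ (c : ℝ) (m : ℕ), t m ^ c = t₀ ^ c * b ^ ((m:ℝ) * c) := by
        intro c m
        calc t m ^ c = (t₀ * b ^ m) ^ c := rfl
          _ = t₀ ^ c * (b ^ m) ^ c :=
              Real.mul_rpow ht₀.le (pow_nonneg hb0.le m)
          _ = t₀ ^ c * (b ^ (m:ℝ)) ^ c := by rw [Real.rpow_natCast]
          _ = t₀ ^ c * b ^ ((m:ℝ) * c) := by rw [← Real.rpow_mul hb0.le]
      have hb' : ∀ u v : ℝ, b ^ u * b ^ v = b ^ (u + v) := fun u v =>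
        (Real.rpow_add hb0 u v).symm
      have ht' : ∀ u v : ℝ, t₀ ^ u * t₀ ^ v = t₀ ^ (u + v) := fun u v =>
        (Real.rpow_add ht₀ u v).symm
      have hpowrw : (b ^ (e + (Q - r))) ^ n = b ^ ((e + (Q - r)) * (n:ℝ)) := by
        rw [← Real.rpow_natCast (b ^ (e + (Q - r))) n, ← Real.rpow_mul hb0.le]
      rw [hgdef]
      simp only
      rw [hrw e (n+1), hrw (Q - r) n, hpowrw]
      have hcast : ((n+1 : ℕ) : ℝ) = (n:ℝ) + 1 := by push_cast; ring
      rw [hcast]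
      rw [mul_mul_mul_comm, ht', hb', mul_assoc, hb' e ((e + (Q - r)) * (n:ℝ))]
      congr 1
      ring
    have hsum : Summable g := by
      have ha0 : (0:ℝ) ≤ b ^ (e + (Q - r)) := Real.rpow_nonneg hb0.le _
      have ha1 : b ^ (e + (Q - r)) < 1 :=
        Real.rpow_lt_one hb0.le hb1 (by linarith)
      have := (summable_geometric_of_lt_one ha0 ha1).mul_left (t₀ ^ (e + (Q - r)) * b ^ e)
      exact this.congr fun n => (hgeq n).symm
    -- put it together
    calc ∫⁻ x in Ω, ENNReal.ofReal (infDist x A ^ e) ∂μ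
        ≤ ∫⁻ x in E0 ∪ ⋃ n, E n, ENNReal.ofReal (infDist x A ^ e) ∂μ :=
          lintegral_mono_set hcover
      _ ≤ (∫⁻ x in E0, ENNReal.ofReal (infDist x A ^ e) ∂μ)
          + ∫⁻ x in ⋃ n, E n, ENNReal.ofReal (infDist x A ^ e) ∂μ :=
          lintegral_union_le _ _ _
      _ ≤ ENNReal.ofReal (t₀ ^ e) * μ Ω + ∑' n, ∫⁻ x in E n,
            ENNReal.ofReal (infDist x A ^ e) ∂μ :=
          add_le_add hE0bound (lintegral_iUnion_le _ _)
      _ ≤ ENNReal.ofReal (t₀ ^ e) * μ Ω + ∑' n, ENNReal.ofReal (g n) :=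
          add_le_add_right (ENNReal.tsum_le_tsum hEn) _
      _ = ENNReal.ofReal (t₀ ^ e) * μ Ω + ENNReal.ofReal (∑' n, g n) := by
          rw [ENNReal.ofReal_tsum_of_nonneg hgnn hsum]
      _ < ⊤ := ENNReal.add_lt_top.mpr
          ⟨ENNReal.mul_lt_top ENNReal.ofReal_lt_top hΩfin, ENNReal.ofReal_lt_top⟩

/-- The relative distance zeta function `ζ_A(s, Ω) = ∫_Ω d(x,A)^(s-Q) dμ(x)` of a
relative fractal drum `(A, Ω)` is holomorphic on `{ Re s > dim̄_B(A, Ω) }` with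
derivative `∫_Ω d(x,A)^(s-Q) log d(x,A) dμ(x)`. -/
theorem stmt16 {X : Type*} [MetricSpace X] [MeasurableSpace X] [BorelSpace X]
    (μ : Measure X) (Q K : ℝ) (hQ : 0 < Q) (hreg : IsAhlfors μ Q K)
    (Ω : Set X) (hΩopen : IsOpen Ω) (hΩfin : μ Ω < ⊤)
    (A : Set X) (hne : A.Nonempty)
    (δ : ℝ) (hδ : 0 < δ) (hΩA : Ω ⊆ cthickening δ A)
    (s : ℂ) (hs : uDimRel μ Q A Ω < s.re) :
    HasDerivAt
      (fun z : ℂ => ∫ x in Ω, (infDist x A : ℂ) ^ (z - (Q : ℂ)) ∂μ)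
      (∫ x in Ω, (infDist x A : ℂ) ^ (s - (Q : ℂ)) * (Real.log (infDist x A) : ℂ) ∂μ)
      s := by
  classical
  have hd_meas : Measurable (fun x : X => infDist x A) := (continuous_infDist_pt A).measurable
  have hdnn : ∀ x : X, (0:ℝ) ≤ infDist x A := fun x => infDist_nonneg
  have hΩmeas : MeasurableSet Ω := hΩopen.measurableSet
  have hdle : ∀ x ∈ Ω, infDist x A ≤ δ := fun x hx =>
    (aux_cthick_mem hne hδ.le).mp (hΩA hx)
  -- the set of exponents with vanishing upper content is nonempty
  have hSmem : uContentRel μ Q (Q+1) A Ω = 0 := by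
    have hfun : ∀ᶠ t in 𝓝[>] (0:ℝ),
        μ (cthickening t A ∩ Ω) / ENNReal.ofReal (t ^ (Q - (Q+1)))
          ≤ μ Ω * ENNReal.ofReal t := by
      filter_upwards [self_mem_nhdsWithin] with t ht
      have ht0 : (0:ℝ) < t := ht
      have hre : t ^ (Q - (Q+1)) = t⁻¹ := by
        rw [show Q - (Q+1) = -1 by ring, Real.rpow_neg_one]
      rw [hre, ENNReal.ofReal_inv_of_pos ht0, div_eq_mul_inv, inv_inv]
      exact mul_le_mul_left (measure_mono Set.inter_subset_right) _
    have htend : Tendsto (fun t : ℝ => μ Ω * ENNReal.ofReal t) (𝓝[>] (0:ℝ)) (𝓝 0) := by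
      have h1 : Tendsto (fun t : ℝ => ENNReal.ofReal t) (𝓝[>] (0:ℝ)) (𝓝 0) := by
        have := (ENNReal.continuous_ofReal.tendsto 0)
        rw [ENNReal.ofReal_zero] at this
        exact this.mono_left nhdsWithin_le_nhds
      have h2 := ENNReal.Tendsto.const_mul h1 (Or.inr hΩfin.ne)
      rw [mul_zero] at h2
      exact h2
    have hls : uContentRel μ Q (Q+1) A Ω ≤ 0 := by
      rw [uContentRel]
      calc Filter.limsup
            (fun t : ℝ => μ (cthickening t A ∩ Ω) / ENNReal.ofReal (t ^ (Q - (Q+1))))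
            (𝓝[>] (0:ℝ))
          ≤ Filter.limsup (fun t : ℝ => μ Ω * ENNReal.ofReal t) (𝓝[>] (0:ℝ)) :=
            Filter.limsup_le_limsup hfun
        _ = 0 := htend.limsup_eq
    exact le_antisymm hls zero_le
  -- choose an exponent r with vanishing content and r < Re s
  obtain ⟨r, hrS, hrs⟩ : ∃ r, uContentRel μ Q r A Ω = 0 ∧ r < s.re := by
    by_contra hcon
    push_neg at hcon
    have hlb : s.re ≤ uDimRel μ Q A Ω := by
      refine le_csInf ⟨Q+1, hSmem⟩ fun x hx => hcon x hx
    exact absurd hs (not_lt.mpr hlb)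
  -- small-scale measure bound
  obtain ⟨t₀, ht₀pos, hbd⟩ : ∃ t₀, 0 < t₀ ∧ ∀ t, 0 < t → t ≤ t₀ →
      μ (cthickening t A ∩ Ω) ≤ ENNReal.ofReal (t ^ (Q - r)) := by
    have h1 : ∀ᶠ t in 𝓝[>] (0:ℝ),
        μ (cthickening t A ∩ Ω) / ENNReal.ofReal (t ^ (Q - r)) < 1 := by
      refine eventually_lt_of_limsup_lt ?_
      rw [show Filter.limsup
          (fun t : ℝ => μ (cthickening t A ∩ Ω) / ENNReal.ofReal (t ^ (Q - r)))
          (𝓝[>] (0:ℝ)) = uContentRel μ Q r A Ω from rfl, hrS]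
      exact zero_lt_one
    obtain ⟨u, hu, hsub⟩ := mem_nhdsGT_iff_exists_Ioc_subset.mp h1
    refine ⟨u, hu, fun t ht htu => ?_⟩
    have hlt : μ (cthickening t A ∩ Ω) / ENNReal.ofReal (t ^ (Q - r)) < 1 :=
      hsub ⟨ht, htu⟩
    have hb0 : ENNReal.ofReal (t ^ (Q - r)) ≠ 0 := by
      rw [ne_eq, ENNReal.ofReal_eq_zero, not_le]
      exact Real.rpow_pos_of_pos ht _
    have hbt : ENNReal.ofReal (t ^ (Q - r)) ≠ ⊤ := ENNReal.ofReal_ne_top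
    calc μ (cthickening t A ∩ Ω)
        = μ (cthickening t A ∩ Ω) / ENNReal.ofReal (t ^ (Q - r))
          * ENNReal.ofReal (t ^ (Q - r)) := (ENNReal.div_mul_cancel hb0 hbt).symm
      _ ≤ 1 * ENNReal.ofReal (t ^ (Q - r)) := mul_le_mul_left hlt.le _
      _ = ENNReal.ofReal (t ^ (Q - r)) := one_mul _
  set ε : ℝ := (s.re - r)/3 with hεdef
  have hεpos : 0 < ε := by rw [hεdef]; linarith
  set σ₁ : ℝ := s.re - ε with hσ₁
  set σ₂ : ℝ := s.re + ε with hσ₂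
  -- the four integrability exponents
  have hint : ∀ {c : ℝ}, r - Q < c → IntegrableOn (fun x => infDist x A ^ c) Ω μ :=
    fun hc => key_int μ A Ω hΩmeas hΩfin hne hδ hdle ht₀pos hbd hc
  have hint1 : IntegrableOn (fun x => infDist x A ^ (σ₁ - Q + ε)) Ω μ :=
    hint (by rw [hσ₁, hεdef]; linarith)
  have hint2 : IntegrableOn (fun x => infDist x A ^ (σ₁ - Q + -ε)) Ω μ :=
    hint (by rw [hσ₁, hεdef]; linarith)
  have hint3 : IntegrableOn (fun x => infDist x A ^ (σ₂ - Q + ε)) Ω μ :=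
    hint (by rw [hσ₂, hεdef]; linarith)
  have hint4 : IntegrableOn (fun x => infDist x A ^ (σ₂ - Q + -ε)) Ω μ :=
    hint (by rw [hσ₂, hεdef]; linarith)
  have hintσ₁ : IntegrableOn (fun x => infDist x A ^ (σ₁ - Q)) Ω μ :=
    hint (by rw [hσ₁, hεdef]; linarith)
  have hintσ₂ : IntegrableOn (fun x => infDist x A ^ (σ₂ - Q)) Ω μ :=
    hint (by rw [hσ₂, hεdef]; linarith)
  -- the a.e. dichotomy at distance zero
  have hd0ae : ∀ᵐ x ∂(μ.restrict Ω), infDist x A = 0 → Q < σ₁ - ε := by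
    rcases le_or_gt Q r with hQr | hrQ
    · refine ae_of_all _ fun x _ => ?_
      rw [hσ₁, hεdef]; linarith
    · have hN : μ.restrict Ω {x : X | infDist x A = 0} = 0 := by
        rw [Measure.restrict_apply' hΩmeas]
        have hub : ∀ n : ℕ, μ ({x : X | infDist x A = 0} ∩ Ω)
            ≤ ENNReal.ofReal ((t₀ * (1/2:ℝ) ^ n) ^ (Q - r)) := by
          intro n
          have hun : 0 < t₀ * (1/2:ℝ) ^ n := mul_pos ht₀pos (pow_pos (by norm_num) n)
          have hule : t₀ * (1/2:ℝ) ^ n ≤ t₀ := by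
            have h1 : (1/2:ℝ) ^ n ≤ 1 := pow_le_one₀ (by norm_num) (by norm_num)
            calc t₀ * (1/2:ℝ) ^ n ≤ t₀ * 1 := mul_le_mul_of_nonneg_left h1 ht₀pos.le
              _ = t₀ := mul_one _
          refine le_trans (measure_mono ?_) (hbd _ hun hule)
          intro x hx
          refine ⟨(aux_cthick_mem hne hun.le).mpr ?_, hx.2⟩
          rw [hx.1]
          exact hun.le
        have htends : Tendsto (fun n : ℕ => ENNReal.ofReal ((t₀ * (1/2:ℝ) ^ n) ^ (Q - r)))
            atTop (𝓝 0) := by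
          have h1 : Tendsto (fun n : ℕ => t₀ * (1/2:ℝ) ^ n) atTop (𝓝 0) := by
            have := (tendsto_pow_atTop_nhds_zero_of_lt_one (by norm_num : (0:ℝ) ≤ 1/2)
              (by norm_num : (1/2:ℝ) < 1)).const_mul t₀
            rwa [mul_zero] at this
          have h2 : ContinuousAt (fun x : ℝ => x ^ (Q - r)) 0 :=
            Real.continuousAt_rpow_const 0 (Q - r) (Or.inr (by linarith))
          have h3 := (h2.tendsto.comp h1)
          rw [Real.zero_rpow (by linarith : Q - r ≠ 0)] at h3
          have h4 := (ENNReal.continuous_ofReal.tendsto 0).comp h3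
          rwa [ENNReal.ofReal_zero] at h4
        have := ge_of_tendsto' htends hub
        exact le_antisymm this zero_le
      have hae : ∀ᵐ x ∂(μ.restrict Ω), infDist x A ≠ 0 := by
        rw [ae_iff]
        simpa using hN
      exact hae.mono fun x hx h0 => absurd h0 hx
  -- apply differentiation under the integral sign
  have main := hasDerivAt_integral_of_dominated_loc_of_deriv_le (μ := μ.restrict Ω)
    (F := fun z x => (infDist x A : ℂ) ^ (z - (Q : ℂ)))
    (F' := fun z x => (infDist x A : ℂ) ^ (z - (Q : ℂ)) * (Real.log (infDist x A) : ℂ))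
    (bound := fun x => ε⁻¹ * ((infDist x A ^ (σ₁ - Q + ε) + infDist x A ^ (σ₁ - Q + -ε))
      + (infDist x A ^ (σ₂ - Q + ε) + infDist x A ^ (σ₂ - Q + -ε))))
    (x₀ := s) (ball_mem_nhds s hεpos)
    (Filter.Eventually.of_forall fun z =>
      ((Complex.measurable_ofReal.comp hd_meas).pow measurable_const).aestronglyMeasurable)
    ?hFint
    (((Complex.measurable_ofReal.comp hd_meas).pow measurable_const).mul
      (Complex.measurable_ofReal.comp (Real.measurable_log.comp hd_meas))).aestronglyMeasurable
    ?hbound ?boundint ?hdiff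
  case hFint =>
    refine (hintσ₁.add hintσ₂).mono'
      ((Complex.measurable_ofReal.comp hd_meas).pow measurable_const).aestronglyMeasurable ?_
    filter_upwards [hd0ae] with x hx
    rcases eq_or_lt_of_le (hdnn x) with h0 | hpos
    · have hQs : Q < s.re := by
        have := hx h0.symm
        rw [hσ₁, hεdef] at this
        linarith
      have hsQ : s - (Q:ℂ) ≠ 0 := by
        intro hcontra
        have : s.re - Q = 0 := by
          have := congrArg Complex.re hcontra
          simpa [Complex.sub_re] using this
        linarith
      rw [← h0]
      push_cast
      rw [Complex.zero_cpow hsQ, norm_zero]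
      simp only [Pi.add_apply]
      exact add_nonneg (Real.rpow_nonneg (hdnn x) _) (Real.rpow_nonneg (hdnn x) _)
    · have hnorm : ‖(infDist x A : ℂ) ^ (s - (Q:ℂ))‖ = infDist x A ^ (s.re - Q) := by
        rw [Complex.norm_cpow_eq_rpow_re_of_pos hpos]
        simp [Complex.sub_re]
      rw [hnorm]
      simp only [Pi.add_apply]
      exact rpow_sandwich hpos (by rw [hσ₁]; linarith) (by rw [hσ₂]; linarith)
  case hbound =>
    refine ae_of_all _ fun x z hz => ?_
    beta_reduce
    rcases eq_or_lt_of_le (hdnn x) with h0 | hpos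
    · have hzero : (infDist x A : ℂ) ^ (z - (Q:ℂ)) * (Real.log (infDist x A) : ℂ) = 0 := by
        rw [← h0, Real.log_zero]
        simp
      rw [hzero, norm_zero]
      positivity
    · have hzre : σ₁ - Q ≤ (z - (Q:ℂ)).re ∧ (z - (Q:ℂ)).re ≤ σ₂ - Q := by
        have habs : |z.re - s.re| < ε := by
          have h1 : |(z - s).re| ≤ ‖z - s‖ := Complex.abs_re_le_norm _
          have h2 : ‖z - s‖ < ε := by
            rw [← Complex.dist_eq]
            exact mem_ball.mp hz
          simp only [Complex.sub_re] at h1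
          linarith
        obtain ⟨ha, hb⟩ := abs_lt.mp habs
        constructor <;> simp only [Complex.sub_re, Complex.ofReal_re, hσ₁, hσ₂] <;> linarith
      have hnorm : ‖(infDist x A : ℂ) ^ (z - (Q:ℂ)) * (Real.log (infDist x A) : ℂ)‖
          = infDist x A ^ ((z - (Q:ℂ)).re) * |Real.log (infDist x A)| := by
        rw [norm_mul, Complex.norm_cpow_eq_rpow_re_of_pos hpos,
          Complex.norm_real, Real.norm_eq_abs]
      rw [hnorm]
      have hstep : infDist x A ^ ((z - (Q:ℂ)).re) * |Real.log (infDist x A)|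
          ≤ (infDist x A ^ (σ₁ - Q) + infDist x A ^ (σ₂ - Q))
            * (ε⁻¹ * (infDist x A ^ ε + infDist x A ^ (-ε))) := by
        refine mul_le_mul (rpow_sandwich hpos hzre.1 hzre.2)
          (abs_log_le_s16 hpos hεpos) (abs_nonneg _) ?_
        positivity
      refine hstep.trans_eq ?_
      have hexp : (infDist x A ^ (σ₁ - Q) + infDist x A ^ (σ₂ - Q))
          * (ε⁻¹ * (infDist x A ^ ε + infDist x A ^ (-ε)))
          = ε⁻¹ * ((infDist x A ^ (σ₁ - Q) * infDist x A ^ ε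
              + infDist x A ^ (σ₁ - Q) * infDist x A ^ (-ε))
            + (infDist x A ^ (σ₂ - Q) * infDist x A ^ ε
              + infDist x A ^ (σ₂ - Q) * infDist x A ^ (-ε))) := by ring
      rw [hexp, ← Real.rpow_add hpos, ← Real.rpow_add hpos, ← Real.rpow_add hpos,
        ← Real.rpow_add hpos]
  case boundint =>
    exact (((hint1.add hint2).add (hint3.add hint4)).const_mul ε⁻¹ : )
  case hdiff =>
    filter_upwards [hd0ae] with x hx z hz
    beta_reduce
    rcases eq_or_lt_of_le (hdnn x) with h0 | hpos
    · have hQσ : Q < σ₁ - ε := hx h0.symm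
      have hzre : Q < z.re := by
        have habs : |z.re - s.re| < ε := by
          have h1 : |(z - s).re| ≤ ‖z - s‖ := Complex.abs_re_le_norm _
          have h2 : ‖z - s‖ < ε := by
            rw [← Complex.dist_eq]
            exact mem_ball.mp hz
          simp only [Complex.sub_re] at h1
          linarith
        rw [hσ₁] at hQσ
        have := abs_lt.mp habs
        linarith [this.1]
      have hz0 : z - (Q:ℂ) ≠ 0 := by
        intro hcontra
        have : z.re - Q = 0 := by
          have := congrArg Complex.re hcontra
          simpa [Complex.sub_re] using this
        linarith
      have hval : (infDist x A : ℂ) ^ (z - (Q:ℂ)) * (Real.log (infDist x A) : ℂ) = 0 := by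
        rw [← h0, Real.log_zero]
        simp
      rw [hval]
      have hev : (fun w : ℂ => (infDist x A : ℂ) ^ (w - (Q:ℂ))) =ᶠ[𝓝 z]
          fun _ => (0:ℂ) := by
        have hopen : IsOpen {w : ℂ | Q < w.re} :=
          isOpen_lt continuous_const Complex.continuous_re
        filter_upwards [hopen.mem_nhds hzre] with w hw
        have hw0 : w - (Q:ℂ) ≠ 0 := by
          intro hcontra
          have : w.re - Q = 0 := by
            have := congrArg Complex.re hcontra
            simpa [Complex.sub_re] using this
          have hw' : Q < w.re := hw
          linarith
        rw [← h0]
        push_cast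
        exact Complex.zero_cpow hw0
      exact (hasDerivAt_const z (0:ℂ)).congr_of_eventuallyEq hev
    · have hne0 : (infDist x A : ℂ) ≠ 0 := by
        simp only [ne_eq, Complex.ofReal_eq_zero]
        exact hpos.ne'
      have hder := ((hasDerivAt_id z).sub_const (Q:ℂ)).const_cpow
        (c := (infDist x A : ℂ)) (Or.inl hne0)
      have hval : (infDist x A : ℂ) ^ (z - (Q:ℂ)) * Complex.log (infDist x A) * 1
          = (infDist x A : ℂ) ^ (z - (Q:ℂ)) * (Real.log (infDist x A) : ℂ) := by
        rw [mul_one, Complex.ofReal_log (hdnn x)]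
      rw [← hval]
      exact hder
  exact main.2


end
end

section
/- Let (X, d, μ) be an Ahlfors regular metric measure space of dimension Q, let Ω be an open subset of X with μ(Ω) < ∞, and let A ⊆ X be nonempty with Ω ⊆ A_δ for some δ > 0. Assume the relative Minkowski dimension D := dim_B(A, Ω) exists (upper and lower relative Minkowski dimensions coincide), D < Q, and the relative lower Minkowski content satisfies M_*^D(A, Ω) > 0. Then the relative distance zeta function ζ_A(s, Ω) = ∫_Ω d(x,A)^{s−Q} dμ(x) tends to +∞ as the real variable s converges to D from the right. -/
open MeasureTheory Metric Filter Set Topology ENNReal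

noncomputable section

namespace Stmt18Aux

/-- Dyadic scales. -/
def tseq (t₀ : ℝ) (k : ℕ) : ℝ := t₀ / 2 ^ k

/-- Telescoping weights for exponent `b`. -/
def wseq (t₀ b : ℝ) : ℕ → ℝ
  | 0 => t₀ ^ b
  | (k + 1) => tseq t₀ (k + 1) ^ b - tseq t₀ k ^ b

variable {t₀ b : ℝ}

lemma tseq_pos (ht : 0 < t₀) (k : ℕ) : 0 < tseq t₀ k :=
  div_pos ht (pow_pos two_pos k)

lemma tseq_anti (ht : 0 < t₀) {j k : ℕ} (h : j ≤ k) : tseq t₀ k ≤ tseq t₀ j :=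
  div_le_div_of_nonneg_left ht.le (pow_pos two_pos j) (pow_le_pow_right₀ one_le_two h)

lemma tseq_le (ht : 0 < t₀) (k : ℕ) : tseq t₀ k ≤ t₀ := by
  have h := tseq_anti (t₀ := t₀) ht (Nat.zero_le k)
  simpa [tseq] using h

lemma tseq_succ (t₀ : ℝ) (k : ℕ) : tseq t₀ k = 2 * tseq t₀ (k + 1) := by
  rw [tseq, tseq, pow_succ]
  field_simp

lemma wseq_sum (m : ℕ) :
    ∑ j ∈ Finset.range (m + 1), wseq t₀ b j = tseq t₀ m ^ b := by
  induction m with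
  | zero => simp [wseq, tseq]
  | succ m ih =>
      rw [Finset.sum_range_succ, ih]
      show tseq t₀ m ^ b + (tseq t₀ (m + 1) ^ b - tseq t₀ m ^ b) = _
      ring

lemma wseq_ge (ht : 0 < t₀) (hb : b ≤ 0) (k : ℕ) :
    (1 - 2 ^ b) * tseq t₀ k ^ b ≤ wseq t₀ b k := by
  have h2b : (2 : ℝ) ^ b ≤ 1 := Real.rpow_le_one_of_one_le_of_nonpos one_le_two hb
  cases k with
  | zero =>
      have h1 : tseq t₀ 0 = t₀ := by simp [tseq]
      show (1 - 2 ^ b) * tseq t₀ 0 ^ b ≤ t₀ ^ b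
      rw [h1]
      nlinarith [Real.rpow_nonneg ht.le b, Real.rpow_nonneg (by norm_num : (0:ℝ) ≤ 2) b]
  | succ k =>
      show (1 - 2 ^ b) * tseq t₀ (k + 1) ^ b ≤ tseq t₀ (k + 1) ^ b - tseq t₀ k ^ b
      have h1 : tseq t₀ k ^ b = 2 ^ b * tseq t₀ (k + 1) ^ b := by
        rw [tseq_succ t₀ k, Real.mul_rpow (by norm_num) (tseq_pos ht (k + 1)).le]
      rw [h1]; ring_nf; exact le_refl _

lemma wseq_nonneg (ht : 0 < t₀) (hb : b ≤ 0) (k : ℕ) : 0 ≤ wseq t₀ b k := by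
  refine le_trans ?_ (wseq_ge ht hb k)
  have h2b : (2 : ℝ) ^ b ≤ 1 := Real.rpow_le_one_of_one_le_of_nonpos one_le_two hb
  exact mul_nonneg (by linarith) (Real.rpow_nonneg (tseq_pos ht k).le b)


lemma mem_cth {X : Type*} [MetricSpace X] {A : Set X} (hne : A.Nonempty) {r : ℝ}
    (hr : 0 ≤ r) {x : X} : x ∈ cthickening r A ↔ infDist x A ≤ r := by
  rw [mem_cthickening_iff, ENNReal.le_ofReal_iff_toReal_le (infEdist_ne_top hne) hr]
  exact Iff.rfl

lemma pointwise_le {X : Type*} [MetricSpace X] {A : Set X} (hne : A.Nonempty)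
    {t₀ b : ℝ} (ht : 0 < t₀) (hb : b ≤ 0) (x : X) :
    ∑' k, (cthickening (tseq t₀ k) A \ closure A).indicator
        (fun _ => ENNReal.ofReal (wseq t₀ b k)) x
      ≤ ENNReal.ofReal (infDist x A) ^ b := by
  classical
  by_cases hx : x ∈ closure A
  · have h0 : ∀ k : ℕ, (cthickening (tseq t₀ k) A \ closure A).indicator
        (fun _ => ENNReal.ofReal (wseq t₀ b k)) x = 0 := fun k =>
      Set.indicator_of_notMem (fun h => h.2 hx) _
    simp only [h0, tsum_zero]
    exact zero_le
  · have hd : 0 < infDist x A := by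
      rcases lt_or_eq_of_le (infDist_nonneg (s := A) (x := x)) with h | h
      · exact h
      · exact absurd ((mem_closure_iff_infDist_zero hne).2 h.symm) hx
    have hmem : ∀ k : ℕ, x ∈ cthickening (tseq t₀ k) A \ closure A ↔
        infDist x A ≤ tseq t₀ k := by
      intro k
      constructor
      · intro h; exact (mem_cth hne (tseq_pos ht k).le).1 h.1
      · intro h; exact ⟨(mem_cth hne (tseq_pos ht k).le).2 h, hx⟩
    have hex : ∃ k : ℕ, tseq t₀ k < infDist x A := by
      obtain ⟨k, hk⟩ := pow_unbounded_of_one_lt (t₀ / infDist x A) (one_lt_two (α := ℝ))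
      refine ⟨k, ?_⟩
      rw [tseq, div_lt_iff₀ (pow_pos two_pos k)]
      rw [div_lt_iff₀ hd] at hk
      nlinarith [hk]
    have hk₁ : tseq t₀ (Nat.find hex) < infDist x A := Nat.find_spec hex
    rcases Nat.eq_zero_or_pos (Nat.find hex) with h0 | hposk
    · have hz : ∀ k : ℕ, (cthickening (tseq t₀ k) A \ closure A).indicator
          (fun _ => ENNReal.ofReal (wseq t₀ b k)) x = 0 := by
        intro k
        apply Set.indicator_of_notMem
        intro hmk
        have h1 : infDist x A ≤ tseq t₀ k := (hmem k).1 hmk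
        have h2 : tseq t₀ k ≤ tseq t₀ 0 := tseq_anti ht (Nat.zero_le k)
        rw [h0] at hk₁
        linarith
      simp only [hz, tsum_zero]
      exact zero_le
    · set m : ℕ := Nat.find hex - 1 with hmdef
      have hm1 : Nat.find hex = m + 1 := by omega
      have hdm : ∀ j : ℕ, j ≤ m → infDist x A ≤ tseq t₀ j := fun j hj =>
        le_of_not_gt (Nat.find_min hex (by omega))
      have hgt : ∀ j : ℕ, m + 1 ≤ j → tseq t₀ j < infDist x A := fun j hj =>
        lt_of_le_of_lt (tseq_anti ht (show Nat.find hex ≤ j by omega)) hk₁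
      calc ∑' k, (cthickening (tseq t₀ k) A \ closure A).indicator
              (fun _ => ENNReal.ofReal (wseq t₀ b k)) x
          = ∑ k ∈ Finset.range (m + 1), (cthickening (tseq t₀ k) A \ closure A).indicator
              (fun _ => ENNReal.ofReal (wseq t₀ b k)) x := by
            refine tsum_eq_sum (fun k hk => ?_)
            apply Set.indicator_of_notMem
            intro hmk
            have h1 : infDist x A ≤ tseq t₀ k := (hmem k).1 hmk
            have h2 := hgt k (by
              have := Finset.mem_range.not.1 hk
              omega)
            linarith
        _ = ∑ k ∈ Finset.range (m + 1), ENNReal.ofReal (wseq t₀ b k) := by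
            refine Finset.sum_congr rfl (fun k hk => ?_)
            exact Set.indicator_of_mem
              ((hmem k).2 (hdm k (Nat.lt_succ_iff.1 (Finset.mem_range.1 hk)))) _
        _ = ENNReal.ofReal (∑ k ∈ Finset.range (m + 1), wseq t₀ b k) :=
            (ENNReal.ofReal_sum_of_nonneg (fun i _ => wseq_nonneg ht hb i)).symm
        _ = ENNReal.ofReal (tseq t₀ m ^ b) := by rw [wseq_sum]
        _ ≤ ENNReal.ofReal (infDist x A ^ b) :=
            ENNReal.ofReal_le_ofReal
              (Real.rpow_le_rpow_of_nonpos hd (hdm m le_rfl) hb)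
        _ = ENNReal.ofReal (infDist x A) ^ b := (ENNReal.ofReal_rpow_of_pos hd).symm

end Stmt18Aux

/-- If the relative Minkowski dimension `D := dim_B(A, Ω)` exists, `D < Q`, and the
relative lower Minkowski content `M_*^D(A, Ω)` is positive, then the relative
distance zeta function `ζ_A(s, Ω)` tends to `+∞` as the real variable `s → D⁺`. -/
theorem stmt18 {X : Type*} [MetricSpace X] [MeasurableSpace X] [BorelSpace X]
    (μ : Measure X) (Q K : ℝ) (hQ : 0 < Q) (hreg : IsAhlfors μ Q K)
    (Ω : Set X) (hΩopen : IsOpen Ω) (hΩfin : μ Ω < ⊤)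
    (A : Set X) (hne : A.Nonempty)
    (δ : ℝ) (hδ : 0 < δ) (hΩA : Ω ⊆ cthickening δ A)
    (hdim : uDimRel μ Q A Ω = lDimRel μ Q A Ω) (hDQ : uDimRel μ Q A Ω < Q)
    (hpos : 0 < lContentRel μ Q (uDimRel μ Q A Ω) A Ω) :
    Tendsto (fun σ : ℝ => ∫⁻ x in Ω, ENNReal.ofReal (infDist x A) ^ (σ - Q) ∂μ)
      (𝓝[>] (uDimRel μ Q A Ω)) (𝓝 ⊤) := by
  classical
  set D := uDimRel μ Q A Ω with hD
  -- Step 1: some exponent r₀ < Q has vanishing relative upper content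
  have hQ1 : uContentRel μ Q (Q + 1) A Ω = 0 := by
    have htend : Tendsto
        (fun t : ℝ => μ (cthickening t A ∩ Ω) / ENNReal.ofReal (t ^ (Q - (Q + 1))))
        (𝓝[>] 0) (𝓝 0) := by
      have hof : Tendsto (fun t : ℝ => ENNReal.ofReal t) (𝓝[>] (0:ℝ)) (𝓝 0) := by
        have := (ENNReal.continuous_ofReal.tendsto 0).mono_left
          (nhdsWithin_le_nhds (s := Set.Ioi (0:ℝ)))
        simpa using this
      have hb : Tendsto (fun t : ℝ => μ Ω * ENNReal.ofReal t) (𝓝[>] (0:ℝ)) (𝓝 0) := by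
        have := ENNReal.Tendsto.const_mul hof (Or.inr hΩfin.ne)
        simpa using this
      apply tendsto_of_tendsto_of_tendsto_of_le_of_le' tendsto_const_nhds hb
      · exact Eventually.of_forall fun t => zero_le
      · filter_upwards [self_mem_nhdsWithin] with t ht
        have htpos : (0:ℝ) < t := ht
        have heq : ENNReal.ofReal (t ^ (Q - (Q + 1))) = (ENNReal.ofReal t)⁻¹ := by
          rw [show Q - (Q + 1) = -1 by ring]
          rw [Real.rpow_neg_one, ENNReal.ofReal_inv_of_pos htpos]
        rw [heq, div_eq_mul_inv, inv_inv]
        exact mul_le_mul_left (measure_mono inter_subset_right) _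
    exact htend.limsup_eq
  have hDQ' : sInf {r : ℝ | uContentRel μ Q r A Ω = 0} < Q := hDQ
  obtain ⟨r₀, hr₀mem, hr₀Q⟩ :=
    exists_lt_of_csInf_lt (s := {r : ℝ | uContentRel μ Q r A Ω = 0}) ⟨Q + 1, hQ1⟩ hDQ'
  -- Step 2: the closure of A is μ-null inside Ω
  have hclosure : μ (closure A ∩ Ω) = 0 := by
    have hlim : ∀ᶠ t in 𝓝[>] (0:ℝ),
        μ (cthickening t A ∩ Ω) / ENNReal.ofReal (t ^ (Q - r₀)) < 1 := by
      refine eventually_lt_of_limsup_lt ?_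
      have : uContentRel μ Q r₀ A Ω = 0 := hr₀mem
      rw [uContentRel] at this
      rw [this]
      exact zero_lt_one
    have hbnd : ∀ᶠ t in 𝓝[>] (0:ℝ),
        μ (closure A ∩ Ω) ≤ ENNReal.ofReal (t ^ (Q - r₀)) := by
      filter_upwards [hlim, self_mem_nhdsWithin] with t h1 h2
      have htpos : (0:ℝ) < t := h2
      have hB0 : ENNReal.ofReal (t ^ (Q - r₀)) ≠ 0 :=
        (ENNReal.ofReal_pos.2 (Real.rpow_pos_of_pos htpos _)).ne'
      have hmono : μ (closure A ∩ Ω) ≤ μ (cthickening t A ∩ Ω) :=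
        measure_mono (Set.inter_subset_inter (closure_subset_cthickening t A) subset_rfl)
      refine hmono.trans ?_
      have := (ENNReal.div_lt_iff (Or.inl hB0) (Or.inl ENNReal.ofReal_ne_top)).1 h1
      simpa using this.le
    have htend0 : Tendsto (fun t : ℝ => ENNReal.ofReal (t ^ (Q - r₀))) (𝓝[>] 0) (𝓝 0) := by
      have hc : ContinuousAt (fun t : ℝ => t ^ (Q - r₀)) 0 :=
        Real.continuousAt_rpow_const 0 _ (Or.inr (by linarith))
      have h1 : Tendsto (fun t : ℝ => t ^ (Q - r₀)) (𝓝[>] 0) (𝓝 0) := by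
        have h0 : (0:ℝ) ^ (Q - r₀) = 0 := Real.zero_rpow (by linarith)
        have := hc.tendsto.mono_left (nhdsWithin_le_nhds (s := Set.Ioi (0:ℝ)))
        rw [h0] at this
        exact this
      have := (ENNReal.continuous_ofReal.tendsto 0).comp h1
      simpa [Function.comp_def] using this
    exact le_antisymm (ge_of_tendsto htend0 hbnd) zero_le
  -- Step 3: lower bound on measures of thickenings at small scales
  obtain ⟨c, hc0, hcL⟩ := exists_between hpos
  have hcT : c ≠ ⊤ := hcL.ne_top
  have hcL' : c < Filter.liminf
      (fun t : ℝ => μ (cthickening t A ∩ Ω) / ENNReal.ofReal (t ^ (Q - D))) (𝓝[>] 0) := hcL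
  have hev := Filter.eventually_lt_of_lt_liminf hcL'
  obtain ⟨t₀, ht₀mem, ht₀sub⟩ := mem_nhdsGT_iff_exists_Ioc_subset.1 hev
  have ht₀ : (0:ℝ) < t₀ := ht₀mem
  have hbound : ∀ t : ℝ, 0 < t → t ≤ t₀ →
      c * ENNReal.ofReal (t ^ (Q - D)) ≤ μ (cthickening t A ∩ Ω) := by
    intro t h1 h2
    have h3 : c < μ (cthickening t A ∩ Ω) / ENNReal.ofReal (t ^ (Q - D)) := ht₀sub ⟨h1, h2⟩
    have hB0 : ENNReal.ofReal (t ^ (Q - D)) ≠ 0 :=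
      (ENNReal.ofReal_pos.2 (Real.rpow_pos_of_pos h1 _)).ne'
    exact (ENNReal.le_div_iff_mul_le (Or.inl hB0) (Or.inl ENNReal.ofReal_ne_top)).1 h3.le
  have hboundF : ∀ k : ℕ, c * ENNReal.ofReal (Stmt18Aux.tseq t₀ k ^ (Q - D)) ≤
      μ ((cthickening (Stmt18Aux.tseq t₀ k) A \ closure A) ∩ Ω) := by
    intro k
    have hseteq : (cthickening (Stmt18Aux.tseq t₀ k) A \ closure A) ∩ Ω =
        (cthickening (Stmt18Aux.tseq t₀ k) A ∩ Ω) \ (closure A ∩ Ω) := by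
      ext y; simp only [Set.mem_inter_iff, Set.mem_diff]; tauto
    rw [hseteq, measure_diff_null hclosure]
    exact hbound _ (Stmt18Aux.tseq_pos ht₀ k) (Stmt18Aux.tseq_le ht₀ k)
  -- Step 4: key integral estimate for each σ ∈ (D, Q)
  have hmeasF : ∀ k : ℕ, MeasurableSet (cthickening (Stmt18Aux.tseq t₀ k) A \ closure A) :=
    fun k => isClosed_cthickening.measurableSet.diff isClosed_closure.measurableSet
  have hkey : ∀ σ : ℝ, D < σ → σ < Q →
      ∑' k : ℕ, ENNReal.ofReal (Stmt18Aux.wseq t₀ (σ - Q) k) *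
          μ ((cthickening (Stmt18Aux.tseq t₀ k) A \ closure A) ∩ Ω)
        ≤ ∫⁻ x in Ω, ENNReal.ofReal (infDist x A) ^ (σ - Q) ∂μ := by
    intro σ h1 h2
    have heq : ∑' k : ℕ, ENNReal.ofReal (Stmt18Aux.wseq t₀ (σ - Q) k) *
          μ ((cthickening (Stmt18Aux.tseq t₀ k) A \ closure A) ∩ Ω)
        = ∫⁻ x in Ω, ∑' k : ℕ, (cthickening (Stmt18Aux.tseq t₀ k) A \ closure A).indicator
            (fun _ => ENNReal.ofReal (Stmt18Aux.wseq t₀ (σ - Q) k)) x ∂μ := by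
      rw [lintegral_tsum (fun k => (measurable_const.indicator (hmeasF k)).aemeasurable)]
      congr 1
      funext k
      rw [lintegral_indicator_const (hmeasF k), Measure.restrict_apply (hmeasF k)]
    rw [heq]
    exact lintegral_mono fun x =>
      Stmt18Aux.pointwise_le hne ht₀ (by linarith) x
  -- Step 5: conclude
  rw [ENNReal.tendsto_nhds_top_iff_nat]
  intro n
  set Q' : ℝ := (D + Q) / 2 with hQ'def
  have hDQ2 : D < Q' := by rw [hQ'def]; linarith
  have hQ'Q : Q' < Q := by rw [hQ'def]; linarith
  set c₁ : ℝ := 1 - 2 ^ (Q' - Q) with hc₁def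
  have hc₁ : 0 < c₁ := by
    have h2 : (2:ℝ) ^ (Q' - Q) < 1 :=
      Real.rpow_lt_one_of_one_lt_of_neg one_lt_two (by linarith)
    rw [hc₁def]; linarith
  set ε : ℝ≥0∞ := c * ENNReal.ofReal (c₁ / 2) with hεdef
  have hε0 : ε ≠ 0 := by
    rw [hεdef]
    exact mul_ne_zero hc0.ne' (ENNReal.ofReal_pos.2 (by linarith)).ne'
  have hεT : ε ≠ ⊤ := by
    rw [hεdef]; exact ENNReal.mul_ne_top hcT ENNReal.ofReal_ne_top
  obtain ⟨N, hN⟩ := ENNReal.exists_nat_gt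
    (show (n : ℝ≥0∞) / ε ≠ ⊤ from
      (ENNReal.div_lt_top (ENNReal.natCast_ne_top n) hε0).ne)
  have hnlt : (n : ℝ≥0∞) < (N : ℝ≥0∞) * ε :=
    (ENNReal.div_lt_iff (Or.inl hε0) (Or.inl hεT)).1 hN
  have hE1 : ∀ᶠ σ in 𝓝[>] D, σ ∈ Set.Ioo D Q' :=
    Filter.eventually_mem_set.2 (Ioo_mem_nhdsGT hDQ2)
  have hE2 : ∀ᶠ σ in 𝓝[>] D, 1 / 2 ≤ Stmt18Aux.tseq t₀ N ^ (σ - D) := by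
    have hpos' : 0 < Stmt18Aux.tseq t₀ N := Stmt18Aux.tseq_pos ht₀ N
    have hcont : Tendsto (fun σ : ℝ => Stmt18Aux.tseq t₀ N ^ (σ - D)) (𝓝 D) (𝓝 1) := by
      have hfe : (fun σ : ℝ => Stmt18Aux.tseq t₀ N ^ (σ - D)) =
          fun σ => Real.exp (Real.log (Stmt18Aux.tseq t₀ N) * (σ - D)) := by
        funext σ; rw [Real.rpow_def_of_pos hpos']
      rw [hfe]
      have h1 : Tendsto (fun σ : ℝ => Real.log (Stmt18Aux.tseq t₀ N) * (σ - D))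
          (𝓝 D) (𝓝 0) := by
        have hcont2 : Continuous fun σ : ℝ =>
            Real.log (Stmt18Aux.tseq t₀ N) * (σ - D) := by continuity
        have h := hcont2.tendsto D
        simpa using h
      have := (Real.continuous_exp.tendsto 0).comp h1
      simpa [Function.comp_def] using this
    exact (hcont.mono_left nhdsWithin_le_nhds).eventually (eventually_ge_nhds (by norm_num))
  filter_upwards [hE1, hE2] with σ hσmem hσt
  obtain ⟨hσD, hσQ'⟩ := hσmem
  have hσQ : σ < Q := hσQ'.trans hQ'Q
  have hterm : ∀ k ∈ Finset.range (N + 1),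
      ε ≤ ENNReal.ofReal (Stmt18Aux.wseq t₀ (σ - Q) k) *
          μ ((cthickening (Stmt18Aux.tseq t₀ k) A \ closure A) ∩ Ω) := by
    intro k hk
    have hkN : k ≤ N := Nat.lt_succ_iff.1 (Finset.mem_range.1 hk)
    have htk : 0 < Stmt18Aux.tseq t₀ k := Stmt18Aux.tseq_pos ht₀ k
    have htN : 0 < Stmt18Aux.tseq t₀ N := Stmt18Aux.tseq_pos ht₀ N
    -- real inequality: c₁ / 2 ≤ wseq * tseq ^ (Q - D)
    have hreal : c₁ / 2 ≤ Stmt18Aux.wseq t₀ (σ - Q) k * Stmt18Aux.tseq t₀ k ^ (Q - D) := by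
      have hw : (1 - 2 ^ (σ - Q)) * Stmt18Aux.tseq t₀ k ^ (σ - Q) ≤
          Stmt18Aux.wseq t₀ (σ - Q) k := Stmt18Aux.wseq_ge ht₀ (by linarith) k
      have hc₁le : c₁ ≤ 1 - 2 ^ (σ - Q) := by
        have := Real.rpow_le_rpow_of_exponent_le (x := (2:ℝ)) one_le_two
          (show σ - Q ≤ Q' - Q by linarith)
        rw [hc₁def]; linarith
      have hmul : Stmt18Aux.tseq t₀ k ^ (σ - Q) * Stmt18Aux.tseq t₀ k ^ (Q - D) =
          Stmt18Aux.tseq t₀ k ^ (σ - D) := by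
        rw [← Real.rpow_add htk]; ring_nf
      have h1 : c₁ * Stmt18Aux.tseq t₀ k ^ (σ - D) ≤
          Stmt18Aux.wseq t₀ (σ - Q) k * Stmt18Aux.tseq t₀ k ^ (Q - D) := by
        calc c₁ * Stmt18Aux.tseq t₀ k ^ (σ - D)
            ≤ (1 - 2 ^ (σ - Q)) * Stmt18Aux.tseq t₀ k ^ (σ - D) := by
              apply mul_le_mul_of_nonneg_right hc₁le (Real.rpow_nonneg htk.le _)
          _ = (1 - 2 ^ (σ - Q)) * Stmt18Aux.tseq t₀ k ^ (σ - Q) *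
              Stmt18Aux.tseq t₀ k ^ (Q - D) := by rw [mul_assoc, hmul]
          _ ≤ Stmt18Aux.wseq t₀ (σ - Q) k * Stmt18Aux.tseq t₀ k ^ (Q - D) :=
              mul_le_mul_of_nonneg_right hw (Real.rpow_nonneg htk.le _)
      have h2 : Stmt18Aux.tseq t₀ N ^ (σ - D) ≤ Stmt18Aux.tseq t₀ k ^ (σ - D) :=
        Real.rpow_le_rpow htN.le (Stmt18Aux.tseq_anti ht₀ hkN) (by linarith)
      have h3 : c₁ / 2 ≤ c₁ * Stmt18Aux.tseq t₀ N ^ (σ - D) := by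
        calc c₁ / 2 = c₁ * (1 / 2) := by ring
          _ ≤ c₁ * Stmt18Aux.tseq t₀ N ^ (σ - D) :=
            mul_le_mul_of_nonneg_left hσt hc₁.le
      calc c₁ / 2 ≤ c₁ * Stmt18Aux.tseq t₀ N ^ (σ - D) := h3
        _ ≤ c₁ * Stmt18Aux.tseq t₀ k ^ (σ - D) := mul_le_mul_of_nonneg_left h2 hc₁.le
        _ ≤ _ := h1
    calc ε = c * ENNReal.ofReal (c₁ / 2) := hεdef
      _ ≤ c * ENNReal.ofReal (Stmt18Aux.wseq t₀ (σ - Q) k *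
            Stmt18Aux.tseq t₀ k ^ (Q - D)) :=
          mul_le_mul_right (ENNReal.ofReal_le_ofReal hreal) _
      _ = ENNReal.ofReal (Stmt18Aux.wseq t₀ (σ - Q) k) *
            (c * ENNReal.ofReal (Stmt18Aux.tseq t₀ k ^ (Q - D))) := by
          rw [ENNReal.ofReal_mul (Stmt18Aux.wseq_nonneg ht₀ (by linarith) k)]
          ring
      _ ≤ ENNReal.ofReal (Stmt18Aux.wseq t₀ (σ - Q) k) *
            μ ((cthickening (Stmt18Aux.tseq t₀ k) A \ closure A) ∩ Ω) :=
          mul_le_mul_right (hboundF k) _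
  calc (n : ℝ≥0∞) < (N : ℝ≥0∞) * ε := hnlt
    _ ≤ ((N + 1 : ℕ) : ℝ≥0∞) * ε := by
        apply mul_le_mul_left
        exact_mod_cast Nat.cast_le.2 (Nat.le_succ N)
    _ = ∑ _k ∈ Finset.range (N + 1), ε := by
        rw [Finset.sum_const, Finset.card_range, nsmul_eq_mul]
    _ ≤ ∑ k ∈ Finset.range (N + 1),
          ENNReal.ofReal (Stmt18Aux.wseq t₀ (σ - Q) k) *
            μ ((cthickening (Stmt18Aux.tseq t₀ k) A \ closure A) ∩ Ω) :=
        Finset.sum_le_sum hterm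
    _ ≤ ∑' k : ℕ, ENNReal.ofReal (Stmt18Aux.wseq t₀ (σ - Q) k) *
            μ ((cthickening (Stmt18Aux.tseq t₀ k) A \ closure A) ∩ Ω) :=
        ENNReal.sum_le_tsum _
    _ ≤ _ := hkey σ hσD hσQ


end
end
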